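/- arXiv:1811.09879 — 3 statements merged into one kernel-verified Lean document; each statement's English description precedes it below -/
import Mathlib

section
/- Let I, J, K be open intervals, let E, F, G be normalizable semideviations on I, J, K respectively, and let f : J × K → I be a differentiable function with ∂₁f ≥ 0, ∂₂f ≥ 0 and ∂₁f + ∂₂f > 0 everywhere on J × K. Then the following six assertions are equivalent (each inequality being required for all n ∈ ℕ, x ∈ Jⁿ, y ∈ Kⁿ, weight vectors λ, with f(x,y) := (f(x₁,y₁),…,f(xₙ,yₙ))): (i) LLD_E(f(x,y),λ) ≤ f(LLD_F(x,λ), LLD_G(y,λ)); (ii) LD_E(f(x,y),λ) ≤ f(LD_F(x,λ), LD_G(y,λ)); (iii) UD_E(f(x,y),λ) ≤ f(UD_F(x,λ), UD_G(y,λ)); (iv) UUD_E(f(x,y),λ) ≤ f(UUD_F(x,λ), UUD_G(y,λ)); (v) LLD_E(f(x,y),λ) ≤ f(UUD_F(x,λ), UUD_G(y,λ)); (vi) for all p, u ∈ J and q, v ∈ K, E*(f(p,q), f(u,v)) ≤ ∂₁f(u,v)·F*(p,u) + ∂₂f(u,v)·G*(q,v). -/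
open Set Filter Topology

/-- The weighted sum `e(y) = λ₁E(x₁,y)+⋯+λₙE(xₙ,y)`. -/
noncomputable def eFun (E : ℝ → ℝ → ℝ) {n : ℕ} (x lam : Fin n → ℝ) (y : ℝ) : ℝ :=
  ∑ i, lam i * E (x i) y

/-- Lower semideviation mean `LLD_E(x,λ) = inf {y ∈ I : e(y) ≤ 0}`. -/
noncomputable def LLD (I : Set ℝ) (E : ℝ → ℝ → ℝ) {n : ℕ} (x lam : Fin n → ℝ) : ℝ :=
  sInf {y : ℝ | y ∈ I ∧ eFun E x lam y ≤ 0}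

/-- Upper semideviation mean `UUD_E(x,λ) = sup {y ∈ I : e(y) ≥ 0}`. -/
noncomputable def UUD (I : Set ℝ) (E : ℝ → ℝ → ℝ) {n : ℕ} (x lam : Fin n → ℝ) : ℝ :=
  sSup {y : ℝ | y ∈ I ∧ 0 ≤ eFun E x lam y}

/-- `LD_E(x,λ) = inf {y ∈ I : e(y) < 0}`. -/
noncomputable def LD (I : Set ℝ) (E : ℝ → ℝ → ℝ) {n : ℕ} (x lam : Fin n → ℝ) : ℝ :=
  sInf {y : ℝ | y ∈ I ∧ eFun E x lam y < 0}

/-- `UD_E(x,λ) = sup {y ∈ I : e(y) > 0}`. -/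
noncomputable def UD (I : Set ℝ) (E : ℝ → ℝ → ℝ) {n : ℕ} (x lam : Fin n → ℝ) : ℝ :=
  sSup {y : ℝ | y ∈ I ∧ 0 < eFun E x lam y}

/-- A weight vector: nonnegative entries with positive sum. -/
def IsWeight {n : ℕ} (lam : Fin n → ℝ) : Prop :=
  (∀ i, 0 ≤ lam i) ∧ 0 < ∑ i, lam i

/-- `E` is a semideviation on `I`: for distinct `x, y ∈ I` the sign of `E x y`
coincides with the sign of `x - y`. -/
def IsSemideviation (I : Set ℝ) (E : ℝ → ℝ → ℝ) : Prop :=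
  ∀ x ∈ I, ∀ y ∈ I, x ≠ y → Real.sign (E x y) = Real.sign (x - y)

/-- `E` is a normalizable semideviation on `I`, with `d x = ∂₂E(x,x)`. -/
def IsNormalizable (I : Set ℝ) (E : ℝ → ℝ → ℝ) (d : ℝ → ℝ) : Prop :=
  IsSemideviation I E ∧
  (∀ x ∈ I, ContinuousOn (fun y => E x y) I) ∧
  (∀ x ∈ I, HasDerivWithinAt (fun y => E x y) (d x) I x) ∧
  (∀ x ∈ I, d x < 0) ∧
  ContinuousOn d I

/-- The normalization `E*(x,y) = E(x,y)/(-∂₂E(y,y))`. -/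
noncomputable def nrm (E : ℝ → ℝ → ℝ) (d : ℝ → ℝ) (x y : ℝ) : ℝ :=
  E x y / (-(d y))


set_option linter.unusedVariables false
set_option maxHeartbeats 2000000

section part1
variable {I : Set ℝ} {E : ℝ → ℝ → ℝ} {dE : ℝ → ℝ}

lemma sd_pos (hE : IsSemideviation I E) {x y : ℝ} (hx : x ∈ I) (hy : y ∈ I)
    (h : y < x) : 0 < E x y := by
  have hs := hE x hx y hy (by linarith : x ≠ y)
  rw [Real.sign_of_pos (by linarith : (0:ℝ) < x - y)] at hs
  rcases lt_trichotomy (E x y) 0 with h'|h'|h'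
  · rw [Real.sign_of_neg h'] at hs; norm_num at hs
  · rw [h', Real.sign_zero] at hs; norm_num at hs
  · exact h'

lemma sd_neg (hE : IsSemideviation I E) {x y : ℝ} (hx : x ∈ I) (hy : y ∈ I)
    (h : x < y) : E x y < 0 := by
  have hs := hE x hx y hy (by linarith : x ≠ y)
  rw [Real.sign_of_neg (by linarith : x - y < 0)] at hs
  rcases lt_trichotomy (E x y) 0 with h'|h'|h'
  · exact h'
  · rw [h', Real.sign_zero] at hs; norm_num at hs
  · rw [Real.sign_of_pos h'] at hs; norm_num at hs

lemma nz_self (hIo : IsOpen I) (hE : IsNormalizable I E dE) {x : ℝ} (hx : x ∈ I) :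
    E x x = 0 := by
  have hcont : ContinuousAt (fun y => E x y) x := (hE.2.1 x hx).continuousAt (hIo.mem_nhds hx)
  have hmem : ∀ᶠ y in 𝓝 x, y ∈ I := hIo.eventually_mem hx
  have h1 : E x x ≤ 0 := by
    refine le_of_tendsto (hcont.tendsto.mono_left nhdsWithin_le_nhds : Tendsto _ (𝓝[>] x) _) ?_
    filter_upwards [hmem.filter_mono nhdsWithin_le_nhds, self_mem_nhdsWithin] with y hy hy'
    exact (sd_neg hE.1 hx hy hy').le
  have h2 : 0 ≤ E x x := by
    refine ge_of_tendsto (hcont.tendsto.mono_left nhdsWithin_le_nhds : Tendsto _ (𝓝[<] x) _) ?_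
    filter_upwards [hmem.filter_mono nhdsWithin_le_nhds, self_mem_nhdsWithin] with y hy hy'
    exact (sd_pos hE.1 hx hy hy').le
  linarith

lemma sd_nonpos (hIo : IsOpen I) (hE : IsNormalizable I E dE) {x y : ℝ} (hx : x ∈ I)
    (hy : y ∈ I) (h : x ≤ y) : E x y ≤ 0 := by
  rcases eq_or_lt_of_le h with rfl|h'
  · exact le_of_eq (nz_self hIo hE hx)
  · exact (sd_neg hE.1 hx hy h').le

lemma sd_nonneg (hIo : IsOpen I) (hE : IsNormalizable I E dE) {x y : ℝ} (hx : x ∈ I)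
    (hy : y ∈ I) (h : y ≤ x) : 0 ≤ E x y := by
  rcases eq_or_lt_of_le h with rfl|h'
  · exact ge_of_eq (nz_self hIo hE hx)
  · exact (sd_pos hE.1 hx hy h').le

lemma exists_pos_wt {n : ℕ} {lam : Fin n → ℝ} (hlam : IsWeight lam) : ∃ j, 0 < lam j := by
  by_contra h
  push_neg at h
  have : ∑ i, lam i ≤ 0 := Finset.sum_nonpos (fun i _ => h i)
  linarith [hlam.2]

lemma eFun_neg (hIo : IsOpen I) (hE : IsNormalizable I E dE) {n : ℕ} {x lam : Fin n → ℝ}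
    (hx : ∀ i, x i ∈ I) (hlam : IsWeight lam) {y : ℝ} (hy : y ∈ I)
    (h : ∀ i, x i < y) : eFun E x lam y < 0 := by
  obtain ⟨j, hj⟩ := exists_pos_wt hlam
  have : ∑ i, lam i * E (x i) y < ∑ i : Fin n, (0:ℝ) := by
    refine Finset.sum_lt_sum (fun i _ => ?_) ⟨j, Finset.mem_univ j, ?_⟩
    · exact mul_nonpos_of_nonneg_of_nonpos (hlam.1 i) (sd_neg hE.1 (hx i) hy (h i)).le
    · exact mul_neg_of_pos_of_neg hj (sd_neg hE.1 (hx j) hy (h j))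
  simpa [eFun] using this

lemma eFun_pos (hIo : IsOpen I) (hE : IsNormalizable I E dE) {n : ℕ} {x lam : Fin n → ℝ}
    (hx : ∀ i, x i ∈ I) (hlam : IsWeight lam) {y : ℝ} (hy : y ∈ I)
    (h : ∀ i, y < x i) : 0 < eFun E x lam y := by
  obtain ⟨j, hj⟩ := exists_pos_wt hlam
  have : ∑ i : Fin n, (0:ℝ) < ∑ i, lam i * E (x i) y := by
    refine Finset.sum_lt_sum (fun i _ => ?_) ⟨j, Finset.mem_univ j, ?_⟩
    · exact mul_nonneg (hlam.1 i) (sd_pos hE.1 (hx i) hy (h i)).le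
    · exact mul_pos hj (sd_pos hE.1 (hx j) hy (h j))
  simpa [eFun] using this

lemma eFun_contOn (hE : IsNormalizable I E dE) {n : ℕ} {x lam : Fin n → ℝ}
    (hx : ∀ i, x i ∈ I) : ContinuousOn (eFun E x lam) I := by
  unfold eFun
  exact continuousOn_finset_sum _ (fun i _ => (continuousOn_const.mul (hE.2.1 (x i) (hx i))))
end part1


section part3
variable {I : Set ℝ} {E : ℝ → ℝ → ℝ} {dE : ℝ → ℝ} {n : ℕ} {x lam : Fin n → ℝ}

lemma wt_n_pos (hlam : IsWeight lam) : 0 < n := by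
  rcases Nat.eq_zero_or_pos n with rfl|h
  · have := hlam.2; simp at this
  · exact h

lemma bounds_basic (hIo : IsOpen I) (hx : ∀ i, x i ∈ I) (hlam : IsWeight lam) :
    ∃ m M δ, m ∈ I ∧ M ∈ I ∧ 0 < δ ∧ (∀ i, m ≤ x i ∧ x i ≤ M) ∧ m ≤ M ∧
      (∀ z, |z - m| < δ ∨ |z - M| < δ → z ∈ I) := by
  have hne : (Finset.univ : Finset (Fin n)).Nonempty :=
    Finset.univ_nonempty_iff.mpr (Fin.pos_iff_nonempty.mp (wt_n_pos hlam))
  set m := Finset.univ.inf' hne x with hm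
  set M := Finset.univ.sup' hne x with hM
  obtain ⟨i₀, _, hi₀⟩ := Finset.exists_mem_eq_inf' hne x
  obtain ⟨i₁, _, hi₁⟩ := Finset.exists_mem_eq_sup' hne x
  have hmI : m ∈ I := by rw [hm, hi₀]; exact hx i₀
  have hMI : M ∈ I := by rw [hM, hi₁]; exact hx i₁
  obtain ⟨δ₁, hδ₁, hb₁⟩ := Metric.isOpen_iff.mp hIo m hmI
  obtain ⟨δ₂, hδ₂, hb₂⟩ := Metric.isOpen_iff.mp hIo M hMI
  have hb : ∀ i, m ≤ x i ∧ x i ≤ M := fun i => ⟨Finset.inf'_le x (Finset.mem_univ i), Finset.le_sup' x (Finset.mem_univ i)⟩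
  refine ⟨m, M, min δ₁ δ₂, hmI, hMI, lt_min hδ₁ hδ₂, hb,
    le_trans (hb i₀).1 (hb i₀).2, ?_⟩
  rintro z (hz|hz)
  · exact hb₁ (by rw [Metric.mem_ball, Real.dist_eq]; exact lt_of_lt_of_le hz (min_le_left _ _))
  · exact hb₂ (by rw [Metric.mem_ball, Real.dist_eq]; exact lt_of_lt_of_le hz (min_le_right _ _))

lemma LLD_facts (hI : I.OrdConnected) (hIo : IsOpen I) (hE : IsNormalizable I E dE)
    (hx : ∀ i, x i ∈ I) (hlam : IsWeight lam) :
    LLD I E x lam ∈ I ∧ eFun E x lam (LLD I E x lam) ≤ 0 ∧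
      BddBelow {y : ℝ | y ∈ I ∧ eFun E x lam y ≤ 0} := by
  obtain ⟨m, M, δ, hmI, hMI, hδ, hbd, hmM, hball⟩ := bounds_basic hIo hx hlam
  set S := {y : ℝ | y ∈ I ∧ eFun E x lam y ≤ 0} with hS
  have hz₀I : M + δ/2 ∈ I := hball _ (Or.inr (by rw [abs_of_nonneg] <;> linarith))
  have hz₀ : M + δ/2 ∈ S := ⟨hz₀I,
    (eFun_neg hIo hE hx hlam hz₀I (fun i => by linarith [(hbd i).2])).le⟩
  have hSne : S.Nonempty := ⟨_, hz₀⟩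
  have hlb : ∀ z ∈ S, m ≤ z := by
    intro z hz
    by_contra h
    push_neg at h
    exact absurd hz.2 (not_le.mpr (eFun_pos hIo hE hx hlam hz.1 (fun i => lt_of_lt_of_le h (hbd i).1)))
  have hbdd : BddBelow S := ⟨m, hlb⟩
  have h1 : m ≤ LLD I E x lam := le_csInf hSne hlb
  have h2 : LLD I E x lam ≤ M + δ/2 := csInf_le hbdd hz₀
  have hLI : LLD I E x lam ∈ I := hI.out hmI hz₀I ⟨h1, h2⟩
  refine ⟨hLI, ?_, hbdd⟩
  by_contra hpos
  push_neg at hpos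
  have hcont : ContinuousAt (eFun E x lam) (LLD I E x lam) :=
    (eFun_contOn hE hx).continuousAt (hIo.mem_nhds hLI)
  have h3 : {z | eFun E x lam z ∈ Ioi 0} ∈ 𝓝 (LLD I E x lam) := hcont (Ioi_mem_nhds hpos)
  obtain ⟨ε, hε, hb⟩ := Metric.mem_nhds_iff.mp h3
  obtain ⟨z, hzS, hz⟩ := exists_lt_of_csInf_lt hSne (by linarith : LLD I E x lam < LLD I E x lam + ε)
  have hz2 : LLD I E x lam ≤ z := csInf_le hbdd hzS
  have : eFun E x lam z ∈ Ioi 0 := hb (by rw [Metric.mem_ball, Real.dist_eq, abs_of_nonneg] <;> linarith)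
  exact absurd hzS.2 (not_le.mpr this)

lemma LD_facts (hI : I.OrdConnected) (hIo : IsOpen I) (hE : IsNormalizable I E dE)
    (hx : ∀ i, x i ∈ I) (hlam : IsWeight lam) :
    LD I E x lam ∈ I ∧ BddBelow {y : ℝ | y ∈ I ∧ eFun E x lam y < 0} ∧
      ∀ θ > 0, ∃ z, z ∈ I ∧ eFun E x lam z < 0 ∧ LD I E x lam ≤ z ∧ z < LD I E x lam + θ := by
  obtain ⟨m, M, δ, hmI, hMI, hδ, hbd, hmM, hball⟩ := bounds_basic hIo hx hlam
  set S := {y : ℝ | y ∈ I ∧ eFun E x lam y < 0} with hS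
  have hz₀I : M + δ/2 ∈ I := hball _ (Or.inr (by rw [abs_of_nonneg] <;> linarith))
  have hz₀ : M + δ/2 ∈ S := ⟨hz₀I, eFun_neg hIo hE hx hlam hz₀I (fun i => by linarith [(hbd i).2])⟩
  have hSne : S.Nonempty := ⟨_, hz₀⟩
  have hlb : ∀ z ∈ S, m ≤ z := by
    intro z hz
    by_contra h
    push_neg at h
    exact absurd hz.2 (not_lt.mpr (eFun_pos hIo hE hx hlam hz.1 (fun i => lt_of_lt_of_le h (hbd i).1)).le)
  have hbdd : BddBelow S := ⟨m, hlb⟩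
  have h1 : m ≤ LD I E x lam := le_csInf hSne hlb
  have h2 : LD I E x lam ≤ M + δ/2 := csInf_le hbdd hz₀
  refine ⟨hI.out hmI hz₀I ⟨h1, h2⟩, hbdd, ?_⟩
  intro θ hθ
  obtain ⟨z, hzS, hz⟩ := exists_lt_of_csInf_lt hSne (by linarith : LD I E x lam < LD I E x lam + θ)
  exact ⟨z, hzS.1, hzS.2, csInf_le hbdd hzS, hz⟩

lemma UUD_facts (hI : I.OrdConnected) (hIo : IsOpen I) (hE : IsNormalizable I E dE)
    (hx : ∀ i, x i ∈ I) (hlam : IsWeight lam) :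
    UUD I E x lam ∈ I ∧ {y : ℝ | y ∈ I ∧ 0 ≤ eFun E x lam y}.Nonempty ∧
      BddAbove {y : ℝ | y ∈ I ∧ 0 ≤ eFun E x lam y} ∧
      (∀ y ∈ I, UUD I E x lam < y → eFun E x lam y < 0) := by
  obtain ⟨m, M, δ, hmI, hMI, hδ, hbd, hmM, hball⟩ := bounds_basic hIo hx hlam
  set S := {y : ℝ | y ∈ I ∧ 0 ≤ eFun E x lam y} with hS
  have hz₀I : m - δ/2 ∈ I := hball _ (Or.inl (by rw [abs_of_nonpos] <;> linarith))
  have hz₀ : m - δ/2 ∈ S := ⟨hz₀I,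
    (eFun_pos hIo hE hx hlam hz₀I (fun i => by linarith [(hbd i).1])).le⟩
  have hSne : S.Nonempty := ⟨_, hz₀⟩
  have hub : ∀ z ∈ S, z ≤ M := by
    intro z hz
    by_contra h
    push_neg at h
    exact absurd hz.2 (not_le.mpr (eFun_neg hIo hE hx hlam hz.1 (fun i => lt_of_le_of_lt (hbd i).2 h)))
  have hbdd : BddAbove S := ⟨M, hub⟩
  have h1 : UUD I E x lam ≤ M := csSup_le hSne hub
  have h2 : m - δ/2 ≤ UUD I E x lam := le_csSup hbdd hz₀
  refine ⟨hI.out hz₀I hMI ⟨h2, h1⟩, hSne, hbdd, ?_⟩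
  intro y hy hlt
  by_contra h
  push_neg at h
  exact absurd (le_csSup hbdd (⟨hy, h⟩ : y ∈ S)) (not_le.mpr hlt)

lemma UD_facts (hI : I.OrdConnected) (hIo : IsOpen I) (hE : IsNormalizable I E dE)
    (hx : ∀ i, x i ∈ I) (hlam : IsWeight lam) :
    UD I E x lam ∈ I ∧ {y : ℝ | y ∈ I ∧ 0 < eFun E x lam y}.Nonempty ∧
      BddAbove {y : ℝ | y ∈ I ∧ 0 < eFun E x lam y} ∧
      (∀ y ∈ I, UD I E x lam < y → eFun E x lam y ≤ 0) := by
  obtain ⟨m, M, δ, hmI, hMI, hδ, hbd, hmM, hball⟩ := bounds_basic hIo hx hlam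
  set S := {y : ℝ | y ∈ I ∧ 0 < eFun E x lam y} with hS
  have hz₀I : m - δ/2 ∈ I := hball _ (Or.inl (by rw [abs_of_nonpos] <;> linarith))
  have hz₀ : m - δ/2 ∈ S := ⟨hz₀I, eFun_pos hIo hE hx hlam hz₀I (fun i => by linarith [(hbd i).1])⟩
  have hSne : S.Nonempty := ⟨_, hz₀⟩
  have hub : ∀ z ∈ S, z ≤ M := by
    intro z hz
    by_contra h
    push_neg at h
    exact absurd hz.2 (not_lt.mpr (eFun_neg hIo hE hx hlam hz.1 (fun i => lt_of_le_of_lt (hbd i).2 h)).le)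
  have hbdd : BddAbove S := ⟨M, hub⟩
  have h1 : UD I E x lam ≤ M := csSup_le hSne hub
  have h2 : m - δ/2 ≤ UD I E x lam := le_csSup hbdd hz₀
  refine ⟨hI.out hz₀I hMI ⟨h2, h1⟩, hSne, hbdd, ?_⟩
  intro y hy hlt
  by_contra h
  push_neg at h
  exact absurd (le_csSup hbdd (⟨hy, h⟩ : y ∈ S)) (not_le.mpr hlt)

lemma LLD_le_UUD (hI : I.OrdConnected) (hIo : IsOpen I) (hE : IsNormalizable I E dE)
    (hx : ∀ i, x i ∈ I) (hlam : IsWeight lam) :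
    LLD I E x lam ≤ UUD I E x lam := by
  obtain ⟨m, M, δ, hmI, hMI, hδ, hbd, hmM, hball⟩ := bounds_basic hIo hx hlam
  have hz₀I : M + δ/2 ∈ I := hball _ (Or.inr (by rw [abs_of_nonneg] <;> linarith))
  have hz₁I : m - δ/2 ∈ I := hball _ (Or.inl (by rw [abs_of_nonpos] <;> linarith))
  have hneg : eFun E x lam (M + δ/2) < 0 :=
    eFun_neg hIo hE hx hlam hz₀I (fun i => by linarith [(hbd i).2])
  have hpos : 0 < eFun E x lam (m - δ/2) :=
    eFun_pos hIo hE hx hlam hz₁I (fun i => by linarith [(hbd i).1])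
  have hsub : Icc (m - δ/2) (M + δ/2) ⊆ I := fun z hz => hI.out hz₁I hz₀I hz
  have hcont : ContinuousOn (eFun E x lam) (Icc (m - δ/2) (M + δ/2)) :=
    (eFun_contOn hE hx).mono hsub
  have : (0:ℝ) ∈ Icc (eFun E x lam (M + δ/2)) (eFun E x lam (m - δ/2)) := ⟨hneg.le, hpos.le⟩
  obtain ⟨w, hw, hw0⟩ := intermediate_value_Icc' (by linarith : m - δ/2 ≤ M + δ/2) hcont this
  have hwI : w ∈ I := hsub hw
  have h1 : LLD I E x lam ≤ w := by
    apply csInf_le (LLD_facts hI hIo hE hx hlam).2.2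
    exact ⟨hwI, le_of_eq hw0⟩
  have h2 : w ≤ UUD I E x lam :=
    le_csSup (UUD_facts hI hIo hE hx hlam).2.2.1 (⟨hwI, ge_of_eq hw0⟩ : w ∈ {y : ℝ | y ∈ I ∧ 0 ≤ eFun E x lam y})
  linarith


section part4
variable {J K : Set ℝ} {f f₁ f₂ : ℝ → ℝ → ℝ}

lemma f_mono (hJ : J.OrdConnected) (hK : K.OrdConnected)
    (hdf : ∀ u ∈ J, ∀ v ∈ K, HasFDerivAt (fun p : ℝ × ℝ => f p.1 p.2)
      ((f₁ u v) • ContinuousLinearMap.fst ℝ ℝ ℝ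
        + (f₂ u v) • ContinuousLinearMap.snd ℝ ℝ ℝ) (u, v))
    (hf₁ : ∀ u ∈ J, ∀ v ∈ K, 0 ≤ f₁ u v)
    (hf₂ : ∀ u ∈ J, ∀ v ∈ K, 0 ≤ f₂ u v)
    {u u' v v' : ℝ} (hu : u ∈ J) (hu' : u' ∈ J) (hv : v ∈ K) (hv' : v' ∈ K)
    (h1 : u ≤ u') (h2 : v ≤ v') : f u v ≤ f u' v' := by
  set g : ℝ → ℝ := fun s => f (u + s * (u' - u)) (v + s * (v' - v)) with hg
  have hmem : ∀ s ∈ Icc (0:ℝ) 1, (u + s * (u' - u)) ∈ J ∧ (v + s * (v' - v)) ∈ K := by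
    intro s hs
    constructor
    · exact hJ.out hu hu' ⟨by nlinarith [hs.1, hs.2], by nlinarith [hs.1, hs.2]⟩
    · exact hK.out hv hv' ⟨by nlinarith [hs.1, hs.2], by nlinarith [hs.1, hs.2]⟩
  have hder : ∀ s ∈ Icc (0:ℝ) 1, HasDerivAt g
      (f₁ (u + s * (u' - u)) (v + s * (v' - v)) * (u' - u)
        + f₂ (u + s * (u' - u)) (v + s * (v' - v)) * (v' - v)) s := by
    intro s hs
    have hc1 : HasDerivAt (fun s : ℝ => u + s * (u' - u)) (u' - u) s := by
      simpa using ((hasDerivAt_id s).mul_const (u' - u)).const_add u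
    have hc2 : HasDerivAt (fun s : ℝ => v + s * (v' - v)) (v' - v) s := by
      simpa using ((hasDerivAt_id s).mul_const (v' - v)).const_add v
    have hcurve := hc1.prodMk hc2
    have hfd := (hdf _ (hmem s hs).1 _ (hmem s hs).2).comp_hasDerivAt s hcurve
    refine hfd.congr_deriv ?_
    simp only [ContinuousLinearMap.add_apply, ContinuousLinearMap.smul_apply, ContinuousLinearMap.coe_fst', ContinuousLinearMap.coe_snd', smul_eq_mul]
  have hmono : MonotoneOn g (Icc (0:ℝ) 1) := by
    refine monotoneOn_of_deriv_nonneg (convex_Icc 0 1)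
      (fun s hs => ((hder s hs).continuousAt).continuousWithinAt)
      (fun s hs => ?_) (fun s hs => ?_)
    · rw [interior_Icc] at hs
      exact ((hder s (Ioo_subset_Icc_self hs)).differentiableAt).differentiableWithinAt
    · rw [interior_Icc] at hs
      rw [(hder s (Ioo_subset_Icc_self hs)).deriv]
      have h3 := (hmem s (Ioo_subset_Icc_self hs))
      have := hf₁ _ h3.1 _ h3.2
      have := hf₂ _ h3.1 _ h3.2
      nlinarith
  have := hmono (left_mem_Icc.mpr zero_le_one) (right_mem_Icc.mpr zero_le_one) zero_le_one
  simpa [hg] using this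

lemma f_cont (hdf : ∀ u ∈ J, ∀ v ∈ K, HasFDerivAt (fun p : ℝ × ℝ => f p.1 p.2)
      ((f₁ u v) • ContinuousLinearMap.fst ℝ ℝ ℝ
        + (f₂ u v) • ContinuousLinearMap.snd ℝ ℝ ℝ) (u, v))
    {u v : ℝ} (hu : u ∈ J) (hv : v ∈ K) :
    ContinuousAt (fun p : ℝ × ℝ => f p.1 p.2) (u, v) :=
  (hdf u hu v hv).continuousAt
end part4


section part5
variable {E F G : ℝ → ℝ → ℝ} {dE dF dG : ℝ → ℝ} {f f₁ f₂ : ℝ → ℝ → ℝ}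
variable {n : ℕ} {x y lam : Fin n → ℝ} {u v : ℝ}

lemma eFun_div_eq (w : ℝ) :
    eFun E x lam w / (-(dE w)) = ∑ i, lam i * nrm E dE (x i) w := by
  unfold eFun nrm
  rw [Finset.sum_div]
  exact Finset.sum_congr rfl (fun i _ => mul_div_assoc _ _ _)

lemma key_sum
    (hvi : ∀ i, nrm E dE (f (x i) (y i)) (f u v) ≤
      f₁ u v * nrm F dF (x i) u + f₂ u v * nrm G dG (y i) v)
    (hlam : IsWeight lam) (hf₁ : 0 ≤ f₁ u v) (hf₂ : 0 ≤ f₂ u v) :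
    eFun E (fun i => f (x i) (y i)) lam (f u v) / (-(dE (f u v))) ≤
      f₁ u v * (eFun F x lam u / (-(dF u))) + f₂ u v * (eFun G y lam v / (-(dG v))) := by
  rw [eFun_div_eq, eFun_div_eq, eFun_div_eq, Finset.mul_sum, Finset.mul_sum,
    ← Finset.sum_add_distrib]
  refine Finset.sum_le_sum (fun i _ => ?_)
  calc lam i * nrm E dE (f (x i) (y i)) (f u v)
      ≤ lam i * (f₁ u v * nrm F dF (x i) u + f₂ u v * nrm G dG (y i) v) :=
        mul_le_mul_of_nonneg_left (hvi i) (hlam.1 i)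
    _ = f₁ u v * (lam i * nrm F dF (x i) u) + f₂ u v * (lam i * nrm G dG (y i) v) := by ring

lemma trans_nonpos
    (hvi : ∀ i, nrm E dE (f (x i) (y i)) (f u v) ≤
      f₁ u v * nrm F dF (x i) u + f₂ u v * nrm G dG (y i) v)
    (hlam : IsWeight lam) (hf₁ : 0 ≤ f₁ u v) (hf₂ : 0 ≤ f₂ u v)
    (hdE : dE (f u v) < 0) (hdF : dF u < 0) (hdG : dG v < 0)
    (hF0 : eFun F x lam u ≤ 0) (hG0 : eFun G y lam v ≤ 0) :
    eFun E (fun i => f (x i) (y i)) lam (f u v) ≤ 0 := by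
  have h := key_sum hvi hlam hf₁ hf₂
  have h1 : eFun F x lam u / (-(dF u)) ≤ 0 := div_nonpos_of_nonpos_of_nonneg hF0 (by linarith)
  have h2 : eFun G y lam v / (-(dG v)) ≤ 0 := div_nonpos_of_nonpos_of_nonneg hG0 (by linarith)
  have h3 : eFun E (fun i => f (x i) (y i)) lam (f u v) / (-(dE (f u v))) ≤ 0 := by
    nlinarith [mul_nonneg hf₁ (neg_nonneg.mpr h1), mul_nonneg hf₂ (neg_nonneg.mpr h2)]
  by_contra hc
  push_neg at hc
  exact absurd (div_pos hc (by linarith : (0:ℝ) < -(dE (f u v)))) (not_lt.mpr h3)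

lemma trans_neg
    (hvi : ∀ i, nrm E dE (f (x i) (y i)) (f u v) ≤
      f₁ u v * nrm F dF (x i) u + f₂ u v * nrm G dG (y i) v)
    (hlam : IsWeight lam) (hf₁ : 0 ≤ f₁ u v) (hf₂ : 0 ≤ f₂ u v) (hfsum : 0 < f₁ u v + f₂ u v)
    (hdE : dE (f u v) < 0) (hdF : dF u < 0) (hdG : dG v < 0)
    (hF0 : eFun F x lam u < 0) (hG0 : eFun G y lam v < 0) :
    eFun E (fun i => f (x i) (y i)) lam (f u v) < 0 := by
  have h := key_sum hvi hlam hf₁ hf₂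
  have h1 : eFun F x lam u / (-(dF u)) < 0 := div_neg_of_neg_of_pos hF0 (by linarith)
  have h2 : eFun G y lam v / (-(dG v)) < 0 := div_neg_of_neg_of_pos hG0 (by linarith)
  have h3 : eFun E (fun i => f (x i) (y i)) lam (f u v) / (-(dE (f u v))) < 0 := by
    rcases lt_or_eq_of_le hf₁ with hp|hp
    · nlinarith [mul_nonneg hf₂ (neg_nonneg.mpr h2.le), mul_pos hp (neg_pos.mpr h1)]
    · have hp2 : 0 < f₂ u v := by linarith
      nlinarith [mul_pos hp2 (neg_pos.mpr h2), mul_nonneg hf₁ (neg_nonneg.mpr h1.le)]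
  by_contra hc
  push_neg at hc
  have : 0 ≤ eFun E (fun i => f (x i) (y i)) lam (f u v) / (-(dE (f u v))) :=
    div_nonneg hc (by linarith)
  linarith
end part5


section part6
variable {I : Set ℝ} {E : ℝ → ℝ → ℝ} {dE : ℝ → ℝ}

lemma claimUL (hI : I.OrdConnected) (hIo : IsOpen I) (hE : IsNormalizable I E dE)
    {a b : ℝ} (ha : a ∈ I) (hb : b ∈ I) {c ε : ℝ} (hc : c = nrm E dE a b) (hε : 0 < ε) :
    ∃ t₀ η : ℝ, 0 < t₀ ∧ t₀ ≤ 1/2 ∧ 0 < η ∧ (∀ z : ℝ, |z - b| ≤ η → z ∈ I) ∧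
      t₀ * (|c| + ε) ≤ η/2 ∧
      ∀ t, 0 < t → t < t₀ →
        (∀ y ∈ I, b + t*(c+ε) < y → t * E a y + (1-t) * E b y < 0) ∧
        (∀ y ∈ I, y < b + t*(c-ε) → 0 < t * E a y + (1-t) * E b y) := by
  have hd : dE b < 0 := hE.2.2.2.1 b hb
  set d := dE b with hdd
  have hnd : 0 < -d := by linarith
  have hEbb : E b b = 0 := nz_self hIo hE hb
  have hEab : E a b = c * (-d) := by
    rw [hc, nrm, ← hdd]
    field_simp
    rw [mul_div_assoc, div_self (ne_of_lt hd), mul_one]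
  -- σ', σ
  set σ' : ℝ := (-d) * ε / 4 with hσ'def
  have hσ' : 0 < σ' := by positivity
  set σ : ℝ := min (-d/2) ((-d) * ε / (4 * (|c| + ε + 1))) with hσdef
  have hσpos : 0 < σ := lt_min (by linarith) (by positivity)
  have hσ1 : σ ≤ -d/2 := min_le_left _ _
  have habs : (0:ℝ) < |c| + ε + 1 := by positivity
  have hσ2 : σ * (|c| + ε) ≤ (-d) * ε / 4 := by
    have h1 : σ ≤ (-d) * ε / (4 * (|c| + ε + 1)) := min_le_right _ _
    have h2 : ((-d) * ε / (4 * (|c| + ε + 1))) * (|c| + ε + 1) = (-d) * ε / 4 := by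
      field_simp
    have h3 := mul_le_mul_of_nonneg_right h1 (by positivity : (0:ℝ) ≤ |c| + ε)
    have h4 : ((-d) * ε / (4 * (|c| + ε + 1))) * (|c| + ε) ≤ ((-d) * ε / (4 * (|c| + ε + 1))) * (|c| + ε + 1) := by
      have h5 : (0:ℝ) ≤ (-d) * ε / (4 * (|c| + ε + 1)) := by positivity
      linarith only [mul_le_mul_of_nonneg_left (by linarith only : (|c| + ε) ≤ (|c| + ε + 1)) h5]
    linarith only [h2, h3, h4]
  -- η₁ : inside I
  obtain ⟨r, hr, hball⟩ := Metric.isOpen_iff.mp hIo b hb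
  set η₁ := r/2 with hη₁def
  have hη₁ : 0 < η₁ := by linarith
  have P1 : ∀ z : ℝ, |z - b| ≤ η₁ → z ∈ I := fun z hz =>
    hball (by rw [Metric.mem_ball, Real.dist_eq]; linarith)
  -- η₂ : continuity of E a at b
  have hca : ContinuousAt (fun y => E a y) b := (hE.2.1 a ha).continuousAt (hIo.mem_nhds hb)
  obtain ⟨δ₂, hδ₂, hP2⟩ := Metric.continuousAt_iff.mp hca σ' hσ'
  set η₂ := δ₂/2 with hη₂def
  have hη₂ : 0 < η₂ := by linarith
  have P2 : ∀ z : ℝ, |z - b| ≤ η₂ → |E a z - E a b| ≤ σ' := by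
    intro z hz
    have := hP2 (show dist z b < δ₂ by rw [Real.dist_eq]; linarith)
    rw [Real.dist_eq] at this
    linarith
  -- η₃ : slope of E b at b
  have hder : HasDerivAt (fun y => E b y) d b := (hE.2.2.1 b hb).hasDerivAt (hIo.mem_nhds hb)
  have hslope := hasDerivAt_iff_tendsto_slope.mp hder
  obtain ⟨δ₃, hδ₃, hP3⟩ := (Metric.tendsto_nhdsWithin_nhds).mp hslope σ hσpos
  set η₃ := δ₃/2 with hη₃def
  have hη₃ : 0 < η₃ := by linarith
  have P3 : ∀ z : ℝ, |z - b| ≤ η₃ → |E b z - d * (z - b)| ≤ σ * |z - b| := by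
    intro z hz
    rcases eq_or_ne z b with rfl|hzb
    · simp [hEbb]
    · have h1 := hP3 (Set.mem_compl_singleton_iff.mpr hzb)
        (show dist z b < δ₃ by rw [Real.dist_eq]; linarith)
      rw [Real.dist_eq, slope_def_field] at h1
      have hzb' : z - b ≠ 0 := sub_ne_zero.mpr hzb
      have key : E b z - d * (z - b) = ((E b z - E b b) / (z - b) - d) * (z - b) := by
        field_simp [hEbb]
        rw [hEbb]; ring
      rw [key, abs_mul]
      exact mul_le_mul_of_nonneg_right h1.le (abs_nonneg _)
  set η := min η₁ (min η₂ η₃) with hηdef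
  have hη : 0 < η := lt_min hη₁ (lt_min hη₂ hη₃)
  have Hmem : ∀ z : ℝ, |z - b| ≤ η → z ∈ I := fun z hz =>
    P1 z (le_trans hz (min_le_left _ _))
  have HF1 : ∀ z : ℝ, |z - b| ≤ η → |E a z - E a b| ≤ σ' := fun z hz =>
    P2 z (le_trans hz (le_trans (min_le_right _ _) (min_le_left _ _)))
  have HF2 : ∀ z : ℝ, |z - b| ≤ η → |E b z - d * (z - b)| ≤ σ * |z - b| := fun z hz =>
    P3 z (le_trans hz (le_trans (min_le_right _ _) (min_le_right _ _)))
  have hbηI : b + η ∈ I := Hmem _ (by rw [abs_of_nonneg] <;> simp <;> linarith)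
  have hbηI' : b - η ∈ I := Hmem _ (by rw [abs_of_nonpos] <;> simp <;> linarith)
  -- compact piece 1 (upper claim, region (b+η, a])
  have hcomp1 : ∃ t₁ : ℝ, 0 < t₁ ∧ t₁ ≤ 1/2 ∧ ∀ t, 0 < t → t < t₁ →
      ∀ y ∈ I, b + η < y → y ≤ a → t * E a y + (1-t) * E b y < 0 := by
    by_cases hab : b + η < a
    · have hsub : Icc (b+η) a ⊆ I := fun z hz => hI.out hbηI ha hz
      have hca' : ContinuousOn (fun y => E a y) (Icc (b+η) a) := (hE.2.1 a ha).mono hsub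
      have hcb' : ContinuousOn (fun y => E b y) (Icc (b+η) a) := (hE.2.1 b hb).mono hsub
      have hne : (Icc (b+η) a).Nonempty := ⟨b+η, left_mem_Icc.mpr hab.le⟩
      obtain ⟨y₂, hy₂m, hy₂⟩ := isCompact_Icc.exists_isMaxOn hne hca'
      obtain ⟨y₁, hy₁m, hy₁⟩ := isCompact_Icc.exists_isMaxOn hne hcb'
      have hEb1 : E b y₁ < 0 := sd_neg hE.1 hb (hsub hy₁m) (by linarith [hy₁m.1])
      set c₁ := -(E b y₁) with hc₁def
      have hc₁ : 0 < c₁ := by linarith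
      set C := |E a y₂| with hCdef
      refine ⟨min (1/2) (c₁ / (2*(C + c₁ + 1))), lt_min (by norm_num) (by positivity),
        min_le_left _ _, ?_⟩
      intro t ht0 ht1 y hyI hy1 hy2
      have hym : y ∈ Icc (b+η) a := ⟨hy1.le, hy2⟩
      have hEa : E a y ≤ C := by
        have h : E a y ≤ E a y₂ := hy₂ hym
        exact le_trans h (le_abs_self _)
      have hEb : E b y ≤ -c₁ := by
        have h : E b y ≤ E b y₁ := hy₁ hym
        rw [hc₁def]; linarith only [h]
      have ht2 : t ≤ 1/2 := le_trans ht1.le (min_le_left _ _)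
      have ht3 : t < c₁ / (2*(C + c₁ + 1)) := lt_of_lt_of_le ht1 (min_le_right _ _)
      have ht4 : t * (2*(C + c₁ + 1)) < c₁ := (lt_div_iff₀ (by positivity)).mp ht3
      have hCpos : 0 ≤ C := abs_nonneg _
      have e1 := mul_le_mul_of_nonneg_left hEa ht0.le
      have e2 := mul_le_mul_of_nonneg_left hEb (by linarith only [ht2] : (0:ℝ) ≤ 1 - t)
      linarith only [e1, e2, ht4, hc₁, hCpos, ht0.le]
    · refine ⟨1/2, by norm_num, le_refl _, ?_⟩
      intro t ht0 ht1 y hyI hy1 hy2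
      push_neg at hab
      linarith
  -- compact piece 2 (lower claim, region [a, b-η))
  have hcomp2 : ∃ t₂ : ℝ, 0 < t₂ ∧ t₂ ≤ 1/2 ∧ ∀ t, 0 < t → t < t₂ →
      ∀ y ∈ I, a ≤ y → y < b - η → 0 < t * E a y + (1-t) * E b y := by
    by_cases hab : a < b - η
    · have hsub : Icc a (b-η) ⊆ I := fun z hz => hI.out ha hbηI' hz
      have hca' : ContinuousOn (fun y => E a y) (Icc a (b-η)) := (hE.2.1 a ha).mono hsub
      have hcb' : ContinuousOn (fun y => E b y) (Icc a (b-η)) := (hE.2.1 b hb).mono hsub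
      have hne : (Icc a (b-η)).Nonempty := ⟨a, left_mem_Icc.mpr hab.le⟩
      obtain ⟨y₂, hy₂m, hy₂⟩ := isCompact_Icc.exists_isMinOn hne hca'
      obtain ⟨y₁, hy₁m, hy₁⟩ := isCompact_Icc.exists_isMinOn hne hcb'
      have hEb1 : 0 < E b y₁ := sd_pos hE.1 hb (hsub hy₁m) (by linarith [hy₁m.2])
      set c₂ := E b y₁ with hc₂def
      set C := |E a y₂| with hCdef
      refine ⟨min (1/2) (c₂ / (2*(C + c₂ + 1))), lt_min (by norm_num) (by positivity),
        min_le_left _ _, ?_⟩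
      intro t ht0 ht1 y hyI hy1 hy2
      have hym : y ∈ Icc a (b-η) := ⟨hy1, hy2.le⟩
      have hEa : -C ≤ E a y := by
        have h : E a y₂ ≤ E a y := hy₂ hym
        exact le_trans (neg_abs_le _) h
      have hEb : c₂ ≤ E b y := by
        have h : E b y₁ ≤ E b y := hy₁ hym
        exact h
      have ht2 : t ≤ 1/2 := le_trans ht1.le (min_le_left _ _)
      have ht3 : t < c₂ / (2*(C + c₂ + 1)) := lt_of_lt_of_le ht1 (min_le_right _ _)
      have ht4 : t * (2*(C + c₂ + 1)) < c₂ := (lt_div_iff₀ (by positivity)).mp ht3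
      have hCpos : 0 ≤ C := abs_nonneg _
      have e1 := mul_le_mul_of_nonneg_left hEa ht0.le
      have e2 := mul_le_mul_of_nonneg_left hEb (by linarith only [ht2] : (0:ℝ) ≤ 1 - t)
      linarith only [e1, e2, ht4, hEb1, hCpos, ht0.le]
    · refine ⟨1/2, by norm_num, le_refl _, ?_⟩
      intro t ht0 ht1 y hyI hy1 hy2
      push_neg at hab
      linarith
  obtain ⟨t₁, ht₁, ht₁2, hco1⟩ := hcomp1
  obtain ⟨t₂, ht₂, ht₂2, hco2⟩ := hcomp2
  -- near-zone constants
  obtain ⟨A, hAdef⟩ : ∃ A : ℝ, A = d*(c+ε) + σ*|c+ε| := ⟨_, rfl⟩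
  obtain ⟨B, hBdef⟩ : ∃ B : ℝ, B = d*(c-ε) - σ*|c-ε| := ⟨_, rfl⟩
  set t₃ := (-d)*ε/(4*(|A|+1)) with ht₃def
  set t₄ := (-d)*ε/(4*(|B|+1)) with ht₄def
  have ht₃pos : 0 < t₃ := by positivity
  have ht₄pos : 0 < t₄ := by positivity
  have ht₃id : t₃ * (|A|+1) = (-d)*ε/4 := by rw [ht₃def]; field_simp
  have ht₄id : t₄ * (|B|+1) = (-d)*ε/4 := by rw [ht₄def]; field_simp
  set q := η/(2*(|c|+ε+1)) with hqdef
  have hqpos : 0 < q := by positivity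
  have hqid : q * (|c|+ε+1) = η/2 := by rw [hqdef]; field_simp
  refine ⟨min (min t₁ t₂) (min (min t₃ t₄) q), η,
    lt_min (lt_min ht₁ ht₂) (lt_min (lt_min ht₃pos ht₄pos) hqpos),
    le_trans (le_trans (min_le_left _ _) (min_le_left _ _)) ht₁2, hη, Hmem, ?_, ?_⟩
  · have h1 : min (min t₁ t₂) (min (min t₃ t₄) q) ≤ q :=
      le_trans (min_le_right _ _) (min_le_right _ _)
    have h2 : (0:ℝ) ≤ |c| + ε := by positivity
    have h3 := mul_le_mul_of_nonneg_right h1 h2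
    have h4 : q * (|c| + ε + 1) = q * (|c| + ε) + q := by ring
    linarith only [h3, h4, hqid, hqpos]
  intro t ht0 ht1
  have htt₁ : t < t₁ := lt_of_lt_of_le ht1 (le_trans (min_le_left _ _) (min_le_left _ _))
  have htt₂ : t < t₂ := lt_of_lt_of_le ht1 (le_trans (min_le_left _ _) (min_le_right _ _))
  have htt₃ : t < t₃ := lt_of_lt_of_le ht1 (le_trans (min_le_right _ _) (le_trans (min_le_left _ _) (min_le_left _ _)))
  have htt₄ : t < t₄ := lt_of_lt_of_le ht1 (le_trans (min_le_right _ _) (le_trans (min_le_left _ _) (min_le_right _ _)))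
  have httq : t < q := lt_of_lt_of_le ht1 (le_trans (min_le_right _ _) (min_le_right _ _))
  have ht5 : t ≤ 1/2 := le_trans ht1.le (le_trans (le_trans (min_le_left _ _) (min_le_left _ _)) ht₁2)
  have htcε : t * (|c| + ε) ≤ η/2 := by
    have h2 : (0:ℝ) ≤ |c| + ε := by positivity
    have h3 := mul_le_mul_of_nonneg_right httq.le h2
    have h4 : q * (|c| + ε + 1) = q * (|c| + ε) + q := by ring
    linarith only [h3, h4, hqid, hqpos]
  have habs1 : |c + ε| ≤ |c| + ε := by
    calc |c + ε| ≤ |c| + |ε| := abs_add_le _ _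
    _ = |c| + ε := by rw [abs_of_pos hε]
  have habs2 : |c - ε| ≤ |c| + ε := by
    calc |c - ε| ≤ |c| + |ε| := abs_sub _ _
    _ = |c| + ε := by rw [abs_of_pos hε]
  constructor
  · -- Claim U
    intro y hyI hy
    rcases le_or_gt y (b + η) with hy2|hy2
    · -- near zone
      have hτ0 : t*(c+ε) < y - b := by linarith
      have hτub : y - b ≤ η := by linarith
      have hτlb : -η ≤ y - b := by
        have h1 : -(|c|+ε) ≤ c+ε := by linarith only [neg_abs_le c, hε]
        have h2 := mul_le_mul_of_nonneg_left h1 ht0.le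
        have h3 : t * -(|c|+ε) = -(t*(|c|+ε)) := by ring
        linarith only [h2, h3, htcε, hτ0, hη]
      have hτa : |y - b| ≤ η := abs_le.mpr ⟨hτlb, hτub⟩
      have hEa : E a y ≤ E a b + σ' := by
        have := (abs_le.mp (HF1 y hτa)).2
        linarith
      have hEb : E b y ≤ d*(y-b) + σ*|y-b| := by
        have := (abs_le.mp (HF2 y hτa)).2
        linarith
      -- monotone step
      have hmono : d*(y-b) + σ*|y-b| ≤ d*(t*(c+ε)) + σ*|t*(c+ε)| := by
        have h1 : |y-b| - |t*(c+ε)| ≤ (y-b) - t*(c+ε) := by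
          have h4 := abs_sub_abs_le_abs_sub (y-b) (t*(c+ε))
          have h5 : |y - b - t*(c+ε)| = (y-b) - t*(c+ε) :=
            abs_of_pos (by linarith only [hτ0] : (0:ℝ) < (y-b) - t*(c+ε))
          linarith only [h4, h5]
        have h2 := mul_le_mul_of_nonneg_left h1 hσpos.le
        have h3 : (d+σ)*((y-b) - t*(c+ε)) ≤ 0 :=
          mul_nonpos_of_nonpos_of_nonneg (by linarith only [hσ1, hd]) (by linarith only [hτ0])
        linarith only [h2, h3]
      have habsmul : |t*(c+ε)| = t * |c+ε| := by
        rw [abs_mul, abs_of_pos ht0]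
      have hEb2 : E b y ≤ t * A := by
        rw [hAdef]
        calc E b y ≤ d*(t*(c+ε)) + σ*|t*(c+ε)| := le_trans hEb hmono
          _ = t * (d*(c+ε) + σ*|c+ε|) := by rw [habsmul]; ring
      have hbr : σ' + d*ε + σ*|c+ε| - t*A < 0 := by
        have h1 : σ*|c+ε| ≤ (-d)*ε/4 := by
          have := mul_le_mul_of_nonneg_left habs1 hσpos.le
          linarith only [this, hσ2]
        have h2 : t*|A| ≤ (-d)*ε/4 := by
          have h5 := mul_le_mul_of_nonneg_right htt₃.le (by positivity : (0:ℝ) ≤ |A|+1)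
          linarith only [h5, ht₃id, ht0.le]
        have h3 : -(t*A) ≤ t*|A| := by
          have := mul_le_mul_of_nonneg_left (neg_abs_le A) ht0.le
          linarith only [this]
        rw [hσ'def]
        linarith only [h1, h2, h3, mul_pos hnd hε]
      calc t * E a y + (1-t) * E b y
          ≤ t * (E a b + σ') + (1-t) * (t*A) := by
            have e1 := mul_le_mul_of_nonneg_left hEa ht0.le
            have e2 := mul_le_mul_of_nonneg_left hEb2 (by linarith only [ht5] : (0:ℝ) ≤ 1-t)
            linarith only [e1, e2]
        _ = t * (E a b + σ' + A - t*A) := by ring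
        _ = t * (σ' + d*ε + σ*|c+ε| - t*A) := by
            rw [hEab, hAdef]; ring
        _ < 0 := mul_neg_of_pos_of_neg ht0 hbr
    · -- far zone
      rcases le_or_gt y a with hy3|hy3
      · exact hco1 t ht0 htt₁ y hyI hy2 hy3
      · have h1 : E a y < 0 := sd_neg hE.1 ha hyI hy3
        have h2 : E b y < 0 := sd_neg hE.1 hb hyI (by linarith only [hy2, hη])
        have e1 := mul_neg_of_pos_of_neg ht0 h1
        have e2 := mul_neg_of_pos_of_neg (by linarith only [ht5] : (0:ℝ) < 1-t) h2
        linarith only [e1, e2]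
  · -- Claim L
    intro y hyI hy
    rcases lt_or_ge y (b - η) with hy2|hy2
    · -- far zone
      rcases lt_or_ge y a with hy3|hy3
      · have h1 : 0 < E a y := sd_pos hE.1 ha hyI hy3
        have h2 : 0 < E b y := sd_pos hE.1 hb hyI (by linarith only [hy2, hη])
        have e1 := mul_pos ht0 h1
        have e2 := mul_pos (by linarith only [ht5] : (0:ℝ) < 1-t) h2
        linarith only [e1, e2]
      · exact hco2 t ht0 htt₂ y hyI hy3 hy2
    · -- near zone
      have hτ0 : y - b < t*(c-ε) := by linarith
      have hτlb : -η ≤ y - b := by linarith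
      have hτub : y - b ≤ η := by
        have h1 : c-ε ≤ |c|+ε := by linarith only [le_abs_self c, hε]
        have h2 := mul_le_mul_of_nonneg_left h1 ht0.le
        linarith only [h2, htcε, hτ0, hη]
      have hτa : |y - b| ≤ η := abs_le.mpr ⟨hτlb, hτub⟩
      have hEa : E a b - σ' ≤ E a y := by
        have := (abs_le.mp (HF1 y hτa)).1
        linarith
      have hEb : d*(y-b) - σ*|y-b| ≤ E b y := by
        have := (abs_le.mp (HF2 y hτa)).1
        linarith
      have hmono : d*(t*(c-ε)) - σ*|t*(c-ε)| ≤ d*(y-b) - σ*|y-b| := by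
        have h1 : |y-b| - |t*(c-ε)| ≤ t*(c-ε) - (y-b) := by
          have h4 := abs_sub_abs_le_abs_sub (y-b) (t*(c-ε))
          have h5 : |y - b - t*(c-ε)| = t*(c-ε) - (y-b) := by
            rw [abs_of_neg (by linarith only [hτ0] : (y-b) - t*(c-ε) < 0)]; ring
          linarith only [h4, h5]
        have h2 := mul_le_mul_of_nonneg_left h1 hσpos.le
        have h3 : (0:ℝ) ≤ (-d-σ)*(t*(c-ε) - (y-b)) :=
          mul_nonneg (by linarith only [hσ1, hd]) (by linarith only [hτ0])
        linarith only [h2, h3]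
      have habsmul : |t*(c-ε)| = t * |c-ε| := by
        rw [abs_mul, abs_of_pos ht0]
      have hEb2 : t * B ≤ E b y := by
        rw [hBdef]
        calc t * (d*(c-ε) - σ*|c-ε|) = d*(t*(c-ε)) - σ*|t*(c-ε)| := by rw [habsmul]; ring
          _ ≤ d*(y-b) - σ*|y-b| := hmono
          _ ≤ E b y := hEb
      have hbr : 0 < (-d)*ε - σ*|c-ε| - σ' - t*B := by
        have h1 : σ*|c-ε| ≤ (-d)*ε/4 := by
          have := mul_le_mul_of_nonneg_left habs2 hσpos.le
          linarith only [this, hσ2]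
        have h2 : t*|B| ≤ (-d)*ε/4 := by
          have h5 := mul_le_mul_of_nonneg_right htt₄.le (by positivity : (0:ℝ) ≤ |B|+1)
          linarith only [h5, ht₄id, ht0.le]
        have h3 : t*B ≤ t*|B| := by
          have := mul_le_mul_of_nonneg_left (le_abs_self B) ht0.le
          linarith only [this]
        rw [hσ'def]
        linarith only [h1, h2, h3, mul_pos hnd hε]
      calc (0:ℝ) < t * ((-d)*ε - σ*|c-ε| - σ' - t*B) := mul_pos ht0 hbr
        _ = t * (E a b - σ' + B - t*B) := by rw [hEab, hBdef]; ring
        _ = t * (E a b - σ') + (1-t) * (t*B) := by ring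
        _ ≤ t * E a y + (1-t) * E b y := by
            have e1 := mul_le_mul_of_nonneg_left hEa ht0.le
            have e2 := mul_le_mul_of_nonneg_left hEb2 (by linarith only [ht5] : (0:ℝ) ≤ 1-t)
            linarith only [e1, e2]
end part6


section part7
variable {I : Set ℝ} {E : ℝ → ℝ → ℝ} {dE : ℝ → ℝ}

lemma eFun_pair (E : ℝ → ℝ → ℝ) (a b t y : ℝ) :
    eFun E ![a,b] ![t,1-t] y = t * E a y + (1-t) * E b y := by
  simp [eFun, Fin.sum_univ_two]

lemma csInf_sandwich {S : Set ℝ} {lo hi δ : ℝ} (hδ : 0 < δ) (hlh : lo ≤ hi)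
    (hlo : ∀ z ∈ S, lo ≤ z) (hhi : ∀ z, hi < z → z < hi + δ → z ∈ S) :
    lo ≤ sInf S ∧ sInf S ≤ hi := by
  have hne : S.Nonempty := ⟨hi + δ/2, hhi _ (by linarith) (by linarith)⟩
  have hbdd : BddBelow S := ⟨lo, hlo⟩
  refine ⟨le_csInf hne hlo, ?_⟩
  by_contra h
  push_neg at h
  have hm1 : hi < min (sInf S) (hi + δ) := lt_min h (by linarith)
  set z := (hi + min (sInf S) (hi + δ))/2 with hz
  have hz1 : hi < z := by rw [hz]; linarith
  have hz2 : z < hi + δ := by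
    have := min_le_right (sInf S) (hi + δ)
    rw [hz]; linarith
  have hz3 : z < sInf S := by
    have := min_le_left (sInf S) (hi + δ)
    rw [hz]; linarith
  exact absurd (csInf_le hbdd (hhi z hz1 hz2)) (not_le.mpr hz3)

lemma csSup_sandwich {S : Set ℝ} {lo hi δ : ℝ} (hδ : 0 < δ) (hlh : lo ≤ hi)
    (hhi : ∀ z ∈ S, z ≤ hi) (hlo : ∀ z, lo - δ < z → z < lo → z ∈ S) :
    lo ≤ sSup S ∧ sSup S ≤ hi := by
  have hne : S.Nonempty := ⟨lo - δ/2, hlo _ (by linarith) (by linarith)⟩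
  have hbdd : BddAbove S := ⟨hi, hhi⟩
  refine ⟨?_, csSup_le hne hhi⟩
  by_contra h
  push_neg at h
  have hm1 : max (sSup S) (lo - δ) < lo := max_lt h (by linarith)
  set z := (lo + max (sSup S) (lo - δ))/2 with hz
  have hz1 : z < lo := by rw [hz]; linarith
  have hz2 : lo - δ < z := by
    have := le_max_right (sSup S) (lo - δ)
    rw [hz]; linarith
  have hz3 : sSup S < z := by
    have := le_max_left (sSup S) (lo - δ)
    rw [hz]; linarith
  exact absurd (le_csSup hbdd (hlo z hz2 hz1)) (not_le.mpr hz3)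

lemma mean_sandwich_all (hI : I.OrdConnected) (hIo : IsOpen I) (hE : IsNormalizable I E dE)
    {a b : ℝ} (ha : a ∈ I) (hb : b ∈ I) {c ε : ℝ} (hc : c = nrm E dE a b) (hε : 0 < ε) :
    ∃ t₀ > 0, ∀ t, 0 < t → t < t₀ →
      (b + t*(c-ε) ≤ LLD I E ![a,b] ![t,1-t] ∧ LLD I E ![a,b] ![t,1-t] ≤ b + t*(c+ε)) ∧
      (b + t*(c-ε) ≤ LD I E ![a,b] ![t,1-t] ∧ LD I E ![a,b] ![t,1-t] ≤ b + t*(c+ε)) ∧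
      (b + t*(c-ε) ≤ UD I E ![a,b] ![t,1-t] ∧ UD I E ![a,b] ![t,1-t] ≤ b + t*(c+ε)) ∧
      (b + t*(c-ε) ≤ UUD I E ![a,b] ![t,1-t] ∧ UUD I E ![a,b] ![t,1-t] ≤ b + t*(c+ε)) := by
  obtain ⟨t₀, η, ht₀, ht₀2, hη, Hmem, hcη, H⟩ := claimUL hI hIo hE ha hb hc hε
  refine ⟨t₀, ht₀, fun t ht0 ht1 => ?_⟩
  obtain ⟨CU, CL⟩ := H t ht0 ht1
  have CU' : ∀ y ∈ I, b + t*(c+ε) < y → eFun E ![a,b] ![t,1-t] y < 0 := by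
    intro y hy h; rw [eFun_pair]; exact CU y hy h
  have CL' : ∀ y ∈ I, y < b + t*(c-ε) → 0 < eFun E ![a,b] ![t,1-t] y := by
    intro y hy h; rw [eFun_pair]; exact CL y hy h
  have htle : t * (|c| + ε) ≤ η/2 := by
    have h1 := mul_le_mul_of_nonneg_right ht1.le (by positivity : (0:ℝ) ≤ |c| + ε)
    linarith only [h1, hcη]
  have hub : t*(c+ε) ≤ t*(|c|+ε) :=
    mul_le_mul_of_nonneg_left (by linarith only [le_abs_self c] : c+ε ≤ |c|+ε) ht0.le
  have hlb : -(t*(|c|+ε)) ≤ t*(c-ε) := by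
    have h1 := mul_le_mul_of_nonneg_left
      (by linarith only [neg_abs_le c] : -(|c|+ε) ≤ c-ε) ht0.le
    linarith only [h1, (by ring : t * -(|c|+ε) = -(t*(|c|+ε)))]
  have hmemhi : ∀ z, b + t*(c+ε) < z → z < b + t*(c+ε) + η/2 → z ∈ I := by
    intro z h1 h2
    apply Hmem
    rw [abs_le]
    constructor
    · nlinarith [neg_abs_le c]
    · nlinarith [le_abs_self c]
  have hmemlo : ∀ z, b + t*(c-ε) - η/2 < z → z < b + t*(c-ε) → z ∈ I := by
    intro z h1 h2
    apply Hmem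
    rw [abs_le]
    constructor
    · nlinarith [neg_abs_le c]
    · nlinarith [le_abs_self c]
  have hlh : b + t*(c-ε) ≤ b + t*(c+ε) := by nlinarith
  have hδ : (0:ℝ) < η/2 := by linarith
  refine ⟨?_, ?_, ?_, ?_⟩
  · exact csInf_sandwich hδ hlh
      (fun z hz => by
        by_contra hcon; push_neg at hcon
        exact absurd hz.2 (not_le.mpr (CL' z hz.1 hcon)))
      (fun z h1 h2 => ⟨hmemhi z h1 h2, (CU' z (hmemhi z h1 h2) h1).le⟩)
  · exact csInf_sandwich hδ hlh
      (fun z hz => by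
        by_contra hcon; push_neg at hcon
        exact absurd hz.2 (not_lt.mpr (CL' z hz.1 hcon).le))
      (fun z h1 h2 => ⟨hmemhi z h1 h2, CU' z (hmemhi z h1 h2) h1⟩)
  · exact csSup_sandwich hδ hlh
      (fun z hz => by
        by_contra hcon; push_neg at hcon
        exact absurd hz.2 (not_lt.mpr (CU' z hz.1 hcon).le))
      (fun z h1 h2 => ⟨hmemlo z h1 h2, CL' z (hmemlo z h1 h2) h2⟩)
  · exact csSup_sandwich hδ hlh
      (fun z hz => by
        by_contra hcon; push_neg at hcon
        exact absurd hz.2 (not_le.mpr (CU' z hz.1 hcon)))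
      (fun z h1 h2 => ⟨hmemlo z h1 h2, (CL' z (hmemlo z h1 h2) h2).le⟩)

lemma tendsto_of_sandwich {M : ℝ → ℝ} {b c : ℝ}
    (h : ∀ ε, 0 < ε → ∃ t₀ > 0, ∀ t, 0 < t → t < t₀ →
      b + t*(c-ε) ≤ M t ∧ M t ≤ b + t*(c+ε)) :
    Tendsto (fun t => (M t - b)/t) (𝓝[>] 0) (𝓝 c) := by
  rw [Metric.tendsto_nhdsWithin_nhds]
  intro ε hε
  obtain ⟨t₀, ht₀, hb⟩ := h (ε/2) (by linarith)
  refine ⟨t₀, ht₀, fun t ht hd => ?_⟩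
  rw [Real.dist_eq, sub_zero, abs_of_pos ht] at hd
  obtain ⟨h1, h2⟩ := hb t ht hd
  rw [Real.dist_eq]
  have key : |(M t - b)/t - c| ≤ ε/2 := by
    rw [abs_le]
    constructor
    · have : c - ε/2 ≤ (M t - b)/t := (le_div_iff₀ ht).mpr (by nlinarith)
      linarith
    · have : (M t - b)/t ≤ c + ε/2 := (div_le_iff₀ ht).mpr (by nlinarith)
      linarith
  linarith
end part7


section part8
variable {f f₁ f₂ : ℝ → ℝ → ℝ}

lemma slope_comp {MF MG : ℝ → ℝ} {u v cF cG : ℝ}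
    (hd : HasFDerivAt (fun p : ℝ × ℝ => f p.1 p.2)
      ((f₁ u v) • ContinuousLinearMap.fst ℝ ℝ ℝ
        + (f₂ u v) • ContinuousLinearMap.snd ℝ ℝ ℝ) (u, v))
    (hF : Tendsto (fun t => (MF t - u)/t) (𝓝[>] (0:ℝ)) (𝓝 cF))
    (hG : Tendsto (fun t => (MG t - v)/t) (𝓝[>] (0:ℝ)) (𝓝 cG)) :
    Tendsto (fun t => (f (MF t) (MG t) - f u v)/t) (𝓝[>] (0:ℝ))
      (𝓝 (f₁ u v * cF + f₂ u v * cG)) := by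
  set L := (f₁ u v) • ContinuousLinearMap.fst ℝ ℝ ℝ
        + (f₂ u v) • ContinuousLinearMap.snd ℝ ℝ ℝ with hLdef
  have htid : Tendsto (fun t : ℝ => t) (𝓝[>] (0:ℝ)) (𝓝 0) :=
    tendsto_id.mono_left nhdsWithin_le_nhds
  have hMFeq : ∀ᶠ t in 𝓝[>] (0:ℝ), u + t * ((MF t - u)/t) = MF t := by
    filter_upwards [self_mem_nhdsWithin] with t ht
    have : (t:ℝ) ≠ 0 := ne_of_gt ht
    field_simp
    ring
  have hMGeq : ∀ᶠ t in 𝓝[>] (0:ℝ), v + t * ((MG t - v)/t) = MG t := by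
    filter_upwards [self_mem_nhdsWithin] with t ht
    have : (t:ℝ) ≠ 0 := ne_of_gt ht
    field_simp
    ring
  have hMF : Tendsto MF (𝓝[>] (0:ℝ)) (𝓝 u) := by
    have h2 : Tendsto (fun t => u + t * ((MF t - u)/t)) (𝓝[>] (0:ℝ)) (𝓝 (u + 0 * cF)) :=
      tendsto_const_nhds.add (htid.mul hF)
    rw [zero_mul, add_zero] at h2
    exact h2.congr' hMFeq
  have hMG : Tendsto MG (𝓝[>] (0:ℝ)) (𝓝 v) := by
    have h2 : Tendsto (fun t => v + t * ((MG t - v)/t)) (𝓝[>] (0:ℝ)) (𝓝 (v + 0 * cG)) :=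
      tendsto_const_nhds.add (htid.mul hG)
    rw [zero_mul, add_zero] at h2
    exact h2.congr' hMGeq
  have hγ : Tendsto (fun t => (MF t, MG t)) (𝓝[>] (0:ℝ)) (𝓝 (u, v)) :=
    hMF.prodMk_nhds hMG
  have hlo := hd.isLittleO
  have h1 := hlo.comp_tendsto hγ
  have hO : (fun t => (MF t, MG t) - ((u:ℝ), (v:ℝ))) =O[𝓝[>] (0:ℝ)] fun t => t := by
    rw [Asymptotics.isBigO_iff]
    refine ⟨max (|cF| + 1) (|cG| + 1), ?_⟩
    filter_upwards [Metric.tendsto_nhds.mp hF 1 one_pos, Metric.tendsto_nhds.mp hG 1 one_pos,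
      self_mem_nhdsWithin] with t h1' h2' ht
    rw [Real.dist_eq] at h1' h2'
    have htne : (t:ℝ) ≠ 0 := ne_of_gt ht
    have e1 : |MF t - u| ≤ (|cF| + 1) * |t| := by
      have : MF t - u = ((MF t - u)/t) * t := by field_simp
      rw [this, abs_mul]
      have h3 : |(MF t - u)/t| ≤ |cF| + 1 := by
        have := abs_sub_abs_le_abs_sub ((MF t - u)/t) cF
        linarith only [this, h1']
      exact mul_le_mul_of_nonneg_right h3 (abs_nonneg _)
    have e2 : |MG t - v| ≤ (|cG| + 1) * |t| := by
      have : MG t - v = ((MG t - v)/t) * t := by field_simp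
      rw [this, abs_mul]
      have h3 : |(MG t - v)/t| ≤ |cG| + 1 := by
        have := abs_sub_abs_le_abs_sub ((MG t - v)/t) cG
        linarith only [this, h2']
      exact mul_le_mul_of_nonneg_right h3 (abs_nonneg _)
    have hnorm : ‖(MF t, MG t) - ((u:ℝ), (v:ℝ))‖ = max |MF t - u| |MG t - v| := by
      rw [Prod.mk_sub_mk, Prod.norm_def]
      simp [Real.norm_eq_abs]
    rw [hnorm, Real.norm_eq_abs]
    apply max_le
    · exact le_trans e1 (mul_le_mul_of_nonneg_right (le_max_left _ _) (abs_nonneg _))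
    · exact le_trans e2 (mul_le_mul_of_nonneg_right (le_max_right _ _) (abs_nonneg _))
  have h2 := h1.trans_isBigO hO
  have h3 := h2.tendsto_div_nhds_zero
  have heq : ∀ᶠ t in 𝓝[>] (0:ℝ),
      L ((MF t - u)/t, (MG t - v)/t) = L ((MF t, MG t) - ((u:ℝ), (v:ℝ)))/t := by
    filter_upwards [self_mem_nhdsWithin] with t ht
    have htne : (t:ℝ) ≠ 0 := ne_of_gt ht
    have hsmul : ((MF t, MG t) - ((u:ℝ), (v:ℝ))) = t • (((MF t - u)/t : ℝ), ((MG t - v)/t : ℝ)) := by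
      rw [Prod.mk_sub_mk, Prod.smul_mk]
      congr 1 <;> (rw [smul_eq_mul]; field_simp)
    rw [hsmul, map_smul, smul_eq_mul]
    field_simp
  have h4 : Tendsto (fun t => L ((MF t, MG t) - ((u:ℝ), (v:ℝ)))/t) (𝓝[>] (0:ℝ))
      (𝓝 (f₁ u v * cF + f₂ u v * cG)) := by
    have hcont : Tendsto (fun t => L ((MF t - u)/t, (MG t - v)/t)) (𝓝[>] (0:ℝ))
        (𝓝 (L (cF, cG))) :=
      (L.continuous.tendsto (cF, cG)).comp (hF.prodMk_nhds hG)
    have hLval : L (cF, cG) = f₁ u v * cF + f₂ u v * cG := by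
      simp [hLdef, ContinuousLinearMap.add_apply, ContinuousLinearMap.smul_apply]
    rw [hLval] at hcont
    exact hcont.congr' heq
  have hfinal := h3.add h4
  rw [zero_add] at hfinal
  refine hfinal.congr (fun t => ?_)
  simp only [Function.comp_apply]
  rw [← add_div]
  congr 1
  ring

lemma forward_step {ME MF MG : ℝ → ℝ} {u v cE cF cG : ℝ}
    (hd : HasFDerivAt (fun p : ℝ × ℝ => f p.1 p.2)
      ((f₁ u v) • ContinuousLinearMap.fst ℝ ℝ ℝ
        + (f₂ u v) • ContinuousLinearMap.snd ℝ ℝ ℝ) (u, v))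
    (hME : Tendsto (fun t => (ME t - f u v)/t) (𝓝[>] (0:ℝ)) (𝓝 cE))
    (hMF : Tendsto (fun t => (MF t - u)/t) (𝓝[>] (0:ℝ)) (𝓝 cF))
    (hMG : Tendsto (fun t => (MG t - v)/t) (𝓝[>] (0:ℝ)) (𝓝 cG))
    (hineq : ∀ᶠ t in 𝓝[>] (0:ℝ), ME t ≤ f (MF t) (MG t)) :
    cE ≤ f₁ u v * cF + f₂ u v * cG := by
  have hR := slope_comp hd hMF hMG
  refine le_of_tendsto_of_tendsto hME hR ?_
  filter_upwards [hineq, self_mem_nhdsWithin] with t h ht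
  exact (div_le_div_iff_of_pos_right ht).mpr (by linarith)
end part8


section final
variable {I J K : Set ℝ} {E F G : ℝ → ℝ → ℝ} {dE dF dG : ℝ → ℝ} {f f₁ f₂ : ℝ → ℝ → ℝ}

lemma tendsto_mean (hI : I.OrdConnected) (hIo : IsOpen I) (hE : IsNormalizable I E dE)
    {a b : ℝ} (ha : a ∈ I) (hb : b ∈ I) :
    Tendsto (fun t => (LLD I E ![a,b] ![t,1-t] - b)/t) (𝓝[>] 0) (𝓝 (nrm E dE a b)) ∧
    Tendsto (fun t => (LD I E ![a,b] ![t,1-t] - b)/t) (𝓝[>] 0) (𝓝 (nrm E dE a b)) ∧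
    Tendsto (fun t => (UD I E ![a,b] ![t,1-t] - b)/t) (𝓝[>] 0) (𝓝 (nrm E dE a b)) ∧
    Tendsto (fun t => (UUD I E ![a,b] ![t,1-t] - b)/t) (𝓝[>] 0) (𝓝 (nrm E dE a b)) := by
  refine ⟨tendsto_of_sandwich (fun ε hε => ?_), tendsto_of_sandwich (fun ε hε => ?_),
    tendsto_of_sandwich (fun ε hε => ?_), tendsto_of_sandwich (fun ε hε => ?_)⟩ <;>
  · obtain ⟨t₀, ht₀, hbnd⟩ := mean_sandwich_all hI hIo hE ha hb rfl hε
    first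
    | exact ⟨t₀, ht₀, fun t h1 h2 => (hbnd t h1 h2).1⟩
    | exact ⟨t₀, ht₀, fun t h1 h2 => (hbnd t h1 h2).2.1⟩
    | exact ⟨t₀, ht₀, fun t h1 h2 => (hbnd t h1 h2).2.2.1⟩
    | exact ⟨t₀, ht₀, fun t h1 h2 => (hbnd t h1 h2).2.2.2⟩

variable (hI : I.OrdConnected) (hIo : IsOpen I)
    (hJ : J.OrdConnected) (hJo : IsOpen J)
    (hK : K.OrdConnected) (hKo : IsOpen K)
    (hE : IsNormalizable I E dE) (hF : IsNormalizable J F dF)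
    (hG : IsNormalizable K G dG)
    (hmap : ∀ u ∈ J, ∀ v ∈ K, f u v ∈ I)
    (hdf : ∀ u ∈ J, ∀ v ∈ K, HasFDerivAt (fun p : ℝ × ℝ => f p.1 p.2)
      ((f₁ u v) • ContinuousLinearMap.fst ℝ ℝ ℝ
        + (f₂ u v) • ContinuousLinearMap.snd ℝ ℝ ℝ) (u, v))
    (hf₁ : ∀ u ∈ J, ∀ v ∈ K, 0 ≤ f₁ u v)
    (hf₂ : ∀ u ∈ J, ∀ v ∈ K, 0 ≤ f₂ u v)
    (hfpos : ∀ u ∈ J, ∀ v ∈ K, 0 < f₁ u v + f₂ u v)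
    (hvi : ∀ p ∈ J, ∀ u ∈ J, ∀ q ∈ K, ∀ v ∈ K,
        nrm E dE (f p q) (f u v) ≤ f₁ u v * nrm F dF p u + f₂ u v * nrm G dG q v)

section bwd
variable {n : ℕ} {x y lam : Fin n → ℝ}
    (hx : ∀ i, x i ∈ J) (hy : ∀ i, y i ∈ K) (hlam : IsWeight lam)

include hI hIo hJ hJo hK hKo hE hF hG hmap hf₁ hf₂ hvi hx hy hlam in
lemma bwd_LLD : LLD I E (fun i => f (x i) (y i)) lam ≤ f (LLD J F x lam) (LLD K G y lam) := by
  obtain ⟨huJ, heF, _⟩ := LLD_facts hJ hJo hF hx hlam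
  obtain ⟨hvK, heG, _⟩ := LLD_facts hK hKo hG hy hlam
  have hfmem : ∀ i, f (x i) (y i) ∈ I := fun i => hmap _ (hx i) _ (hy i)
  have hbddE := (LLD_facts hI hIo hE hfmem hlam).2.2
  have he := trans_nonpos
    (fun i => hvi _ (hx i) _ huJ _ (hy i) _ hvK) hlam
    (hf₁ _ huJ _ hvK) (hf₂ _ huJ _ hvK)
    (hE.2.2.2.1 _ (hmap _ huJ _ hvK)) (hF.2.2.2.1 _ huJ) (hG.2.2.2.1 _ hvK) heF heG
  exact csInf_le hbddE ⟨hmap _ huJ _ hvK, he⟩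

include hI hIo hJ hJo hK hKo hE hF hG hmap hdf hf₁ hf₂ hfpos hvi hx hy hlam in
lemma bwd_LD : LD I E (fun i => f (x i) (y i)) lam ≤ f (LD J F x lam) (LD K G y lam) := by
  obtain ⟨huJ, _, happF⟩ := LD_facts hJ hJo hF hx hlam
  obtain ⟨hvK, _, happG⟩ := LD_facts hK hKo hG hy hlam
  have hfmem : ∀ i, f (x i) (y i) ∈ I := fun i => hmap _ (hx i) _ (hy i)
  have hbddE := (LD_facts hI hIo hE hfmem hlam).2.1
  set u := LD J F x lam
  set v := LD K G y lam
  apply le_of_forall_pos_le_add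
  intro ρ hρ
  have hc : ContinuousAt (fun p : ℝ × ℝ => f p.1 p.2) (u, v) := (hdf u huJ v hvK).continuousAt
  obtain ⟨θ, hθ, hcb⟩ := Metric.continuousAt_iff.mp hc ρ hρ
  obtain ⟨u', hu'J, heu', huu', hub⟩ := happF θ hθ
  obtain ⟨v', hv'K, hev', hvv', hvb⟩ := happG θ hθ
  have he := trans_neg
    (fun i => hvi _ (hx i) _ hu'J _ (hy i) _ hv'K) hlam
    (hf₁ _ hu'J _ hv'K) (hf₂ _ hu'J _ hv'K) (hfpos _ hu'J _ hv'K)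
    (hE.2.2.2.1 _ (hmap _ hu'J _ hv'K)) (hF.2.2.2.1 _ hu'J) (hG.2.2.2.1 _ hv'K) heu' hev'
  have h1 : LD I E (fun i => f (x i) (y i)) lam ≤ f u' v' :=
    csInf_le hbddE ⟨hmap _ hu'J _ hv'K, he⟩
  have h2 : dist ((u', v') : ℝ × ℝ) (u, v) < θ := by
    rw [Prod.dist_eq]
    apply max_lt <;> (rw [Real.dist_eq, abs_of_nonneg (by linarith)]; linarith)
  have h3 := hcb h2
  rw [Real.dist_eq] at h3
  have h3' : |f u' v' - f u v| < ρ := h3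
  have h4 : f u' v' < f u v + ρ := by
    have := (abs_lt.mp h3').2
    linarith
  linarith

include hI hIo hJ hJo hK hKo hE hF hG hmap hdf hf₁ hf₂ hvi hx hy hlam in
lemma bwd_UD : UD I E (fun i => f (x i) (y i)) lam ≤ f (UD J F x lam) (UD K G y lam) := by
  obtain ⟨huJ, _, _, hbeyF⟩ := UD_facts hJ hJo hF hx hlam
  obtain ⟨hvK, _, _, hbeyG⟩ := UD_facts hK hKo hG hy hlam
  have hfmem : ∀ i, f (x i) (y i) ∈ I := fun i => hmap _ (hx i) _ (hy i)
  obtain ⟨_, hneE, hbddE, _⟩ := UD_facts hI hIo hE hfmem hlam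
  set u := UD J F x lam
  set v := UD K G y lam
  apply csSup_le hneE
  rintro z ⟨hzI, hze⟩
  by_contra hcon
  push_neg at hcon
  have hj : ∃ j, 0 < lam j ∧ z < f (x j) (y j) := by
    by_contra hno
    push_neg at hno
    have hsum : eFun E (fun i => f (x i) (y i)) lam z ≤ 0 := by
      apply Finset.sum_nonpos
      intro i _
      rcases (hlam.1 i).eq_or_lt with h|h
      · rw [← h, zero_mul]
      · exact mul_nonpos_of_nonneg_of_nonpos (hlam.1 i)
          (sd_nonpos hIo hE (hfmem i) hzI (hno i h))
    linarith
  obtain ⟨j, hjpos, hjz⟩ := hj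
  have hmaxJ : max u (x j) ∈ J := by
    rcases max_choice u (x j) with h|h <;> rw [h]
    exacts [huJ, hx j]
  have hmaxK : max v (y j) ∈ K := by
    rcases max_choice v (y j) with h|h <;> rw [h]
    exacts [hvK, hy j]
  obtain ⟨θ₁, hθ₁, hb₁⟩ := Metric.isOpen_iff.mp hJo _ hmaxJ
  obtain ⟨θ₂, hθ₂, hb₂⟩ := Metric.isOpen_iff.mp hKo _ hmaxK
  set uu := max u (x j) + θ₁/2 with huudef
  set vv := max v (y j) + θ₂/2 with hvvdef
  have huuJ : uu ∈ J := hb₁ (by rw [Metric.mem_ball, Real.dist_eq, huudef]; rw [abs_of_nonneg] <;> simp <;> linarith)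
  have hvvK : vv ∈ K := hb₂ (by rw [Metric.mem_ball, Real.dist_eq, hvvdef]; rw [abs_of_nonneg] <;> simp <;> linarith)
  have huu : u < uu := by have := le_max_left u (x j); rw [huudef]; linarith
  have hvv : v < vv := by have := le_max_left v (y j); rw [hvvdef]; linarith
  have hxju : x j ≤ uu := by have := le_max_right u (x j); rw [huudef]; linarith
  have hyjv : y j ≤ vv := by have := le_max_right v (y j); rw [hvvdef]; linarith
  have hfz : z < f uu vv :=
    lt_of_lt_of_le hjz (f_mono hJ hK hdf hf₁ hf₂ (hx j) huuJ (hy j) hvvK hxju hyjv)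
  set g : ℝ → ℝ := fun s => f (u + s*(uu - u)) (v + s*(vv - v)) with hgdef
  have hpath : ∀ s ∈ Icc (0:ℝ) 1, (u + s*(uu-u)) ∈ J ∧ (v + s*(vv-v)) ∈ K := by
    intro s hs
    constructor
    · exact hJ.out huJ huuJ ⟨by nlinarith [hs.1, hs.2], by nlinarith [hs.1, hs.2]⟩
    · exact hK.out hvK hvvK ⟨by nlinarith [hs.1, hs.2], by nlinarith [hs.1, hs.2]⟩
  have hgc : ContinuousOn g (Icc (0:ℝ) 1) := by
    intro s hs
    have hcur : ContinuousAt (fun s : ℝ => ((u + s*(uu-u), v + s*(vv-v)) : ℝ × ℝ)) s := by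
      apply ContinuousAt.prodMk <;> fun_prop
    have h5 : ContinuousAt ((fun p : ℝ × ℝ => f p.1 p.2) ∘
        (fun s : ℝ => ((u + s*(uu-u), v + s*(vv-v)) : ℝ × ℝ))) s :=
      ContinuousAt.comp (hdf _ (hpath s hs).1 _ (hpath s hs).2).continuousAt hcur
    exact h5.continuousWithinAt
  have hg0 : g 0 = f u v := by rw [hgdef]; norm_num
  have hg1 : g 1 = f uu vv := by rw [hgdef]; norm_num
  have hz01 : z ∈ Icc (g 0) (g 1) := by
    rw [hg0, hg1]
    exact ⟨hcon.le, hfz.le⟩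
  obtain ⟨s₀, hs₀m, hgs₀⟩ := intermediate_value_Icc zero_le_one hgc hz01
  have hs₀pos : 0 < s₀ := by
    rcases hs₀m.1.eq_or_lt with h|h
    · exfalso; rw [← h, hg0] at hgs₀; linarith [hcon, hgs₀.ge, hgs₀.le]
    · exact h
  have hu'' : u < u + s₀*(uu - u) := by nlinarith
  have hv'' : v < v + s₀*(vv - v) := by nlinarith
  have heF' := hbeyF _ (hpath s₀ hs₀m).1 hu''
  have heG' := hbeyG _ (hpath s₀ hs₀m).2 hv''
  have he := trans_nonpos
    (fun i => hvi _ (hx i) _ (hpath s₀ hs₀m).1 _ (hy i) _ (hpath s₀ hs₀m).2) hlam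
    (hf₁ _ (hpath s₀ hs₀m).1 _ (hpath s₀ hs₀m).2) (hf₂ _ (hpath s₀ hs₀m).1 _ (hpath s₀ hs₀m).2)
    (hE.2.2.2.1 _ (hmap _ (hpath s₀ hs₀m).1 _ (hpath s₀ hs₀m).2))
    (hF.2.2.2.1 _ (hpath s₀ hs₀m).1) (hG.2.2.2.1 _ (hpath s₀ hs₀m).2) heF' heG'
  rw [show f (u + s₀*(uu - u)) (v + s₀*(vv - v)) = z from hgs₀] at he
  linarith

include hI hIo hJ hJo hK hKo hE hF hG hmap hdf hf₁ hf₂ hfpos hvi hx hy hlam in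
lemma bwd_UUD : UUD I E (fun i => f (x i) (y i)) lam ≤ f (UUD J F x lam) (UUD K G y lam) := by
  obtain ⟨huJ, _, _, hbeyF⟩ := UUD_facts hJ hJo hF hx hlam
  obtain ⟨hvK, _, _, hbeyG⟩ := UUD_facts hK hKo hG hy hlam
  have hfmem : ∀ i, f (x i) (y i) ∈ I := fun i => hmap _ (hx i) _ (hy i)
  obtain ⟨_, hneE, hbddE, _⟩ := UUD_facts hI hIo hE hfmem hlam
  set u := UUD J F x lam
  set v := UUD K G y lam
  apply csSup_le hneE
  rintro z ⟨hzI, hze⟩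
  by_contra hcon
  push_neg at hcon
  have hj : ∃ j, 0 < lam j ∧ z ≤ f (x j) (y j) := by
    by_contra hno
    push_neg at hno
    obtain ⟨j₀, hj₀⟩ := exists_pos_wt hlam
    have hsum : eFun E (fun i => f (x i) (y i)) lam z < 0 := by
      have : ∑ i, lam i * E (f (x i) (y i)) z < ∑ i : Fin n, (0:ℝ) := by
        refine Finset.sum_lt_sum (fun i _ => ?_) ⟨j₀, Finset.mem_univ j₀, ?_⟩
        · rcases (hlam.1 i).eq_or_lt with h|h
          · rw [← h, zero_mul]
          · exact mul_nonpos_of_nonneg_of_nonpos (hlam.1 i)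
              (sd_neg hE.1 (hfmem i) hzI (hno i h)).le
        · exact mul_neg_of_pos_of_neg hj₀ (sd_neg hE.1 (hfmem j₀) hzI (hno j₀ hj₀))
      simpa [eFun] using this
    linarith
  obtain ⟨j, hjpos, hjz⟩ := hj
  have hmaxJ : max u (x j) ∈ J := by
    rcases max_choice u (x j) with h|h <;> rw [h]
    exacts [huJ, hx j]
  have hmaxK : max v (y j) ∈ K := by
    rcases max_choice v (y j) with h|h <;> rw [h]
    exacts [hvK, hy j]
  obtain ⟨θ₁, hθ₁, hb₁⟩ := Metric.isOpen_iff.mp hJo _ hmaxJ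
  obtain ⟨θ₂, hθ₂, hb₂⟩ := Metric.isOpen_iff.mp hKo _ hmaxK
  set uu := max u (x j) + θ₁/2 with huudef
  set vv := max v (y j) + θ₂/2 with hvvdef
  have huuJ : uu ∈ J := hb₁ (by rw [Metric.mem_ball, Real.dist_eq, huudef]; rw [abs_of_nonneg] <;> simp <;> linarith)
  have hvvK : vv ∈ K := hb₂ (by rw [Metric.mem_ball, Real.dist_eq, hvvdef]; rw [abs_of_nonneg] <;> simp <;> linarith)
  have huu : u < uu := by have := le_max_left u (x j); rw [huudef]; linarith
  have hvv : v < vv := by have := le_max_left v (y j); rw [hvvdef]; linarith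
  have hxju : x j ≤ uu := by have := le_max_right u (x j); rw [huudef]; linarith
  have hyjv : y j ≤ vv := by have := le_max_right v (y j); rw [hvvdef]; linarith
  have hfz : z ≤ f uu vv :=
    le_trans hjz (f_mono hJ hK hdf hf₁ hf₂ (hx j) huuJ (hy j) hvvK hxju hyjv)
  set g : ℝ → ℝ := fun s => f (u + s*(uu - u)) (v + s*(vv - v)) with hgdef
  have hpath : ∀ s ∈ Icc (0:ℝ) 1, (u + s*(uu-u)) ∈ J ∧ (v + s*(vv-v)) ∈ K := by
    intro s hs
    constructor
    · exact hJ.out huJ huuJ ⟨by nlinarith [hs.1, hs.2], by nlinarith [hs.1, hs.2]⟩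
    · exact hK.out hvK hvvK ⟨by nlinarith [hs.1, hs.2], by nlinarith [hs.1, hs.2]⟩
  have hgc : ContinuousOn g (Icc (0:ℝ) 1) := by
    intro s hs
    have hcur : ContinuousAt (fun s : ℝ => ((u + s*(uu-u), v + s*(vv-v)) : ℝ × ℝ)) s := by
      apply ContinuousAt.prodMk <;> fun_prop
    have h5 : ContinuousAt ((fun p : ℝ × ℝ => f p.1 p.2) ∘
        (fun s : ℝ => ((u + s*(uu-u), v + s*(vv-v)) : ℝ × ℝ))) s :=
      ContinuousAt.comp (hdf _ (hpath s hs).1 _ (hpath s hs).2).continuousAt hcur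
    exact h5.continuousWithinAt
  have hg0 : g 0 = f u v := by rw [hgdef]; norm_num
  have hg1 : g 1 = f uu vv := by rw [hgdef]; norm_num
  have hz01 : z ∈ Icc (g 0) (g 1) := by
    rw [hg0, hg1]
    exact ⟨hcon.le, hfz⟩
  obtain ⟨s₀, hs₀m, hgs₀⟩ := intermediate_value_Icc zero_le_one hgc hz01
  have hs₀pos : 0 < s₀ := by
    rcases hs₀m.1.eq_or_lt with h|h
    · exfalso; rw [← h, hg0] at hgs₀; linarith [hcon, hgs₀.ge, hgs₀.le]
    · exact h
  have hu'' : u < u + s₀*(uu - u) := by nlinarith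
  have hv'' : v < v + s₀*(vv - v) := by nlinarith
  have heF' := hbeyF _ (hpath s₀ hs₀m).1 hu''
  have heG' := hbeyG _ (hpath s₀ hs₀m).2 hv''
  have he := trans_neg
    (fun i => hvi _ (hx i) _ (hpath s₀ hs₀m).1 _ (hy i) _ (hpath s₀ hs₀m).2) hlam
    (hf₁ _ (hpath s₀ hs₀m).1 _ (hpath s₀ hs₀m).2) (hf₂ _ (hpath s₀ hs₀m).1 _ (hpath s₀ hs₀m).2)
    (hfpos _ (hpath s₀ hs₀m).1 _ (hpath s₀ hs₀m).2)
    (hE.2.2.2.1 _ (hmap _ (hpath s₀ hs₀m).1 _ (hpath s₀ hs₀m).2))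
    (hF.2.2.2.1 _ (hpath s₀ hs₀m).1) (hG.2.2.2.1 _ (hpath s₀ hs₀m).2) heF' heG'
  rw [show f (u + s₀*(uu - u)) (v + s₀*(vv - v)) = z from hgs₀] at he
  linarith

include hI hIo hJ hJo hK hKo hE hF hG hmap hdf hf₁ hf₂ hvi hx hy hlam in
lemma bwd_mix : LLD I E (fun i => f (x i) (y i)) lam ≤ f (UUD J F x lam) (UUD K G y lam) := by
  have h1 := bwd_LLD hI hIo hJ hJo hK hKo hE hF hG hmap hf₁ hf₂ hvi hx hy hlam
  have h2 := f_mono hJ hK hdf hf₁ hf₂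
    (LLD_facts hJ hJo hF hx hlam).1 (UUD_facts hJ hJo hF hx hlam).1
    (LLD_facts hK hKo hG hy hlam).1 (UUD_facts hK hKo hG hy hlam).1
    (LLD_le_UUD hJ hJo hF hx hlam) (LLD_le_UUD hK hKo hG hy hlam)
  linarith
end bwd
end final


/-- Theorem: for an operation `f` nondecreasing in each variable (with
`∂₁f + ∂₂f > 0`), the five Hölder–Minkowski-type inequalities for the four
semideviation means are all equivalent to the pointwise inequality (vi) for the
normalizations. -/
theorem statement14 (I J K : Set ℝ)
    (hI : I.OrdConnected) (hIo : IsOpen I)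
    (hJ : J.OrdConnected) (hJo : IsOpen J)
    (hK : K.OrdConnected) (hKo : IsOpen K)
    (E F G : ℝ → ℝ → ℝ) (dE dF dG : ℝ → ℝ)
    (hE : IsNormalizable I E dE) (hF : IsNormalizable J F dF)
    (hG : IsNormalizable K G dG)
    (f f₁ f₂ : ℝ → ℝ → ℝ)
    (hmap : ∀ u ∈ J, ∀ v ∈ K, f u v ∈ I)
    (hdf : ∀ u ∈ J, ∀ v ∈ K, HasFDerivAt (fun p : ℝ × ℝ => f p.1 p.2)
      ((f₁ u v) • ContinuousLinearMap.fst ℝ ℝ ℝ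
        + (f₂ u v) • ContinuousLinearMap.snd ℝ ℝ ℝ) (u, v))
    (hf₁ : ∀ u ∈ J, ∀ v ∈ K, 0 ≤ f₁ u v)
    (hf₂ : ∀ u ∈ J, ∀ v ∈ K, 0 ≤ f₂ u v)
    (hfpos : ∀ u ∈ J, ∀ v ∈ K, 0 < f₁ u v + f₂ u v) :
    ((∀ (n : ℕ) (x y lam : Fin n → ℝ), (∀ i, x i ∈ J) → (∀ i, y i ∈ K) → IsWeight lam →
        LLD I E (fun i => f (x i) (y i)) lam ≤ f (LLD J F x lam) (LLD K G y lam)) ↔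
     (∀ p ∈ J, ∀ u ∈ J, ∀ q ∈ K, ∀ v ∈ K,
        nrm E dE (f p q) (f u v) ≤ f₁ u v * nrm F dF p u + f₂ u v * nrm G dG q v)) ∧
    ((∀ (n : ℕ) (x y lam : Fin n → ℝ), (∀ i, x i ∈ J) → (∀ i, y i ∈ K) → IsWeight lam →
        LD I E (fun i => f (x i) (y i)) lam ≤ f (LD J F x lam) (LD K G y lam)) ↔
     (∀ p ∈ J, ∀ u ∈ J, ∀ q ∈ K, ∀ v ∈ K,
        nrm E dE (f p q) (f u v) ≤ f₁ u v * nrm F dF p u + f₂ u v * nrm G dG q v)) ∧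
    ((∀ (n : ℕ) (x y lam : Fin n → ℝ), (∀ i, x i ∈ J) → (∀ i, y i ∈ K) → IsWeight lam →
        UD I E (fun i => f (x i) (y i)) lam ≤ f (UD J F x lam) (UD K G y lam)) ↔
     (∀ p ∈ J, ∀ u ∈ J, ∀ q ∈ K, ∀ v ∈ K,
        nrm E dE (f p q) (f u v) ≤ f₁ u v * nrm F dF p u + f₂ u v * nrm G dG q v)) ∧
    ((∀ (n : ℕ) (x y lam : Fin n → ℝ), (∀ i, x i ∈ J) → (∀ i, y i ∈ K) → IsWeight lam →
        UUD I E (fun i => f (x i) (y i)) lam ≤ f (UUD J F x lam) (UUD K G y lam)) ↔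
     (∀ p ∈ J, ∀ u ∈ J, ∀ q ∈ K, ∀ v ∈ K,
        nrm E dE (f p q) (f u v) ≤ f₁ u v * nrm F dF p u + f₂ u v * nrm G dG q v)) ∧
    ((∀ (n : ℕ) (x y lam : Fin n → ℝ), (∀ i, x i ∈ J) → (∀ i, y i ∈ K) → IsWeight lam →
        LLD I E (fun i => f (x i) (y i)) lam ≤ f (UUD J F x lam) (UUD K G y lam)) ↔
     (∀ p ∈ J, ∀ u ∈ J, ∀ q ∈ K, ∀ v ∈ K,
        nrm E dE (f p q) (f u v) ≤ f₁ u v * nrm F dF p u + f₂ u v * nrm G dG q v)) := by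

  refine ⟨⟨fun h => ?_, fun hvi n x y lam hx hy hlam =>
      bwd_LLD hI hIo hJ hJo hK hKo hE hF hG hmap hf₁ hf₂ hvi hx hy hlam⟩,
    ⟨fun h => ?_, fun hvi n x y lam hx hy hlam =>
      bwd_LD hI hIo hJ hJo hK hKo hE hF hG hmap hdf hf₁ hf₂ hfpos hvi hx hy hlam⟩,
    ⟨fun h => ?_, fun hvi n x y lam hx hy hlam =>
      bwd_UD hI hIo hJ hJo hK hKo hE hF hG hmap hdf hf₁ hf₂ hvi hx hy hlam⟩,
    ⟨fun h => ?_, fun hvi n x y lam hx hy hlam =>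
      bwd_UUD hI hIo hJ hJo hK hKo hE hF hG hmap hdf hf₁ hf₂ hfpos hvi hx hy hlam⟩,
    ⟨fun h => ?_, fun hvi n x y lam hx hy hlam =>
      bwd_mix hI hIo hJ hJo hK hKo hE hF hG hmap hdf hf₁ hf₂ hvi hx hy hlam⟩⟩ <;>
  · intro p hp u hu q hq v hv
    have hfd := hdf u hu v hv
    have hEab : f p q ∈ I := hmap p hp q hq
    have hEuv : f u v ∈ I := hmap u hu v hv
    have hev : ∀ t : ℝ, t ∈ Ioo (0:ℝ) 1 → IsWeight ![t, 1-t] := by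
      intro t ht
      constructor
      · intro i
        fin_cases i
        · simpa using ht.1.le
        · simp
          linarith [ht.2]
      · rw [Fin.sum_univ_two]
        norm_num
    have hvec : ∀ t : ℝ, (fun i => f (![p,u] i) (![q,v] i)) = ![f p q, f u v] := by
      intro t
      funext i
      fin_cases i <;> simp
    have hxm : ∀ i, (![p,u] : Fin 2 → ℝ) i ∈ J := by intro i; fin_cases i <;> simpa
    have hym : ∀ i, (![q,v] : Fin 2 → ℝ) i ∈ K := by intro i; fin_cases i <;> simpa
    first
    | exact forward_step hfd
        (tendsto_mean hI hIo hE hEab hEuv).1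
        (tendsto_mean hJ hJo hF hp hu).1
        (tendsto_mean hK hKo hG hq hv).1
        (by
          filter_upwards [Ioo_mem_nhdsGT_of_mem (left_mem_Ico.mpr zero_lt_one)] with t ht
          have h2 := h 2 ![p,u] ![q,v] ![t,1-t] hxm hym (hev t ht)
          rwa [hvec t] at h2)
    | exact forward_step hfd
        (tendsto_mean hI hIo hE hEab hEuv).2.1
        (tendsto_mean hJ hJo hF hp hu).2.1
        (tendsto_mean hK hKo hG hq hv).2.1
        (by
          filter_upwards [Ioo_mem_nhdsGT_of_mem (left_mem_Ico.mpr zero_lt_one)] with t ht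
          have h2 := h 2 ![p,u] ![q,v] ![t,1-t] hxm hym (hev t ht)
          rwa [hvec t] at h2)
    | exact forward_step hfd
        (tendsto_mean hI hIo hE hEab hEuv).2.2.1
        (tendsto_mean hJ hJo hF hp hu).2.2.1
        (tendsto_mean hK hKo hG hq hv).2.2.1
        (by
          filter_upwards [Ioo_mem_nhdsGT_of_mem (left_mem_Ico.mpr zero_lt_one)] with t ht
          have h2 := h 2 ![p,u] ![q,v] ![t,1-t] hxm hym (hev t ht)
          rwa [hvec t] at h2)
    | exact forward_step hfd
        (tendsto_mean hI hIo hE hEab hEuv).2.2.2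
        (tendsto_mean hJ hJo hF hp hu).2.2.2
        (tendsto_mean hK hKo hG hq hv).2.2.2
        (by
          filter_upwards [Ioo_mem_nhdsGT_of_mem (left_mem_Ico.mpr zero_lt_one)] with t ht
          have h2 := h 2 ![p,u] ![q,v] ![t,1-t] hxm hym (hev t ht)
          rwa [hvec t] at h2)
    | exact forward_step hfd
        (tendsto_mean hI hIo hE hEab hEuv).1
        (tendsto_mean hJ hJo hF hp hu).2.2.2
        (tendsto_mean hK hKo hG hq hv).2.2.2
        (by
          filter_upwards [Ioo_mem_nhdsGT_of_mem (left_mem_Ico.mpr zero_lt_one)] with t ht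
          have h2 := h 2 ![p,u] ![q,v] ![t,1-t] hxm hym (hev t ht)
          rwa [hvec t] at h2)
end part3
end

section
/- Let J and K be open intervals, and let E, F, G be normalizable semideviations on the intervals I := J + K (the set of sums), J, and K, respectively. Then the following are equivalent (each inequality for all n ∈ ℕ, x ∈ Jⁿ, y ∈ Kⁿ, weight vectors λ, with x+y the coordinatewise sum): (i) LLD_E(x+y,λ) ≤ LLD_F(x,λ) + LLD_G(y,λ); (ii) LD_E(x+y,λ) ≤ LD_F(x,λ) + LD_G(y,λ); (iii) UD_E(x+y,λ) ≤ UD_F(x,λ) + UD_G(y,λ); (iv) UUD_E(x+y,λ) ≤ UUD_F(x,λ) + UUD_G(y,λ); (v) LLD_E(x+y,λ) ≤ UUD_F(x,λ) + UUD_G(y,λ); (vi) for all p, u ∈ J and q, v ∈ K, E*(p+q, u+v) ≤ F*(p,u) + G*(q,v). -/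
open Set Filter Topology

namespace SDP

open Set Filter Topology

variable {I J K : Set ℝ} {E F G : ℝ → ℝ → ℝ} {d dE dF dG : ℝ → ℝ}

lemma sd_of_lt (h : IsSemideviation I E) {a b : ℝ} (ha : a ∈ I) (hb : b ∈ I)
    (hab : b < a) : 0 < E a b := by
  have hs := h a ha b hb (ne_of_gt hab)
  rw [Real.sign_of_pos (by linarith : (0:ℝ) < a - b)] at hs
  rcases lt_trichotomy (E a b) 0 with h1 | h1 | h1
  · rw [Real.sign_of_neg h1] at hs; norm_num at hs
  · rw [h1, Real.sign_zero] at hs; norm_num at hs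
  · exact h1

lemma sd_of_gt (h : IsSemideviation I E) {a b : ℝ} (ha : a ∈ I) (hb : b ∈ I)
    (hab : a < b) : E a b < 0 := by
  have hs := h a ha b hb (ne_of_lt hab)
  rw [Real.sign_of_neg (by linarith : a - b < 0)] at hs
  rcases lt_trichotomy (E a b) 0 with h1 | h1 | h1
  · exact h1
  · rw [h1, Real.sign_zero] at hs; norm_num at hs
  · rw [Real.sign_of_pos h1] at hs; norm_num at hs

lemma mem_of_abs_lt {u ρ : ℝ} (hball : Metric.ball u ρ ⊆ I) {t : ℝ} (h : |t - u| < ρ) :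
    t ∈ I := hball (by simpa [Metric.mem_ball, Real.dist_eq] using h)

lemma exists_above (hIo : IsOpen I) {u : ℝ} (hu : u ∈ I) {δ : ℝ} (hδ : 0 < δ) :
    ∃ t ∈ I, u < t ∧ t < u + δ := by
  obtain ⟨ρ, hρ, hball⟩ := Metric.isOpen_iff.1 hIo u hu
  have hm : 0 < min ρ δ := lt_min hρ hδ
  have h1 := min_le_left ρ δ
  have h2 := min_le_right ρ δ
  refine ⟨u + min ρ δ / 2, mem_of_abs_lt hball ?_, by linarith, by linarith⟩
  rw [add_sub_cancel_left, abs_of_pos (by linarith)]; linarith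

lemma exists_below (hIo : IsOpen I) {u : ℝ} (hu : u ∈ I) {δ : ℝ} (hδ : 0 < δ) :
    ∃ t ∈ I, t < u ∧ u - δ < t := by
  obtain ⟨ρ, hρ, hball⟩ := Metric.isOpen_iff.1 hIo u hu
  have hm : 0 < min ρ δ := lt_min hρ hδ
  have h1 := min_le_left ρ δ
  have h2 := min_le_right ρ δ
  refine ⟨u - min ρ δ / 2, mem_of_abs_lt hball ?_, by linarith, by linarith⟩
  rw [show u - min ρ δ / 2 - u = -(min ρ δ / 2) by ring, abs_neg, abs_of_pos (by linarith)]
  linarith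

lemma sd_diag (hIo : IsOpen I) (hsd : IsSemideviation I E)
    (hc : ∀ x ∈ I, ContinuousOn (fun y => E x y) I) {u : ℝ} (hu : u ∈ I) : E u u = 0 := by
  obtain ⟨ρ, hρ, hball⟩ := Metric.isOpen_iff.1 hIo u hu
  have hcont : ContinuousAt (fun y => E u y) u := (hc u hu).continuousAt (hIo.mem_nhds hu)
  have h1 : E u u ≤ 0 := by
    refine le_of_tendsto (hcont.tendsto.mono_left nhdsWithin_le_nhds : Tendsto _ (𝓝[>] u) _) ?_
    filter_upwards [Ioo_mem_nhdsGT_of_mem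
      (show u ∈ Ico u (u + ρ) from ⟨le_refl u, by linarith⟩)] with t ht
    exact (sd_of_gt hsd hu (mem_of_abs_lt hball (by
      rw [abs_of_pos (by linarith [ht.1])]; linarith [ht.2])) ht.1).le
  have h2 : 0 ≤ E u u := by
    refine ge_of_tendsto (hcont.tendsto.mono_left nhdsWithin_le_nhds : Tendsto _ (𝓝[<] u) _) ?_
    filter_upwards [Ioo_mem_nhdsLT_of_mem
      (show u ∈ Ioc (u - ρ) u from ⟨by linarith, le_refl u⟩)] with t ht
    exact (sd_of_lt hsd hu (mem_of_abs_lt hball (by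
      rw [show t - u = -(u - t) by ring, abs_neg, abs_of_pos (by linarith [ht.2])]
      linarith [ht.1])) ht.2).le
  linarith

end SDP
namespace SDP2
open Set Filter Topology SDP

variable {I J K : Set ℝ} {E F G : ℝ → ℝ → ℝ} {d dE dF dG : ℝ → ℝ}

lemma weight_exists_pos {n : ℕ} {lam : Fin n → ℝ} (h : IsWeight lam) : ∃ i, 0 < lam i := by
  by_contra hc
  push_neg at hc
  have : ∑ i, lam i ≤ 0 := Finset.sum_nonpos (fun i _ => hc i)
  linarith [h.2]

lemma eFun_pos (hsd : IsSemideviation I E) {n : ℕ} {x lam : Fin n → ℝ}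
    (hx : ∀ i, x i ∈ I) (hlam : IsWeight lam) {t : ℝ} (ht : t ∈ I)
    (hlt : ∀ i, t < x i) : 0 < eFun E x lam t := by
  obtain ⟨i₀, hi₀⟩ := weight_exists_pos hlam
  refine Finset.sum_pos' (fun i _ => mul_nonneg (hlam.1 i)
    (sd_of_lt hsd (hx i) ht (hlt i)).le) ⟨i₀, Finset.mem_univ _, ?_⟩
  exact mul_pos hi₀ (sd_of_lt hsd (hx i₀) ht (hlt i₀))

lemma eFun_neg (hsd : IsSemideviation I E) {n : ℕ} {x lam : Fin n → ℝ}
    (hx : ∀ i, x i ∈ I) (hlam : IsWeight lam) {t : ℝ} (ht : t ∈ I)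
    (hlt : ∀ i, x i < t) : eFun E x lam t < 0 := by
  obtain ⟨i₀, hi₀⟩ := weight_exists_pos hlam
  refine Finset.sum_neg' (fun i _ => mul_nonpos_of_nonneg_of_nonpos (hlam.1 i)
    (sd_of_gt hsd (hx i) ht (hlt i)).le) ⟨i₀, Finset.mem_univ _, ?_⟩
  exact mul_neg_of_pos_of_neg hi₀ (sd_of_gt hsd (hx i₀) ht (hlt i₀))

lemma eFun_continuousOn (hc : ∀ x ∈ I, ContinuousOn (fun y => E x y) I)
    {n : ℕ} {x lam : Fin n → ℝ} (hx : ∀ i, x i ∈ I) :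
    ContinuousOn (eFun E x lam) I := by
  unfold eFun
  exact continuousOn_finset_sum _ (fun i _ => (continuousOn_const.mul (hc (x i) (hx i))))

lemma image2_ordConnected (hJ : J.OrdConnected) (hK : K.OrdConnected) :
    (Set.image2 (· + ·) J K).OrdConnected := by
  constructor
  rintro s₁ ⟨p₁, hp₁, q₁, hq₁, rfl⟩ s₂ ⟨p₂, hp₂, q₂, hq₂, rfl⟩ t ht
  obtain ⟨ht1, ht2⟩ : p₁ + q₁ ≤ t ∧ t ≤ p₂ + q₂ := ht
  rcases eq_or_lt_of_le (ht1.trans ht2) with heq | hlt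
  · have htt : t = p₁ + q₁ := le_antisymm (by rw [heq]; exact ht2) ht1
    exact htt ▸ mem_image2_of_mem hp₁ hq₁
  · set θ : ℝ := (t - (p₁ + q₁)) / ((p₂ + q₂) - (p₁ + q₁)) with hθdef
    have hden : (0:ℝ) < (p₂ + q₂) - (p₁ + q₁) := by linarith
    have hθ0 : 0 ≤ θ := div_nonneg (by linarith) hden.le
    have hθ1 : θ ≤ 1 := by rw [hθdef, div_le_one hden]; linarith
    have hp : p₁ + θ * (p₂ - p₁) ∈ J := by
      refine hJ.uIcc_subset hp₁ hp₂ (mem_uIcc.2 ?_)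
      rcases le_total p₁ p₂ with h | h
      · exact Or.inl ⟨by nlinarith, by nlinarith⟩
      · exact Or.inr ⟨by nlinarith, by nlinarith⟩
    have hq : q₁ + θ * (q₂ - q₁) ∈ K := by
      refine hK.uIcc_subset hq₁ hq₂ (mem_uIcc.2 ?_)
      rcases le_total q₁ q₂ with h | h
      · exact Or.inl ⟨by nlinarith, by nlinarith⟩
      · exact Or.inr ⟨by nlinarith, by nlinarith⟩
    refine ⟨_, hp, _, hq, ?_⟩
    show (p₁ + θ * (p₂ - p₁)) + (q₁ + θ * (q₂ - q₁)) = t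
    have hmul : θ * ((p₂ + q₂) - (p₁ + q₁)) = t - (p₁ + q₁) := by
      rw [hθdef]; field_simp
    have : θ * (p₂ - p₁) + θ * (q₂ - q₁) = t - (p₁ + q₁) := by rw [← hmul]; ring
    linarith

lemma image2_isOpen (hJo : IsOpen J) : IsOpen (Set.image2 (· + ·) J K) := by
  rw [Set.image2_add]
  exact hJo.add_right

end SDP2
namespace SDP3
open Set Filter Topology SDP SDP2

variable {I : Set ℝ} {E : ℝ → ℝ → ℝ}

lemma weight_n_pos {n : ℕ} {lam : Fin n → ℝ} (h : IsWeight lam) : 0 < n := by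
  rcases Nat.eq_zero_or_pos n with h0 | h0
  · subst h0; exact absurd h.2 (by simp)
  · exact h0

/-- Facts about the infimum of a sandwiched sublevel set. -/
lemma sInf_facts (hI : I.OrdConnected) (hIo : IsOpen I) (hsd : IsSemideviation I E)
    (hc : ∀ x ∈ I, ContinuousOn (fun y => E x y) I)
    {n : ℕ} {x lam : Fin n → ℝ} (hx : ∀ i, x i ∈ I) (hlam : IsWeight lam)
    {S : Set ℝ} (hS1 : {t | t ∈ I ∧ eFun E x lam t < 0} ⊆ S)
    (hS2 : S ⊆ {t | t ∈ I ∧ eFun E x lam t ≤ 0}) :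
    S.Nonempty ∧ BddBelow S ∧ sInf S ∈ I ∧ eFun E x lam (sInf S) ≤ 0 := by
  haveI : Nonempty (Fin n) := Fin.pos_iff_nonempty.mp (weight_n_pos hlam)
  obtain ⟨i₀, -, hi₀⟩ := Finset.exists_min_image Finset.univ x ⟨Classical.arbitrary _, Finset.mem_univ _⟩
  obtain ⟨i₁, -, hi₁⟩ := Finset.exists_max_image Finset.univ x ⟨Classical.arbitrary _, Finset.mem_univ _⟩
  have hne : S.Nonempty := by
    obtain ⟨t, htI, htgt, -⟩ := exists_above hIo (hx i₁) one_pos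
    exact ⟨t, hS1 ⟨htI, eFun_neg hsd hx hlam htI
      (fun i => lt_of_le_of_lt (hi₁ i (Finset.mem_univ i)) htgt)⟩⟩
  have hbdd : BddBelow S := by
    refine ⟨x i₀, fun t htS => ?_⟩
    by_contra hcon
    push_neg at hcon
    obtain ⟨htI, hte⟩ := hS2 htS
    exact absurd hte (not_le.mpr (eFun_pos hsd hx hlam htI
      (fun i => lt_of_lt_of_le hcon (hi₀ i (Finset.mem_univ i)))))
  set a := sInf S with hadef
  have ha1 : x i₀ ≤ a := le_csInf hne (fun t htS => by
    by_contra hcon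
    push_neg at hcon
    obtain ⟨htI, hte⟩ := hS2 htS
    exact absurd hte (not_le.mpr (eFun_pos hsd hx hlam htI
      (fun i => lt_of_lt_of_le hcon (hi₀ i (Finset.mem_univ i))))))
  have ha2 : a ≤ x i₁ := by
    refine le_of_forall_pos_le_add (fun ε hε => ?_)
    obtain ⟨t, htI, htgt, htlt⟩ := exists_above hIo (hx i₁) hε
    exact le_trans (csInf_le hbdd (hS1 ⟨htI, eFun_neg hsd hx hlam htI
      (fun i => lt_of_le_of_lt (hi₁ i (Finset.mem_univ i)) htgt)⟩)) htlt.le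
  have haI : a ∈ I := hI.out (hx i₀) (hx i₁) ⟨ha1, ha2⟩
  refine ⟨hne, hbdd, haI, ?_⟩
  have hclos : a ∈ closure S := csInf_mem_closure hne hbdd
  haveI : (𝓝[S] a).NeBot := mem_closure_iff_nhdsWithin_neBot.1 hclos
  have hca : ContinuousAt (eFun E x lam) a :=
    (eFun_continuousOn hc hx).continuousAt (hIo.mem_nhds haI)
  refine le_of_tendsto (hca.tendsto.mono_left (nhdsWithin_le_nhds : 𝓝[S] a ≤ 𝓝 a)) ?_
  exact eventually_nhdsWithin_of_forall (fun t htS => (hS2 htS).2)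

/-- Facts about the supremum of a sandwiched superlevel set. -/
lemma sSup_facts (hI : I.OrdConnected) (hIo : IsOpen I) (hsd : IsSemideviation I E)
    (hc : ∀ x ∈ I, ContinuousOn (fun y => E x y) I)
    {n : ℕ} {x lam : Fin n → ℝ} (hx : ∀ i, x i ∈ I) (hlam : IsWeight lam)
    {S : Set ℝ} (hS1 : {t | t ∈ I ∧ 0 < eFun E x lam t} ⊆ S)
    (hS2 : S ⊆ {t | t ∈ I ∧ 0 ≤ eFun E x lam t}) :
    S.Nonempty ∧ BddAbove S ∧ sSup S ∈ I ∧ 0 ≤ eFun E x lam (sSup S) := by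
  haveI : Nonempty (Fin n) := Fin.pos_iff_nonempty.mp (weight_n_pos hlam)
  obtain ⟨i₀, -, hi₀⟩ := Finset.exists_min_image Finset.univ x ⟨Classical.arbitrary _, Finset.mem_univ _⟩
  obtain ⟨i₁, -, hi₁⟩ := Finset.exists_max_image Finset.univ x ⟨Classical.arbitrary _, Finset.mem_univ _⟩
  have hne : S.Nonempty := by
    obtain ⟨t, htI, htlt, -⟩ := exists_below hIo (hx i₀) one_pos
    exact ⟨t, hS1 ⟨htI, eFun_pos hsd hx hlam htI
      (fun i => lt_of_lt_of_le htlt (hi₀ i (Finset.mem_univ i)))⟩⟩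
  have hbdd : BddAbove S := by
    refine ⟨x i₁, fun t htS => ?_⟩
    by_contra hcon
    push_neg at hcon
    obtain ⟨htI, hte⟩ := hS2 htS
    exact absurd hte (not_le.mpr (eFun_neg hsd hx hlam htI
      (fun i => lt_of_le_of_lt (hi₁ i (Finset.mem_univ i)) hcon)))
  set a := sSup S with hadef
  have ha2 : a ≤ x i₁ := csSup_le hne (fun t htS => by
    by_contra hcon
    push_neg at hcon
    obtain ⟨htI, hte⟩ := hS2 htS
    exact absurd hte (not_le.mpr (eFun_neg hsd hx hlam htI
      (fun i => lt_of_le_of_lt (hi₁ i (Finset.mem_univ i)) hcon))))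
  have ha1 : x i₀ ≤ a := by
    refine le_of_forall_pos_le_add (fun ε hε => ?_)
    obtain ⟨t, htI, htlt, htgt⟩ := exists_below hIo (hx i₀) hε
    have : t ≤ a := le_csSup hbdd (hS1 ⟨htI, eFun_pos hsd hx hlam htI
      (fun i => lt_of_lt_of_le htlt (hi₀ i (Finset.mem_univ i)))⟩)
    linarith
  have haI : a ∈ I := hI.out (hx i₀) (hx i₁) ⟨ha1, ha2⟩
  refine ⟨hne, hbdd, haI, ?_⟩
  have hclos : a ∈ closure S := csSup_mem_closure hne hbdd
  haveI : (𝓝[S] a).NeBot := mem_closure_iff_nhdsWithin_neBot.1 hclos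
  have hca : ContinuousAt (eFun E x lam) a :=
    (eFun_continuousOn hc hx).continuousAt (hIo.mem_nhds haI)
  refine ge_of_tendsto (hca.tendsto.mono_left (nhdsWithin_le_nhds : 𝓝[S] a ≤ 𝓝 a)) ?_
  exact eventually_nhdsWithin_of_forall (fun t htS => (hS2 htS).2)

end SDP3
namespace SDP4
open Set Filter Topology SDP SDP2 SDP3

variable {J K : Set ℝ} {E F G : ℝ → ℝ → ℝ} {dE dF dG : ℝ → ℝ}

/-- The key pointwise-to-weighted-sum inequality. -/
lemma key_ineq (hEn : IsNormalizable (Set.image2 (· + ·) J K) E dE)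
    (Hvi : ∀ p ∈ J, ∀ u ∈ J, ∀ q ∈ K, ∀ v ∈ K,
      nrm E dE (p + q) (u + v) ≤ nrm F dF p u + nrm G dG q v)
    {n : ℕ} {x y lam : Fin n → ℝ} (hx : ∀ i, x i ∈ J) (hy : ∀ i, y i ∈ K)
    (hlam : ∀ i, 0 ≤ lam i) {a b : ℝ} (ha : a ∈ J) (hb : b ∈ K) :
    eFun E (fun i => x i + y i) lam (a + b) ≤
      (-(dE (a + b))) * (eFun F x lam a / (-(dF a)) + eFun G y lam b / (-(dG b))) := by
  have habI : a + b ∈ Set.image2 (· + ·) J K := mem_image2_of_mem ha hb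
  have hC : 0 < -(dE (a + b)) := by linarith [hEn.2.2.2.1 _ habI]
  have hpt : ∀ i, E (x i + y i) (a + b) ≤
      (-(dE (a + b))) * (F (x i) a / (-(dF a)) + G (y i) b / (-(dG b))) := by
    intro i
    have h := Hvi (x i) (hx i) a ha (y i) (hy i) b hb
    unfold nrm at h
    rw [div_le_iff₀ hC] at h
    linarith [h]
  calc eFun E (fun i => x i + y i) lam (a + b)
      ≤ ∑ i, lam i * ((-(dE (a + b))) * (F (x i) a / (-(dF a)) + G (y i) b / (-(dG b)))) := by
        unfold eFun
        exact Finset.sum_le_sum (fun i _ => mul_le_mul_of_nonneg_left (hpt i) (hlam i))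
    _ = (-(dE (a + b))) * (eFun F x lam a / (-(dF a)) + eFun G y lam b / (-(dG b))) := by
        unfold eFun
        rw [Finset.sum_div, Finset.sum_div, ← Finset.sum_add_distrib, Finset.mul_sum]
        exact Finset.sum_congr rfl (fun i _ => by ring)

lemma split_lemma {t a b q₀ : ℝ} (hJo : IsOpen J) (hK : K.OrdConnected)
    (ha : a ∈ J) (hb : b ∈ K) (hq : q₀ ∈ K) (h1 : b < t - a) (h2 : t - a ≤ q₀) :
    ∃ a' ∈ J, ∃ b' ∈ K, a < a' ∧ b < b' ∧ a' + b' = t := by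
  obtain ⟨a', haJ', hgt, hlt⟩ := exists_above hJo ha (by linarith : (0:ℝ) < t - a - b)
  refine ⟨a', haJ', t - a', hK.out hb hq ⟨by linarith, by linarith⟩, hgt, by linarith, by ring⟩

lemma decomp {t a b p₀ q₀ : ℝ} (hJo : IsOpen J) (hKo : IsOpen K)
    (hJ : J.OrdConnected) (hK : K.OrdConnected)
    (ha : a ∈ J) (hb : b ∈ K) (hp : p₀ ∈ J) (hq : q₀ ∈ K) (hsum : p₀ + q₀ = t)
    (hgt : a + b < t) :
    ∃ a' ∈ J, ∃ b' ∈ K, a < a' ∧ b < b' ∧ a' + b' = t := by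
  rcases le_or_gt p₀ a with h | h
  · exact split_lemma hJo hK ha hb hq (by linarith) (by linarith)
  · rcases le_or_gt q₀ b with h' | h'
    · obtain ⟨b', hbK', a', haJ', hb1, ha1, hs⟩ :=
        split_lemma (t := t) hKo hJ hb ha hp (by linarith) (by linarith)
      exact ⟨a', haJ', b', hbK', ha1, hb1, by linarith⟩
    · exact ⟨p₀, hp, q₀, hq, h, h', hsum⟩

end SDP4
namespace SDP5
open Set Filter Topology SDP SDP2 SDP3 SDP4

variable {J K : Set ℝ} {E F G : ℝ → ℝ → ℝ} {dE dF dG : ℝ → ℝ}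

lemma key_nonpos (hEn : IsNormalizable (Set.image2 (· + ·) J K) E dE)
    (hFn : IsNormalizable J F dF) (hGn : IsNormalizable K G dG)
    (Hvi : ∀ p ∈ J, ∀ u ∈ J, ∀ q ∈ K, ∀ v ∈ K,
      nrm E dE (p + q) (u + v) ≤ nrm F dF p u + nrm G dG q v)
    {n : ℕ} {x y lam : Fin n → ℝ} (hx : ∀ i, x i ∈ J) (hy : ∀ i, y i ∈ K)
    (hlam : ∀ i, 0 ≤ lam i) {a b : ℝ} (ha : a ∈ J) (hb : b ∈ K)
    (heF : eFun F x lam a ≤ 0) (heG : eFun G y lam b ≤ 0) :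
    eFun E (fun i => x i + y i) lam (a + b) ≤ 0 := by
  have h := key_ineq hEn Hvi hx hy hlam ha hb
  have hDF : 0 < -(dF a) := by linarith [hFn.2.2.2.1 a ha]
  have hDG : 0 < -(dG b) := by linarith [hGn.2.2.2.1 b hb]
  have hC : 0 < -(dE (a + b)) := by linarith [hEn.2.2.2.1 _ (mem_image2_of_mem ha hb)]
  have h1 : eFun F x lam a / (-(dF a)) ≤ 0 := div_nonpos_iff.mpr (Or.inr ⟨heF, hDF.le⟩)
  have h2 : eFun G y lam b / (-(dG b)) ≤ 0 := div_nonpos_iff.mpr (Or.inr ⟨heG, hDG.le⟩)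
  exact h.trans (mul_nonpos_of_nonneg_of_nonpos hC.le (by linarith))

lemma key_neg (hEn : IsNormalizable (Set.image2 (· + ·) J K) E dE)
    (hFn : IsNormalizable J F dF) (hGn : IsNormalizable K G dG)
    (Hvi : ∀ p ∈ J, ∀ u ∈ J, ∀ q ∈ K, ∀ v ∈ K,
      nrm E dE (p + q) (u + v) ≤ nrm F dF p u + nrm G dG q v)
    {n : ℕ} {x y lam : Fin n → ℝ} (hx : ∀ i, x i ∈ J) (hy : ∀ i, y i ∈ K)
    (hlam : ∀ i, 0 ≤ lam i) {a b : ℝ} (ha : a ∈ J) (hb : b ∈ K)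
    (heF : eFun F x lam a < 0) (heG : eFun G y lam b < 0) :
    eFun E (fun i => x i + y i) lam (a + b) < 0 := by
  have h := key_ineq hEn Hvi hx hy hlam ha hb
  have hDF : 0 < -(dF a) := by linarith [hFn.2.2.2.1 a ha]
  have hDG : 0 < -(dG b) := by linarith [hGn.2.2.2.1 b hb]
  have hC : 0 < -(dE (a + b)) := by linarith [hEn.2.2.2.1 _ (mem_image2_of_mem ha hb)]
  have h1 : eFun F x lam a / (-(dF a)) < 0 := div_neg_of_neg_of_pos heF hDF
  have h2 : eFun G y lam b / (-(dG b)) < 0 := div_neg_of_neg_of_pos heG hDG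
  exact lt_of_le_of_lt h (mul_neg_of_pos_of_neg hC (by linarith))

section bwd
variable (hJ : J.OrdConnected) (hJo : IsOpen J) (hK : K.OrdConnected) (hKo : IsOpen K)
  (hEn : IsNormalizable (Set.image2 (· + ·) J K) E dE)
  (hFn : IsNormalizable J F dF) (hGn : IsNormalizable K G dG)
  (Hvi : ∀ p ∈ J, ∀ u ∈ J, ∀ q ∈ K, ∀ v ∈ K,
      nrm E dE (p + q) (u + v) ≤ nrm F dF p u + nrm G dG q v)
  {n : ℕ} {x y lam : Fin n → ℝ} (hx : ∀ i, x i ∈ J) (hy : ∀ i, y i ∈ K)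
  (hlam : IsWeight lam)

include hJ hJo hK hKo hEn hFn hGn Hvi hx hy hlam

lemma bwd_LLD : LLD (Set.image2 (· + ·) J K) E (fun i => x i + y i) lam
    ≤ LLD J F x lam + LLD K G y lam := by
  have hI := image2_ordConnected hJ hK
  have hIo : IsOpen (Set.image2 (· + ·) J K) := image2_isOpen hJo
  have hxy : ∀ i, x i + y i ∈ Set.image2 (· + ·) J K :=
    fun i => mem_image2_of_mem (hx i) (hy i)
  obtain ⟨neF, bddF, haJ, heF⟩ := sInf_facts hJ hJo hFn.1 hFn.2.1 hx hlam
    (S := {t | t ∈ J ∧ eFun F x lam t ≤ 0}) (fun t ht => ⟨ht.1, ht.2.le⟩) subset_rfl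
  obtain ⟨neG, bddG, hbK, heG⟩ := sInf_facts hK hKo hGn.1 hGn.2.1 hy hlam
    (S := {t | t ∈ K ∧ eFun G y lam t ≤ 0}) (fun t ht => ⟨ht.1, ht.2.le⟩) subset_rfl
  obtain ⟨neE, bddE, -, -⟩ := sInf_facts hI hIo hEn.1 hEn.2.1 hxy hlam
    (S := {t | t ∈ Set.image2 (· + ·) J K ∧ eFun E (fun i => x i + y i) lam t ≤ 0})
    (fun t ht => ⟨ht.1, ht.2.le⟩) subset_rfl
  exact csInf_le bddE ⟨mem_image2_of_mem haJ hbK,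
    key_nonpos hEn hFn hGn Hvi hx hy hlam.1 haJ hbK heF heG⟩

lemma bwd_LD : LD (Set.image2 (· + ·) J K) E (fun i => x i + y i) lam
    ≤ LD J F x lam + LD K G y lam := by
  have hI := image2_ordConnected hJ hK
  have hIo : IsOpen (Set.image2 (· + ·) J K) := image2_isOpen hJo
  have hxy : ∀ i, x i + y i ∈ Set.image2 (· + ·) J K :=
    fun i => mem_image2_of_mem (hx i) (hy i)
  obtain ⟨neF, bddF, -, -⟩ := sInf_facts hJ hJo hFn.1 hFn.2.1 hx hlam
    (S := {t | t ∈ J ∧ eFun F x lam t < 0}) subset_rfl (fun t ht => ⟨ht.1, ht.2.le⟩)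
  obtain ⟨neG, bddG, -, -⟩ := sInf_facts hK hKo hGn.1 hGn.2.1 hy hlam
    (S := {t | t ∈ K ∧ eFun G y lam t < 0}) subset_rfl (fun t ht => ⟨ht.1, ht.2.le⟩)
  obtain ⟨neE, bddE, -, -⟩ := sInf_facts hI hIo hEn.1 hEn.2.1 hxy hlam
    (S := {t | t ∈ Set.image2 (· + ·) J K ∧ eFun E (fun i => x i + y i) lam t < 0})
    subset_rfl (fun t ht => ⟨ht.1, ht.2.le⟩)
  refine le_of_forall_pos_le_add (fun ε hε => ?_)
  obtain ⟨a', ⟨haJ', heF'⟩, ha'⟩ := exists_lt_of_csInf_lt neF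
    (lt_add_of_pos_right _ (by linarith : (0:ℝ) < ε/2))
  obtain ⟨b', ⟨hbK', heG'⟩, hb'⟩ := exists_lt_of_csInf_lt neG
    (lt_add_of_pos_right _ (by linarith : (0:ℝ) < ε/2))
  have hmem : a' + b' ∈ {t | t ∈ Set.image2 (· + ·) J K ∧
      eFun E (fun i => x i + y i) lam t < 0} :=
    ⟨mem_image2_of_mem haJ' hbK', key_neg hEn hFn hGn Hvi hx hy hlam.1 haJ' hbK' heF' heG'⟩
  have := csInf_le bddE hmem
  unfold LD at *
  linarith

lemma bwd_UUD : UUD (Set.image2 (· + ·) J K) E (fun i => x i + y i) lam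
    ≤ UUD J F x lam + UUD K G y lam := by
  have hI := image2_ordConnected hJ hK
  have hIo : IsOpen (Set.image2 (· + ·) J K) := image2_isOpen hJo
  have hxy : ∀ i, x i + y i ∈ Set.image2 (· + ·) J K :=
    fun i => mem_image2_of_mem (hx i) (hy i)
  obtain ⟨neF, bddF, haJ, heF⟩ := sSup_facts hJ hJo hFn.1 hFn.2.1 hx hlam
    (S := {t | t ∈ J ∧ 0 ≤ eFun F x lam t}) (fun t ht => ⟨ht.1, ht.2.le⟩) subset_rfl
  obtain ⟨neG, bddG, hbK, heG⟩ := sSup_facts hK hKo hGn.1 hGn.2.1 hy hlam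
    (S := {t | t ∈ K ∧ 0 ≤ eFun G y lam t}) (fun t ht => ⟨ht.1, ht.2.le⟩) subset_rfl
  obtain ⟨neE, bddE, -, -⟩ := sSup_facts hI hIo hEn.1 hEn.2.1 hxy hlam
    (S := {t | t ∈ Set.image2 (· + ·) J K ∧ 0 ≤ eFun E (fun i => x i + y i) lam t})
    (fun t ht => ⟨ht.1, ht.2.le⟩) subset_rfl
  refine csSup_le neE (fun t htS => ?_)
  by_contra hcon
  push_neg at hcon
  obtain ⟨p₀, hp₀, q₀, hq₀, hsum⟩ := htS.1
  obtain ⟨a', haJ', b', hbK', ha', hb', hs⟩ :=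
    decomp hJo hKo hJ hK haJ hbK hp₀ hq₀ hsum hcon
  have heF' : eFun F x lam a' < 0 := by
    by_contra hnn
    push_neg at hnn
    exact absurd (le_csSup bddF ⟨haJ', hnn⟩) (not_le.mpr ha')
  have heG' : eFun G y lam b' < 0 := by
    by_contra hnn
    push_neg at hnn
    exact absurd (le_csSup bddG ⟨hbK', hnn⟩) (not_le.mpr hb')
  have hneg := key_neg hEn hFn hGn Hvi hx hy hlam.1 haJ' hbK' heF' heG'
  rw [hs] at hneg
  exact absurd htS.2 (not_le.mpr hneg)

lemma bwd_UD : UD (Set.image2 (· + ·) J K) E (fun i => x i + y i) lam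
    ≤ UD J F x lam + UD K G y lam := by
  have hI := image2_ordConnected hJ hK
  have hIo : IsOpen (Set.image2 (· + ·) J K) := image2_isOpen hJo
  have hxy : ∀ i, x i + y i ∈ Set.image2 (· + ·) J K :=
    fun i => mem_image2_of_mem (hx i) (hy i)
  obtain ⟨neF, bddF, haJ, -⟩ := sSup_facts hJ hJo hFn.1 hFn.2.1 hx hlam
    (S := {t | t ∈ J ∧ 0 < eFun F x lam t}) subset_rfl (fun t ht => ⟨ht.1, ht.2.le⟩)
  obtain ⟨neG, bddG, hbK, -⟩ := sSup_facts hK hKo hGn.1 hGn.2.1 hy hlam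
    (S := {t | t ∈ K ∧ 0 < eFun G y lam t}) subset_rfl (fun t ht => ⟨ht.1, ht.2.le⟩)
  obtain ⟨neE, bddE, -, -⟩ := sSup_facts hI hIo hEn.1 hEn.2.1 hxy hlam
    (S := {t | t ∈ Set.image2 (· + ·) J K ∧ 0 < eFun E (fun i => x i + y i) lam t})
    subset_rfl (fun t ht => ⟨ht.1, ht.2.le⟩)
  refine csSup_le neE (fun t htS => ?_)
  by_contra hcon
  push_neg at hcon
  obtain ⟨p₀, hp₀, q₀, hq₀, hsum⟩ := htS.1
  obtain ⟨a', haJ', b', hbK', ha', hb', hs⟩ :=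
    decomp hJo hKo hJ hK haJ hbK hp₀ hq₀ hsum hcon
  have heF' : eFun F x lam a' ≤ 0 := by
    by_contra hnn
    push_neg at hnn
    exact absurd (le_csSup bddF ⟨haJ', hnn⟩) (not_le.mpr ha')
  have heG' : eFun G y lam b' ≤ 0 := by
    by_contra hnn
    push_neg at hnn
    exact absurd (le_csSup bddG ⟨hbK', hnn⟩) (not_le.mpr hb')
  have hnp := key_nonpos hEn hFn hGn Hvi hx hy hlam.1 haJ' hbK' heF' heG'
  rw [hs] at hnp
  exact absurd htS.2 (not_lt.mpr hnp)

lemma bwd_LLD_UUD : LLD (Set.image2 (· + ·) J K) E (fun i => x i + y i) lam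
    ≤ UUD J F x lam + UUD K G y lam := by
  have hI := image2_ordConnected hJ hK
  have hIo : IsOpen (Set.image2 (· + ·) J K) := image2_isOpen hJo
  have hxy : ∀ i, x i + y i ∈ Set.image2 (· + ·) J K :=
    fun i => mem_image2_of_mem (hx i) (hy i)
  have hUUD := bwd_UUD hJ hJo hK hKo hEn hFn hGn Hvi hx hy hlam
  refine le_trans ?_ hUUD
  -- LLD_E ≤ UUD_E via a zero of e
  haveI : Nonempty (Fin n) := Fin.pos_iff_nonempty.mp (weight_n_pos hlam)
  obtain ⟨i₀, -, hi₀⟩ := Finset.exists_min_image Finset.univ (fun i => x i + y i)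
    ⟨Classical.arbitrary _, Finset.mem_univ _⟩
  obtain ⟨i₁, -, hi₁⟩ := Finset.exists_max_image Finset.univ (fun i => x i + y i)
    ⟨Classical.arbitrary _, Finset.mem_univ _⟩
  obtain ⟨t₁, ht₁I, ht₁lt, -⟩ := exists_below hIo (hxy i₀) one_pos
  obtain ⟨t₂, ht₂I, ht₂gt, -⟩ := exists_above hIo (hxy i₁) one_pos
  have he₁ : 0 < eFun E (fun i => x i + y i) lam t₁ := eFun_pos hEn.1 hxy hlam ht₁I
    (fun i => lt_of_lt_of_le ht₁lt (hi₀ i (Finset.mem_univ i)))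
  have he₂ : eFun E (fun i => x i + y i) lam t₂ < 0 := eFun_neg hEn.1 hxy hlam ht₂I
    (fun i => lt_of_le_of_lt (hi₁ i (Finset.mem_univ i)) ht₂gt)
  have ht₁₂ : t₁ ≤ t₂ := by
    have := hi₀ i₁ (Finset.mem_univ i₁); linarith [hi₁ i₀ (Finset.mem_univ i₀)]
  have hIcc : Icc t₁ t₂ ⊆ Set.image2 (· + ·) J K := fun s hs => hI.out ht₁I ht₂I hs
  have hz : (0:ℝ) ∈ eFun E (fun i => x i + y i) lam '' Icc t₁ t₂ := by
    apply intermediate_value_Icc' ht₁₂ ((eFun_continuousOn hEn.2.1 hxy).mono hIcc)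
    exact ⟨he₂.le, he₁.le⟩
  obtain ⟨z, hzIcc, hz0⟩ := hz
  obtain ⟨-, bddE, -, -⟩ := sInf_facts hI hIo hEn.1 hEn.2.1 hxy hlam
    (S := {t | t ∈ Set.image2 (· + ·) J K ∧ eFun E (fun i => x i + y i) lam t ≤ 0})
    (fun t ht => ⟨ht.1, ht.2.le⟩) subset_rfl
  obtain ⟨-, bddE', -, -⟩ := sSup_facts hI hIo hEn.1 hEn.2.1 hxy hlam
    (S := {t | t ∈ Set.image2 (· + ·) J K ∧ 0 ≤ eFun E (fun i => x i + y i) lam t})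
    (fun t ht => ⟨ht.1, ht.2.le⟩) subset_rfl
  have h1 : LLD (Set.image2 (· + ·) J K) E (fun i => x i + y i) lam ≤ z :=
    csInf_le bddE ⟨hIcc hzIcc, hz0.le⟩
  have h2 : z ≤ UUD (Set.image2 (· + ·) J K) E (fun i => x i + y i) lam :=
    le_csSup bddE' ⟨hIcc hzIcc, hz0.ge⟩
  linarith

end bwd
end SDP5
namespace SDP6
open Set Filter Topology SDP SDP2 SDP3

variable {I : Set ℝ} {E : ℝ → ℝ → ℝ} {d : ℝ → ℝ}

lemma tendsto_ratio (hIo : IsOpen I) (hEn : IsNormalizable I E d)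
    {p u : ℝ} (hp : p ∈ I) (hu : u ∈ I) (c : ℝ) :
    Tendsto (fun s => E p (u + s * c) + (E u (u + s * c)) / s) (𝓝[>] (0:ℝ))
      (𝓝 (E p u + d u * c)) := by
  have h0 : E u u = 0 := sd_diag hIo hEn.1 hEn.2.1 hu
  have hder : HasDerivAt (fun y => E u y) (d u) u :=
    (hEn.2.2.1 u hu).hasDerivAt (hIo.mem_nhds hu)
  have hline : HasDerivAt (fun s : ℝ => u + s * c) c 0 := by
    simpa using ((hasDerivAt_id (0:ℝ)).mul_const c).const_add u
  have hcomp : HasDerivAt (fun s : ℝ => E u (u + s * c)) (d u * c) 0 := by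
    have := HasDerivAt.comp (0:ℝ)
      (show HasDerivAt (fun y => E u y) (d u) ((fun s : ℝ => u + s * c) 0) by simpa using hder)
      hline
    simpa [Function.comp_def] using this
  have hslope : Tendsto (fun s : ℝ => (E u (u + s * c)) / s) (𝓝[>] (0:ℝ)) (𝓝 (d u * c)) := by
    have h1 := hasDerivAt_iff_tendsto_slope.mp hcomp
    have h2 : Tendsto (slope (fun s : ℝ => E u (u + s * c)) 0) (𝓝[>] (0:ℝ)) (𝓝 (d u * c)) :=
      h1.mono_left (nhdsWithin_mono 0 (fun x hx => ne_of_gt hx))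
    refine h2.congr' ?_
    filter_upwards [self_mem_nhdsWithin] with s hs
    simp [slope_def_field, h0]
  have htend : Tendsto (fun s : ℝ => u + s * c) (𝓝[>] (0:ℝ)) (𝓝 u) := by
    have : Tendsto (fun s : ℝ => u + s * c) (𝓝 (0:ℝ)) (𝓝 u) := by
      have hcc : Continuous (fun s : ℝ => u + s * c) := by continuity
      simpa using hcc.tendsto (0:ℝ)
    exact this.mono_left nhdsWithin_le_nhds
  have hcontp : Tendsto (fun s : ℝ => E p (u + s * c)) (𝓝[>] (0:ℝ)) (𝓝 (E p u)) :=
    (((hEn.2.1 p hp).continuousAt (hIo.mem_nhds hu)).tendsto).comp htend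
  exact hcontp.add hslope

/-- Eventually, `u + s*(E* + ε)` lies in `I` and the weighted 2-point `e`-value there
is negative. -/
lemma fwd_upper_pt (hIo : IsOpen I) (hEn : IsNormalizable I E d)
    {p u : ℝ} (hp : p ∈ I) (hu : u ∈ I) {ε : ℝ} (hε : 0 < ε) :
    ∀ᶠ s in 𝓝[>] (0:ℝ), (u + s * (nrm E d p u + ε) ∈ I ∧
      s * E p (u + s * (nrm E d p u + ε)) + E u (u + s * (nrm E d p u + ε)) < 0) := by
  set c := nrm E d p u + ε with hc
  have hdu : d u < 0 := hEn.2.2.2.1 u hu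
  have hlim := tendsto_ratio hIo hEn hp hu c
  have hval : E p u + d u * c = ε * d u := by
    have hdne : -(d u) ≠ 0 := by simpa using ne_of_lt hdu
    rw [hc]
    unfold nrm
    have h1 : (-d u)⁻¹ * d u = -1 := by
      have h2 : (-d u)⁻¹ * (-d u) = 1 := inv_mul_cancel₀ hdne
      linear_combination -h2
    rw [div_eq_mul_inv, mul_add, mul_comm (d u) (E p u * (-(d u))⁻¹), mul_assoc, h1]
    ring
  have hneg : E p u + d u * c < 0 := by rw [hval]; exact mul_neg_of_pos_of_neg hε hdu
  have hev1 : ∀ᶠ s in 𝓝[>] (0:ℝ),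
      E p (u + s * c) + (E u (u + s * c)) / s < 0 :=
    hlim.eventually_lt_const hneg
  have hev2 : ∀ᶠ s in 𝓝[>] (0:ℝ), u + s * c ∈ I := by
    have htend : Tendsto (fun s : ℝ => u + s * c) (𝓝 (0:ℝ)) (𝓝 u) := by
      have hcc : Continuous (fun s : ℝ => u + s * c) := by continuity
      simpa using hcc.tendsto (0:ℝ)
    exact (htend.eventually (hIo.mem_nhds hu)).filter_mono nhdsWithin_le_nhds
  filter_upwards [hev1, hev2, self_mem_nhdsWithin] with s h1 h2 hs
  refine ⟨h2, ?_⟩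
  have hs' : (0:ℝ) < s := hs
  have : s * (E p (u + s * c) + (E u (u + s * c)) / s) < 0 := mul_neg_of_pos_of_neg hs' h1
  have heq : s * (E p (u + s * c) + (E u (u + s * c)) / s)
      = s * E p (u + s * c) + E u (u + s * c) := by
    field_simp
  linarith [heq ▸ this]

/-- Eventually, `u + s*(E* - ε)` lies in `I` and the weighted 2-point `e`-value there
is positive. -/
lemma fwd_lower_pt (hIo : IsOpen I) (hEn : IsNormalizable I E d)
    {p u : ℝ} (hp : p ∈ I) (hu : u ∈ I) {ε : ℝ} (hε : 0 < ε) :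
    ∀ᶠ s in 𝓝[>] (0:ℝ), (u + s * (nrm E d p u - ε) ∈ I ∧
      0 < s * E p (u + s * (nrm E d p u - ε)) + E u (u + s * (nrm E d p u - ε))) := by
  set c := nrm E d p u - ε with hc
  have hdu : d u < 0 := hEn.2.2.2.1 u hu
  have hlim := tendsto_ratio hIo hEn hp hu c
  have hval : E p u + d u * c = -(ε * d u) := by
    have hdne : -(d u) ≠ 0 := by simpa using ne_of_lt hdu
    rw [hc]
    unfold nrm
    have h1 : (-d u)⁻¹ * d u = -1 := by
      have h2 : (-d u)⁻¹ * (-d u) = 1 := inv_mul_cancel₀ hdne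
      linear_combination -h2
    rw [sub_eq_add_neg, div_eq_mul_inv, mul_add, mul_comm (d u) (E p u * (-(d u))⁻¹), mul_assoc, h1]
    ring
  have hpos : 0 < E p u + d u * c := by
    rw [hval]; simpa using mul_neg_of_pos_of_neg hε hdu
  have hev1 : ∀ᶠ s in 𝓝[>] (0:ℝ),
      0 < E p (u + s * c) + (E u (u + s * c)) / s :=
    hlim.eventually_const_lt hpos
  have hev2 : ∀ᶠ s in 𝓝[>] (0:ℝ), u + s * c ∈ I := by
    have htend : Tendsto (fun s : ℝ => u + s * c) (𝓝 (0:ℝ)) (𝓝 u) := by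
      have hcc : Continuous (fun s : ℝ => u + s * c) := by continuity
      simpa using hcc.tendsto (0:ℝ)
    exact (htend.eventually (hIo.mem_nhds hu)).filter_mono nhdsWithin_le_nhds
  filter_upwards [hev1, hev2, self_mem_nhdsWithin] with s h1 h2 hs
  refine ⟨h2, ?_⟩
  have hs' : (0:ℝ) < s := hs
  have : 0 < s * (E p (u + s * c) + (E u (u + s * c)) / s) := mul_pos hs' h1
  have heq : s * (E p (u + s * c) + (E u (u + s * c)) / s)
      = s * E p (u + s * c) + E u (u + s * c) := by
    field_simp
  linarith [heq ▸ this]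

end SDP6
namespace SDP7
open Set Filter Topology SDP SDP2 SDP3

variable {I : Set ℝ} {E : ℝ → ℝ → ℝ} {d : ℝ → ℝ}

lemma mono_aux {B η r₁ r₂ : ℝ} (hB : 0 < B) (hη : |η| < B) (h : r₁ ≤ r₂) :
    r₁ * B + η * |r₁| ≤ r₂ * B + η * |r₂| := by
  rcases abs_cases r₁ with ⟨e1, s1⟩ | ⟨e1, s1⟩ <;>
  rcases abs_cases r₂ with ⟨e2, s2⟩ | ⟨e2, s2⟩ <;>
  rcases abs_cases η with ⟨e3, s3⟩ | ⟨e3, s3⟩ <;>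
  rw [e1, e2] <;> nlinarith

lemma fwd_upper_all (hI : I.OrdConnected) (hIo : IsOpen I) (hEn : IsNormalizable I E d)
    {p u : ℝ} (hp : p ∈ I) (hu : u ∈ I) {ε : ℝ} (hε : 0 < ε) :
    ∃ s₀ > 0, ∀ s, 0 < s → s < s₀ → ∀ t ∈ I, u + s * (nrm E d p u + ε) < t →
      s * E p t + E u t < 0 := by
  obtain ⟨c, hc⟩ : ∃ c, c = nrm E d p u + ε := ⟨_, rfl⟩
  rw [← hc]
  obtain ⟨B, hB⟩ : ∃ B, B = -(d u) := ⟨_, rfl⟩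
  have hdu : d u < 0 := hEn.2.2.2.1 u hu
  have hBpos : 0 < B := by rw [hB]; linarith
  have h0 : E u u = 0 := sd_diag hIo hEn.1 hEn.2.1 hu
  obtain ⟨η, hηdef⟩ : ∃ η, η = min (ε * B / (2 * (1 + |c|))) (B / 2) := ⟨_, rfl⟩
  have hc1pos : (0:ℝ) < 1 + |c| := by positivity
  have hηpos : 0 < η := hηdef ▸ lt_min (by positivity) (by positivity)
  have hηB : η < B := hηdef ▸ lt_of_le_of_lt (min_le_right _ _) (by linarith)
  have hηε : η * (1 + |c|) ≤ ε * B / 2 := by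
    have h1 : η ≤ ε * B / (2 * (1 + |c|)) := hηdef ▸ min_le_left _ _
    calc η * (1 + |c|) ≤ ε * B / (2 * (1 + |c|)) * (1 + |c|) := by nlinarith
      _ = ε * B / 2 := by field_simp
  have hcB : c * B = E p u + ε * B := by
    rw [hc, nrm, ← hB]
    field_simp
  have hder : HasDerivAt (fun y => E u y) (d u) u :=
    (hEn.2.2.1 u hu).hasDerivAt (hIo.mem_nhds hu)
  have hlo := (hasDerivAt_iff_isLittleO.mp hder).def hηpos
  rw [Metric.eventually_nhds_iff] at hlo
  obtain ⟨δ₁, hδ₁, hd1⟩ := hlo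
  have hEub : ∀ t : ℝ, |t - u| < δ₁ → E u t ≤ (t - u) * d u + η * |t - u| := by
    intro t ht
    have h2 := hd1 (show dist t u < δ₁ by rwa [Real.dist_eq])
    rw [h0] at h2
    simp only [Real.norm_eq_abs, smul_eq_mul, sub_zero] at h2
    have habs := (abs_le.mp h2).2
    nlinarith
  have hcp : ContinuousAt (fun y => E p y) u := (hEn.2.1 p hp).continuousAt (hIo.mem_nhds hu)
  have hcp2 : ∀ᶠ t in 𝓝 u, E p t < E p u + η :=
    hcp.eventually_lt_const (by linarith)
  rw [Metric.eventually_nhds_iff] at hcp2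
  obtain ⟨δ₂, hδ₂, hd2⟩ := hcp2
  obtain ⟨ρ, hρ, hball⟩ := Metric.isOpen_iff.1 hIo u hu
  obtain ⟨δ, hδdef⟩ : ∃ δ, δ = min δ₁ (min δ₂ ρ) := ⟨_, rfl⟩
  have hδpos : 0 < δ := hδdef ▸ lt_min hδ₁ (lt_min hδ₂ hρ)
  have hδ1 : δ ≤ δ₁ := hδdef ▸ min_le_left _ _
  have hδ2 : δ ≤ δ₂ := hδdef ▸ (min_le_right _ _).trans (min_le_left _ _)
  have hδρ : δ ≤ ρ := hδdef ▸ (min_le_right _ _).trans (min_le_right _ _)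
  obtain ⟨T, hT⟩ : ∃ T, T = max p u := ⟨_, rfl⟩
  have hTI : T ∈ I := by
    rcases max_cases p u with ⟨h1, -⟩ | ⟨h1, -⟩ <;> rw [hT, h1] <;> assumption
  have hmemδ : u + δ/2 ∈ I := mem_of_abs_lt hball (by
    rw [add_sub_cancel_left, abs_of_pos (by linarith)]; linarith)
  have hregb : ∃ s₁ > 0, ∀ s, 0 < s → s < s₁ → ∀ t, u + δ/2 ≤ t → t ≤ T →
      s * E p t + E u t < 0 := by
    rcases le_or_gt (u + δ/2) T with hbT | hbT
    · have hsub : Icc (u + δ/2) T ⊆ I := fun z hz => hI.out hmemδ hTI hz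
      obtain ⟨tM, htM, hM⟩ := isCompact_Icc.exists_isMaxOn (nonempty_Icc.mpr hbT)
        ((hEn.2.1 p hp).mono hsub)
      obtain ⟨tm, htm, hm⟩ := isCompact_Icc.exists_isMaxOn (nonempty_Icc.mpr hbT)
        ((hEn.2.1 u hu).mono hsub)
      have hneg : E u tm < 0 := sd_of_gt hEn.1 hu (hsub htm) (by
        have := htm.1; linarith)
      refine ⟨(-(E u tm)) / (|E p tM| + 1), div_pos (by linarith) (by positivity), ?_⟩
      intro s hs hss t h1 h2
      have hup : E p t ≤ E p tM := hM ⟨h1, h2⟩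
      have hum : E u t ≤ E u tm := hm ⟨h1, h2⟩
      have hss' : s * (|E p tM| + 1) < -(E u tm) := by
        rw [div_eq_mul_inv] at hss
        have habs : (0:ℝ) < |E p tM| + 1 := by positivity
        calc s * (|E p tM| + 1) < -(E u tm) * (|E p tM| + 1)⁻¹ * (|E p tM| + 1) := by nlinarith
          _ = -(E u tm) := by field_simp
      have h3 : s * E p t ≤ s * |E p tM| :=
        mul_le_mul_of_nonneg_left (hup.trans (le_abs_self _)) hs.le
      nlinarith
    · exact ⟨1, one_pos, fun s hs hss t h1 h2 => absurd (h1.trans h2) (not_le.mpr hbT)⟩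
  obtain ⟨s₁, hs₁pos, hregb⟩ := hregb
  refine ⟨min s₁ (δ / (2 * (1 + |c|))), lt_min hs₁pos (div_pos hδpos (by positivity)), ?_⟩
  intro s hs hss t htI hgt
  have hss1 : s < s₁ := lt_of_lt_of_le hss (min_le_left _ _)
  have hssδ : s * (1 + |c|) < δ / 2 := by
    have h2 := lt_of_lt_of_le hss (min_le_right _ _)
    calc s * (1 + |c|) < δ / (2 * (1 + |c|)) * (1 + |c|) := by nlinarith
      _ = δ / 2 := by field_simp
  have habsc : -(δ/2) < s * c := by
    have h1 : s * (-|c|) ≤ s * c := mul_le_mul_of_nonneg_left (neg_abs_le c) hs.le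
    have h2 : s * |c| ≤ s * (1 + |c|) :=
      mul_le_mul_of_nonneg_left (by linarith [abs_nonneg c]) hs.le
    linarith
  rcases le_or_gt t (u + δ/2) with hta | hta
  · -- region (a): near u
    have hsc_lt : s * c < t - u := by linarith
    have habs : |t - u| < δ := by
      rw [abs_lt]
      refine ⟨by linarith, by linarith⟩
    have h1 : E u t ≤ (t - u) * d u + η * |t - u| := hEub t (lt_of_lt_of_le habs hδ1)
    have h2 : E p t < E p u + η := hd2 (show dist t u < δ₂ by
      rw [Real.dist_eq]; exact lt_of_lt_of_le habs hδ2)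
    have hmono := mono_aux hBpos
      (show |(-η)| < B by rwa [abs_neg, abs_of_pos hηpos]) hsc_lt.le
    have hscabs : |s * c| = s * |c| := by rw [abs_mul, abs_of_pos hs]
    have hEut2 : E u t ≤ -(s * c * B) + η * (s * |c|) := by
      have hd : (t - u) * d u = -((t - u) * B) := by rw [hB]; ring
      rw [hd] at h1
      rw [hscabs] at hmono
      linarith
    have h3 : s * E p t < s * (E p u + η) := mul_lt_mul_of_pos_left h2 hs
    have h4 : s * (c * B) = s * E p u + s * (ε * B) := by rw [hcB]; ring
    have h5 : s * (η * (1 + |c|)) ≤ s * (ε * B / 2) :=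
      mul_le_mul_of_nonneg_left hηε hs.le
    have h6 : 0 < s * (ε * B) := mul_pos hs (mul_pos hε hBpos)
    linarith
  · rcases le_or_gt t T with htb | htc
    · exact hregb s hs hss1 t hta.le htb
    · have hp' : E p t < 0 := sd_of_gt hEn.1 hp htI (by
        have h7 : p ≤ T := hT ▸ le_max_left p u; linarith)
      have hu' : E u t < 0 := sd_of_gt hEn.1 hu htI (by
        have h7 : u ≤ T := hT ▸ le_max_right p u; linarith)
      have h8 : s * E p t < 0 := mul_neg_of_pos_of_neg hs hp'
      linarith

end SDP7

namespace SDP7B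
open Set Filter Topology SDP SDP2 SDP3 SDP7

variable {I : Set ℝ} {E : ℝ → ℝ → ℝ} {d : ℝ → ℝ}

lemma fwd_lower_all (hI : I.OrdConnected) (hIo : IsOpen I) (hEn : IsNormalizable I E d)
    {p u : ℝ} (hp : p ∈ I) (hu : u ∈ I) {ε : ℝ} (hε : 0 < ε) :
    ∃ s₀ > 0, ∀ s, 0 < s → s < s₀ → ∀ t ∈ I, t < u + s * (nrm E d p u - ε) →
      0 < s * E p t + E u t := by
  obtain ⟨c, hc⟩ : ∃ c, c = nrm E d p u - ε := ⟨_, rfl⟩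
  rw [← hc]
  obtain ⟨B, hB⟩ : ∃ B, B = -(d u) := ⟨_, rfl⟩
  have hdu : d u < 0 := hEn.2.2.2.1 u hu
  have hBpos : 0 < B := by rw [hB]; linarith
  have h0 : E u u = 0 := sd_diag hIo hEn.1 hEn.2.1 hu
  obtain ⟨η, hηdef⟩ : ∃ η, η = min (ε * B / (2 * (1 + |c|))) (B / 2) := ⟨_, rfl⟩
  have hc1pos : (0:ℝ) < 1 + |c| := by positivity
  have hηpos : 0 < η := hηdef ▸ lt_min (by positivity) (by positivity)
  have hηB : η < B := hηdef ▸ lt_of_le_of_lt (min_le_right _ _) (by linarith)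
  have hηε : η * (1 + |c|) ≤ ε * B / 2 := by
    have h1 : η ≤ ε * B / (2 * (1 + |c|)) := hηdef ▸ min_le_left _ _
    calc η * (1 + |c|) ≤ ε * B / (2 * (1 + |c|)) * (1 + |c|) := by nlinarith
      _ = ε * B / 2 := by field_simp
  have hcB : c * B = E p u - ε * B := by
    rw [hc, nrm, ← hB]
    field_simp
  have hder : HasDerivAt (fun y => E u y) (d u) u :=
    (hEn.2.2.1 u hu).hasDerivAt (hIo.mem_nhds hu)
  have hlo := (hasDerivAt_iff_isLittleO.mp hder).def hηpos
  rw [Metric.eventually_nhds_iff] at hlo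
  obtain ⟨δ₁, hδ₁, hd1⟩ := hlo
  have hElb : ∀ t : ℝ, |t - u| < δ₁ → (t - u) * d u - η * |t - u| ≤ E u t := by
    intro t ht
    have h2 := hd1 (show dist t u < δ₁ by rwa [Real.dist_eq])
    rw [h0] at h2
    simp only [Real.norm_eq_abs, smul_eq_mul, sub_zero] at h2
    have habs := (abs_le.mp h2).1
    nlinarith
  have hcp : ContinuousAt (fun y => E p y) u := (hEn.2.1 p hp).continuousAt (hIo.mem_nhds hu)
  have hcp2 : ∀ᶠ t in 𝓝 u, E p u - η < E p t :=
    hcp.eventually_const_lt (by linarith)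
  rw [Metric.eventually_nhds_iff] at hcp2
  obtain ⟨δ₂, hδ₂, hd2⟩ := hcp2
  obtain ⟨ρ, hρ, hball⟩ := Metric.isOpen_iff.1 hIo u hu
  obtain ⟨δ, hδdef⟩ : ∃ δ, δ = min δ₁ (min δ₂ ρ) := ⟨_, rfl⟩
  have hδpos : 0 < δ := hδdef ▸ lt_min hδ₁ (lt_min hδ₂ hρ)
  have hδ1 : δ ≤ δ₁ := hδdef ▸ min_le_left _ _
  have hδ2 : δ ≤ δ₂ := hδdef ▸ (min_le_right _ _).trans (min_le_left _ _)
  have hδρ : δ ≤ ρ := hδdef ▸ (min_le_right _ _).trans (min_le_right _ _)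
  obtain ⟨T, hT⟩ : ∃ T, T = min p u := ⟨_, rfl⟩
  have hTI : T ∈ I := by
    rcases min_cases p u with ⟨h1, -⟩ | ⟨h1, -⟩ <;> rw [hT, h1] <;> assumption
  have hmemδ : u - δ/2 ∈ I := mem_of_abs_lt hball (by
    rw [show u - δ/2 - u = -(δ/2) by ring, abs_neg, abs_of_pos (by linarith)]; linarith)
  have hregb : ∃ s₁ > 0, ∀ s, 0 < s → s < s₁ → ∀ t, T ≤ t → t ≤ u - δ/2 →
      0 < s * E p t + E u t := by
    rcases le_or_gt T (u - δ/2) with hbT | hbT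
    · have hsub : Icc T (u - δ/2) ⊆ I := fun z hz => hI.out hTI hmemδ hz
      obtain ⟨tM, htM, hM⟩ := isCompact_Icc.exists_isMinOn (nonempty_Icc.mpr hbT)
        ((hEn.2.1 p hp).mono hsub)
      obtain ⟨tm, htm, hm⟩ := isCompact_Icc.exists_isMinOn (nonempty_Icc.mpr hbT)
        ((hEn.2.1 u hu).mono hsub)
      have hposm : 0 < E u tm := sd_of_lt hEn.1 hu (hsub htm) (by
        have := htm.2; linarith)
      refine ⟨(E u tm) / (|E p tM| + 1), div_pos hposm (by positivity), ?_⟩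
      intro s hs hss t h1 h2
      have hup : E p tM ≤ E p t := hM ⟨h1, h2⟩
      have hum : E u tm ≤ E u t := hm ⟨h1, h2⟩
      have hss' : s * (|E p tM| + 1) < E u tm := by
        rw [div_eq_mul_inv] at hss
        have habs : (0:ℝ) < |E p tM| + 1 := by positivity
        calc s * (|E p tM| + 1) < E u tm * (|E p tM| + 1)⁻¹ * (|E p tM| + 1) := by nlinarith
          _ = E u tm := by field_simp
      have h3 : s * (-|E p tM|) ≤ s * E p t :=
        mul_le_mul_of_nonneg_left ((neg_abs_le _).trans hup) hs.le
      nlinarith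
    · exact ⟨1, one_pos, fun s hs hss t h1 h2 => absurd (h1.trans h2) (not_le.mpr hbT)⟩
  obtain ⟨s₁, hs₁pos, hregb⟩ := hregb
  refine ⟨min s₁ (δ / (2 * (1 + |c|))), lt_min hs₁pos (div_pos hδpos (by positivity)), ?_⟩
  intro s hs hss t htI hlt
  have hss1 : s < s₁ := lt_of_lt_of_le hss (min_le_left _ _)
  have hssδ : s * (1 + |c|) < δ / 2 := by
    have h2 := lt_of_lt_of_le hss (min_le_right _ _)
    calc s * (1 + |c|) < δ / (2 * (1 + |c|)) * (1 + |c|) := by nlinarith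
      _ = δ / 2 := by field_simp
  have habsc : s * c < δ/2 := by
    have h1 : s * c ≤ s * |c| := mul_le_mul_of_nonneg_left (le_abs_self c) hs.le
    have h2 : s * |c| ≤ s * (1 + |c|) :=
      mul_le_mul_of_nonneg_left (by linarith [abs_nonneg c]) hs.le
    linarith
  rcases le_or_gt (u - δ/2) t with hta | hta
  · -- region (a): near u
    have hsc_gt : t - u < s * c := by linarith
    have habs : |t - u| < δ := by
      rw [abs_lt]
      refine ⟨by linarith, by linarith⟩
    have h1 : (t - u) * d u - η * |t - u| ≤ E u t := hElb t (lt_of_lt_of_le habs hδ1)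
    have h2 : E p u - η < E p t := hd2 (show dist t u < δ₂ by
      rw [Real.dist_eq]; exact lt_of_lt_of_le habs hδ2)
    have hmono := mono_aux hBpos
      (show |η| < B by rwa [abs_of_pos hηpos]) hsc_gt.le
    have hscabs : |s * c| = s * |c| := by rw [abs_mul, abs_of_pos hs]
    have hEut2 : -(s * c * B) - η * (s * |c|) ≤ E u t := by
      have hd : (t - u) * d u = -((t - u) * B) := by rw [hB]; ring
      rw [hd] at h1
      rw [hscabs] at hmono
      linarith
    have h3 : s * (E p u - η) < s * E p t := mul_lt_mul_of_pos_left h2 hs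
    have h4 : s * (c * B) = s * E p u - s * (ε * B) := by rw [hcB]; ring
    have h5 : s * (η * (1 + |c|)) ≤ s * (ε * B / 2) :=
      mul_le_mul_of_nonneg_left hηε hs.le
    have h6 : 0 < s * (ε * B) := mul_pos hs (mul_pos hε hBpos)
    linarith
  · rcases le_or_gt T t with htb | htc
    · exact hregb s hs hss1 t htb hta.le
    · have hp' : 0 < E p t := sd_of_lt hEn.1 hp htI (by
        have h7 : T ≤ p := hT ▸ min_le_left p u; linarith)
      have hu' : 0 < E u t := sd_of_lt hEn.1 hu htI (by
        have h7 : T ≤ u := hT ▸ min_le_right p u; linarith)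
      have h8 : 0 < s * E p t := mul_pos hs hp'
      linarith

end SDP7B
namespace SDP8
open Set Filter Topology SDP SDP2 SDP3

variable {I : Set ℝ} {E : ℝ → ℝ → ℝ} {d : ℝ → ℝ}

lemma eFun_two (E : ℝ → ℝ → ℝ) (a b s t : ℝ) :
    eFun E ![a, b] ![s, 1] t = s * E a t + E b t := by
  simp [eFun, Fin.sum_univ_two]

lemma weight_two {s : ℝ} (hs : 0 < s) : IsWeight ![s, (1:ℝ)] := by
  constructor
  · intro i
    fin_cases i <;> simp <;> linarith
  · simp [Fin.sum_univ_two]; linarith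

lemma mem_two {J : Set ℝ} {p u : ℝ} (hp : p ∈ J) (hu : u ∈ J) : ∀ i, ![p, u] i ∈ J := by
  intro i; fin_cases i <;> simpa

section pts
variable (hI : I.OrdConnected) (hIo : IsOpen I) (hsd : IsSemideviation I E)
  (hcE : ∀ x ∈ I, ContinuousOn (fun y => E x y) I)
  {n : ℕ} {x lam : Fin n → ℝ} (hx : ∀ i, x i ∈ I) (hlam : IsWeight lam)

include hI hIo hsd hcE hx hlam

lemma LLD_le_point {θ : ℝ} (hmem : θ ∈ I) (hval : eFun E x lam θ ≤ 0) :
    LLD I E x lam ≤ θ := by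
  obtain ⟨-, hbdd, -, -⟩ := sInf_facts hI hIo hsd hcE hx hlam
    (S := {t | t ∈ I ∧ eFun E x lam t ≤ 0}) (fun t ht => ⟨ht.1, ht.2.le⟩) subset_rfl
  exact csInf_le hbdd ⟨hmem, hval⟩

lemma LD_le_point {θ : ℝ} (hmem : θ ∈ I) (hval : eFun E x lam θ < 0) :
    LD I E x lam ≤ θ := by
  obtain ⟨-, hbdd, -, -⟩ := sInf_facts hI hIo hsd hcE hx hlam
    (S := {t | t ∈ I ∧ eFun E x lam t < 0}) subset_rfl (fun t ht => ⟨ht.1, ht.2.le⟩)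
  exact csInf_le hbdd ⟨hmem, hval⟩

lemma point_le_LLD {θ : ℝ} (hglob : ∀ t ∈ I, t < θ → 0 < eFun E x lam t) :
    θ ≤ LLD I E x lam := by
  obtain ⟨hne, -, -, -⟩ := sInf_facts hI hIo hsd hcE hx hlam
    (S := {t | t ∈ I ∧ eFun E x lam t ≤ 0}) (fun t ht => ⟨ht.1, ht.2.le⟩) subset_rfl
  refine le_csInf hne (fun t ht => ?_)
  by_contra hcon
  push_neg at hcon
  exact absurd ht.2 (not_le.mpr (hglob t ht.1 hcon))

lemma point_le_LD {θ : ℝ} (hglob : ∀ t ∈ I, t < θ → 0 < eFun E x lam t) :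
    θ ≤ LD I E x lam := by
  obtain ⟨hne, -, -, -⟩ := sInf_facts hI hIo hsd hcE hx hlam
    (S := {t | t ∈ I ∧ eFun E x lam t < 0}) subset_rfl (fun t ht => ⟨ht.1, ht.2.le⟩)
  refine le_csInf hne (fun t ht => ?_)
  by_contra hcon
  push_neg at hcon
  exact absurd ht.2 (not_lt.mpr (hglob t ht.1 hcon).le)

lemma UUD_le_point {θ : ℝ} (hglob : ∀ t ∈ I, θ < t → eFun E x lam t < 0) :
    UUD I E x lam ≤ θ := by
  obtain ⟨hne, -, -, -⟩ := sSup_facts hI hIo hsd hcE hx hlam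
    (S := {t | t ∈ I ∧ 0 ≤ eFun E x lam t}) (fun t ht => ⟨ht.1, ht.2.le⟩) subset_rfl
  refine csSup_le hne (fun t ht => ?_)
  by_contra hcon
  push_neg at hcon
  exact absurd ht.2 (not_le.mpr (hglob t ht.1 hcon))

lemma UD_le_point {θ : ℝ} (hglob : ∀ t ∈ I, θ < t → eFun E x lam t < 0) :
    UD I E x lam ≤ θ := by
  obtain ⟨hne, -, -, -⟩ := sSup_facts hI hIo hsd hcE hx hlam
    (S := {t | t ∈ I ∧ 0 < eFun E x lam t}) subset_rfl (fun t ht => ⟨ht.1, ht.2.le⟩)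
  refine csSup_le hne (fun t ht => ?_)
  by_contra hcon
  push_neg at hcon
  exact absurd ht.2 (not_lt.mpr (hglob t ht.1 hcon).le)

lemma point_le_UUD {θ : ℝ} (hmem : θ ∈ I) (hval : 0 ≤ eFun E x lam θ) :
    θ ≤ UUD I E x lam := by
  obtain ⟨-, hbdd, -, -⟩ := sSup_facts hI hIo hsd hcE hx hlam
    (S := {t | t ∈ I ∧ 0 ≤ eFun E x lam t}) (fun t ht => ⟨ht.1, ht.2.le⟩) subset_rfl
  exact le_csSup hbdd ⟨hmem, hval⟩

lemma point_le_UD {θ : ℝ} (hmem : θ ∈ I) (hval : 0 < eFun E x lam θ) :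
    θ ≤ UD I E x lam := by
  obtain ⟨-, hbdd, -, -⟩ := sSup_facts hI hIo hsd hcE hx hlam
    (S := {t | t ∈ I ∧ 0 < eFun E x lam t}) subset_rfl (fun t ht => ⟨ht.1, ht.2.le⟩)
  exact le_csSup hbdd ⟨hmem, hval⟩

end pts

lemma eventually_lt_of_pos {s₀ : ℝ} (hs₀ : 0 < s₀) : ∀ᶠ s in 𝓝[>] (0:ℝ), s < s₀ := by
  filter_upwards [Ioo_mem_nhdsGT_of_mem (show (0:ℝ) ∈ Ico 0 s₀ from ⟨le_refl 0, hs₀⟩)]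
    with r hr using hr.2

end SDP8
namespace SDP9
open Set Filter Topology SDP SDP2 SDP3 SDP4 SDP5 SDP6 SDP7 SDP7B SDP8

variable {J K : Set ℝ} {E F G : ℝ → ℝ → ℝ} {dE dF dG : ℝ → ℝ}

section fwd
variable (hJ : J.OrdConnected) (hJo : IsOpen J) (hK : K.OrdConnected) (hKo : IsOpen K)
  (hEn : IsNormalizable (Set.image2 (· + ·) J K) E dE)
  (hFn : IsNormalizable J F dF) (hGn : IsNormalizable K G dG)

include hJ hJo hK hKo hEn hFn hGn

lemma fwd_LLD
    (H : ∀ (n : ℕ) (x y lam : Fin n → ℝ), (∀ i, x i ∈ J) → (∀ i, y i ∈ K) → IsWeight lam →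
        LLD (Set.image2 (· + ·) J K) E (fun i => x i + y i) lam
          ≤ LLD J F x lam + LLD K G y lam) :
    ∀ p ∈ J, ∀ u ∈ J, ∀ q ∈ K, ∀ v ∈ K,
        nrm E dE (p + q) (u + v) ≤ nrm F dF p u + nrm G dG q v := by
  intro p hp u hu q hq v hv
  have hI := image2_ordConnected hJ hK
  have hIo : IsOpen (Set.image2 (· + ·) J K) := image2_isOpen hJo
  have hpq : p + q ∈ Set.image2 (· + ·) J K := mem_image2_of_mem hp hq
  have huv : u + v ∈ Set.image2 (· + ·) J K := mem_image2_of_mem hu hv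
  refine le_of_forall_pos_le_add (fun ε hε => ?_)
  have hε3 : 0 < ε/3 := by linarith
  obtain ⟨s₀, hs₀pos, hEall⟩ := fwd_lower_all hI hIo hEn hpq huv hε3
  obtain ⟨s, ⟨⟨⟨hFmem, hFval⟩, hGmem, hGval⟩, hslt⟩, hsmem⟩ :=
    ((((fwd_upper_pt hJo hFn hp hu hε3).and (fwd_upper_pt hKo hGn hq hv hε3)).and
      (eventually_lt_of_pos hs₀pos)).and self_mem_nhdsWithin).exists
  have hs : (0:ℝ) < s := hsmem
  have hw := weight_two hs
  have hx2 := mem_two hp hu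
  have hy2 := mem_two hq hv
  have hfun : (fun i => ![p, u] i + ![q, v] i) = ![p + q, u + v] := by
    funext i; fin_cases i <;> simp
  have hchain := H 2 ![p, u] ![q, v] ![s, 1] hx2 hy2 hw
  rw [hfun] at hchain
  have hFle : LLD J F ![p, u] ![s, 1] ≤ u + s * (nrm F dF p u + ε/3) :=
    LLD_le_point hJ hJo hFn.1 hFn.2.1 hx2 hw hFmem (by rw [eFun_two]; exact hFval.le)
  have hGle : LLD K G ![q, v] ![s, 1] ≤ v + s * (nrm G dG q v + ε/3) :=
    LLD_le_point hK hKo hGn.1 hGn.2.1 hy2 hw hGmem (by rw [eFun_two]; exact hGval.le)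
  have hEge : (u + v) + s * (nrm E dE (p + q) (u + v) - ε/3)
      ≤ LLD (Set.image2 (· + ·) J K) E ![p + q, u + v] ![s, 1] :=
    point_le_LLD hI hIo hEn.1 hEn.2.1 (mem_two hpq huv) hw (fun t htI htlt => by
      rw [eFun_two]; exact hEall s hs hslt t htI htlt)
  have hnum : s * (nrm E dE (p + q) (u + v) - ε/3)
      ≤ s * (nrm F dF p u + nrm G dG q v + 2*(ε/3)) := by linarith
  have := (mul_le_mul_iff_right₀ hs).mp hnum
  linarith

lemma fwd_LD
    (H : ∀ (n : ℕ) (x y lam : Fin n → ℝ), (∀ i, x i ∈ J) → (∀ i, y i ∈ K) → IsWeight lam →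
        LD (Set.image2 (· + ·) J K) E (fun i => x i + y i) lam
          ≤ LD J F x lam + LD K G y lam) :
    ∀ p ∈ J, ∀ u ∈ J, ∀ q ∈ K, ∀ v ∈ K,
        nrm E dE (p + q) (u + v) ≤ nrm F dF p u + nrm G dG q v := by
  intro p hp u hu q hq v hv
  have hI := image2_ordConnected hJ hK
  have hIo : IsOpen (Set.image2 (· + ·) J K) := image2_isOpen hJo
  have hpq : p + q ∈ Set.image2 (· + ·) J K := mem_image2_of_mem hp hq
  have huv : u + v ∈ Set.image2 (· + ·) J K := mem_image2_of_mem hu hv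
  refine le_of_forall_pos_le_add (fun ε hε => ?_)
  have hε3 : 0 < ε/3 := by linarith
  obtain ⟨s₀, hs₀pos, hEall⟩ := fwd_lower_all hI hIo hEn hpq huv hε3
  obtain ⟨s, ⟨⟨⟨hFmem, hFval⟩, hGmem, hGval⟩, hslt⟩, hsmem⟩ :=
    ((((fwd_upper_pt hJo hFn hp hu hε3).and (fwd_upper_pt hKo hGn hq hv hε3)).and
      (eventually_lt_of_pos hs₀pos)).and self_mem_nhdsWithin).exists
  have hs : (0:ℝ) < s := hsmem
  have hw := weight_two hs
  have hx2 := mem_two hp hu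
  have hy2 := mem_two hq hv
  have hfun : (fun i => ![p, u] i + ![q, v] i) = ![p + q, u + v] := by
    funext i; fin_cases i <;> simp
  have hchain := H 2 ![p, u] ![q, v] ![s, 1] hx2 hy2 hw
  rw [hfun] at hchain
  have hFle : LD J F ![p, u] ![s, 1] ≤ u + s * (nrm F dF p u + ε/3) :=
    LD_le_point hJ hJo hFn.1 hFn.2.1 hx2 hw hFmem (by rw [eFun_two]; exact hFval)
  have hGle : LD K G ![q, v] ![s, 1] ≤ v + s * (nrm G dG q v + ε/3) :=
    LD_le_point hK hKo hGn.1 hGn.2.1 hy2 hw hGmem (by rw [eFun_two]; exact hGval)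
  have hEge : (u + v) + s * (nrm E dE (p + q) (u + v) - ε/3)
      ≤ LD (Set.image2 (· + ·) J K) E ![p + q, u + v] ![s, 1] :=
    point_le_LD hI hIo hEn.1 hEn.2.1 (mem_two hpq huv) hw (fun t htI htlt => by
      rw [eFun_two]; exact hEall s hs hslt t htI htlt)
  have hnum : s * (nrm E dE (p + q) (u + v) - ε/3)
      ≤ s * (nrm F dF p u + nrm G dG q v + 2*(ε/3)) := by linarith
  have := (mul_le_mul_iff_right₀ hs).mp hnum
  linarith

lemma fwd_UD
    (H : ∀ (n : ℕ) (x y lam : Fin n → ℝ), (∀ i, x i ∈ J) → (∀ i, y i ∈ K) → IsWeight lam →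
        UD (Set.image2 (· + ·) J K) E (fun i => x i + y i) lam
          ≤ UD J F x lam + UD K G y lam) :
    ∀ p ∈ J, ∀ u ∈ J, ∀ q ∈ K, ∀ v ∈ K,
        nrm E dE (p + q) (u + v) ≤ nrm F dF p u + nrm G dG q v := by
  intro p hp u hu q hq v hv
  have hI := image2_ordConnected hJ hK
  have hIo : IsOpen (Set.image2 (· + ·) J K) := image2_isOpen hJo
  have hpq : p + q ∈ Set.image2 (· + ·) J K := mem_image2_of_mem hp hq
  have huv : u + v ∈ Set.image2 (· + ·) J K := mem_image2_of_mem hu hv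
  refine le_of_forall_pos_le_add (fun ε hε => ?_)
  have hε3 : 0 < ε/3 := by linarith
  obtain ⟨sF, hsFpos, hFall⟩ := fwd_upper_all hJ hJo hFn hp hu hε3
  obtain ⟨sG, hsGpos, hGall⟩ := fwd_upper_all hK hKo hGn hq hv hε3
  obtain ⟨s, ⟨⟨hEmem, hEval⟩, hsltF, hsltG⟩, hsmem⟩ :=
    (((fwd_lower_pt hIo hEn hpq huv hε3).and
      ((eventually_lt_of_pos hsFpos).and (eventually_lt_of_pos hsGpos))).and
        self_mem_nhdsWithin).exists
  have hs : (0:ℝ) < s := hsmem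
  have hw := weight_two hs
  have hx2 := mem_two hp hu
  have hy2 := mem_two hq hv
  have hfun : (fun i => ![p, u] i + ![q, v] i) = ![p + q, u + v] := by
    funext i; fin_cases i <;> simp
  have hchain := H 2 ![p, u] ![q, v] ![s, 1] hx2 hy2 hw
  rw [hfun] at hchain
  have hFle : UD J F ![p, u] ![s, 1] ≤ u + s * (nrm F dF p u + ε/3) :=
    UD_le_point hJ hJo hFn.1 hFn.2.1 hx2 hw (fun t htJ hgt => by
      rw [eFun_two]; exact hFall s hs hsltF t htJ hgt)
  have hGle : UD K G ![q, v] ![s, 1] ≤ v + s * (nrm G dG q v + ε/3) :=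
    UD_le_point hK hKo hGn.1 hGn.2.1 hy2 hw (fun t htK hgt => by
      rw [eFun_two]; exact hGall s hs hsltG t htK hgt)
  have hEge : (u + v) + s * (nrm E dE (p + q) (u + v) - ε/3)
      ≤ UD (Set.image2 (· + ·) J K) E ![p + q, u + v] ![s, 1] :=
    point_le_UD hI hIo hEn.1 hEn.2.1 (mem_two hpq huv) hw hEmem
      (by rw [eFun_two]; exact hEval)
  have hnum : s * (nrm E dE (p + q) (u + v) - ε/3)
      ≤ s * (nrm F dF p u + nrm G dG q v + 2*(ε/3)) := by linarith
  have := (mul_le_mul_iff_right₀ hs).mp hnum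
  linarith

lemma fwd_UUD
    (H : ∀ (n : ℕ) (x y lam : Fin n → ℝ), (∀ i, x i ∈ J) → (∀ i, y i ∈ K) → IsWeight lam →
        UUD (Set.image2 (· + ·) J K) E (fun i => x i + y i) lam
          ≤ UUD J F x lam + UUD K G y lam) :
    ∀ p ∈ J, ∀ u ∈ J, ∀ q ∈ K, ∀ v ∈ K,
        nrm E dE (p + q) (u + v) ≤ nrm F dF p u + nrm G dG q v := by
  intro p hp u hu q hq v hv
  have hI := image2_ordConnected hJ hK
  have hIo : IsOpen (Set.image2 (· + ·) J K) := image2_isOpen hJo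
  have hpq : p + q ∈ Set.image2 (· + ·) J K := mem_image2_of_mem hp hq
  have huv : u + v ∈ Set.image2 (· + ·) J K := mem_image2_of_mem hu hv
  refine le_of_forall_pos_le_add (fun ε hε => ?_)
  have hε3 : 0 < ε/3 := by linarith
  obtain ⟨sF, hsFpos, hFall⟩ := fwd_upper_all hJ hJo hFn hp hu hε3
  obtain ⟨sG, hsGpos, hGall⟩ := fwd_upper_all hK hKo hGn hq hv hε3
  obtain ⟨s, ⟨⟨hEmem, hEval⟩, hsltF, hsltG⟩, hsmem⟩ :=
    (((fwd_lower_pt hIo hEn hpq huv hε3).and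
      ((eventually_lt_of_pos hsFpos).and (eventually_lt_of_pos hsGpos))).and
        self_mem_nhdsWithin).exists
  have hs : (0:ℝ) < s := hsmem
  have hw := weight_two hs
  have hx2 := mem_two hp hu
  have hy2 := mem_two hq hv
  have hfun : (fun i => ![p, u] i + ![q, v] i) = ![p + q, u + v] := by
    funext i; fin_cases i <;> simp
  have hchain := H 2 ![p, u] ![q, v] ![s, 1] hx2 hy2 hw
  rw [hfun] at hchain
  have hFle : UUD J F ![p, u] ![s, 1] ≤ u + s * (nrm F dF p u + ε/3) :=
    UUD_le_point hJ hJo hFn.1 hFn.2.1 hx2 hw (fun t htJ hgt => by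
      rw [eFun_two]; exact hFall s hs hsltF t htJ hgt)
  have hGle : UUD K G ![q, v] ![s, 1] ≤ v + s * (nrm G dG q v + ε/3) :=
    UUD_le_point hK hKo hGn.1 hGn.2.1 hy2 hw (fun t htK hgt => by
      rw [eFun_two]; exact hGall s hs hsltG t htK hgt)
  have hEge : (u + v) + s * (nrm E dE (p + q) (u + v) - ε/3)
      ≤ UUD (Set.image2 (· + ·) J K) E ![p + q, u + v] ![s, 1] :=
    point_le_UUD hI hIo hEn.1 hEn.2.1 (mem_two hpq huv) hw hEmem
      (by rw [eFun_two]; exact hEval.le)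
  have hnum : s * (nrm E dE (p + q) (u + v) - ε/3)
      ≤ s * (nrm F dF p u + nrm G dG q v + 2*(ε/3)) := by linarith
  have := (mul_le_mul_iff_right₀ hs).mp hnum
  linarith

lemma fwd_v
    (H : ∀ (n : ℕ) (x y lam : Fin n → ℝ), (∀ i, x i ∈ J) → (∀ i, y i ∈ K) → IsWeight lam →
        LLD (Set.image2 (· + ·) J K) E (fun i => x i + y i) lam
          ≤ UUD J F x lam + UUD K G y lam) :
    ∀ p ∈ J, ∀ u ∈ J, ∀ q ∈ K, ∀ v ∈ K,
        nrm E dE (p + q) (u + v) ≤ nrm F dF p u + nrm G dG q v := by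
  intro p hp u hu q hq v hv
  have hI := image2_ordConnected hJ hK
  have hIo : IsOpen (Set.image2 (· + ·) J K) := image2_isOpen hJo
  have hpq : p + q ∈ Set.image2 (· + ·) J K := mem_image2_of_mem hp hq
  have huv : u + v ∈ Set.image2 (· + ·) J K := mem_image2_of_mem hu hv
  refine le_of_forall_pos_le_add (fun ε hε => ?_)
  have hε3 : 0 < ε/3 := by linarith
  obtain ⟨s₀, hs₀pos, hEall⟩ := fwd_lower_all hI hIo hEn hpq huv hε3
  obtain ⟨sF, hsFpos, hFall⟩ := fwd_upper_all hJ hJo hFn hp hu hε3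
  obtain ⟨sG, hsGpos, hGall⟩ := fwd_upper_all hK hKo hGn hq hv hε3
  obtain ⟨s, ⟨⟨hsltE, hsltF⟩, hsltG⟩, hsmem⟩ :=
    ((((eventually_lt_of_pos hs₀pos).and (eventually_lt_of_pos hsFpos)).and
      (eventually_lt_of_pos hsGpos)).and self_mem_nhdsWithin).exists
  have hs : (0:ℝ) < s := hsmem
  have hw := weight_two hs
  have hx2 := mem_two hp hu
  have hy2 := mem_two hq hv
  have hfun : (fun i => ![p, u] i + ![q, v] i) = ![p + q, u + v] := by
    funext i; fin_cases i <;> simp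
  have hchain := H 2 ![p, u] ![q, v] ![s, 1] hx2 hy2 hw
  rw [hfun] at hchain
  have hFle : UUD J F ![p, u] ![s, 1] ≤ u + s * (nrm F dF p u + ε/3) :=
    UUD_le_point hJ hJo hFn.1 hFn.2.1 hx2 hw (fun t htJ hgt => by
      rw [eFun_two]; exact hFall s hs hsltF t htJ hgt)
  have hGle : UUD K G ![q, v] ![s, 1] ≤ v + s * (nrm G dG q v + ε/3) :=
    UUD_le_point hK hKo hGn.1 hGn.2.1 hy2 hw (fun t htK hgt => by
      rw [eFun_two]; exact hGall s hs hsltG t htK hgt)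
  have hEge : (u + v) + s * (nrm E dE (p + q) (u + v) - ε/3)
      ≤ LLD (Set.image2 (· + ·) J K) E ![p + q, u + v] ![s, 1] :=
    point_le_LLD hI hIo hEn.1 hEn.2.1 (mem_two hpq huv) hw (fun t htI htlt => by
      rw [eFun_two]; exact hEall s hs hsltE t htI htlt)
  have hnum : s * (nrm E dE (p + q) (u + v) - ε/3)
      ≤ s * (nrm F dF p u + nrm G dG q v + 2*(ε/3)) := by linarith
  have := (mul_le_mul_iff_right₀ hs).mp hnum
  linarith

end fwd
end SDP9

/-- Minkowski-type inequalities: equivalence of the sum-of-means inequalities for the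
four semideviation means (on `I = J + K`, `J`, `K`) with the pointwise subadditivity of
the normalizations. -/
theorem statement15 (J K : Set ℝ)
    (hJ : J.OrdConnected) (hJo : IsOpen J)
    (hK : K.OrdConnected) (hKo : IsOpen K)
    (E F G : ℝ → ℝ → ℝ) (dE dF dG : ℝ → ℝ)
    (hE : IsNormalizable (Set.image2 (· + ·) J K) E dE)
    (hF : IsNormalizable J F dF) (hG : IsNormalizable K G dG) :
    ((∀ (n : ℕ) (x y lam : Fin n → ℝ), (∀ i, x i ∈ J) → (∀ i, y i ∈ K) → IsWeight lam →
        LLD (Set.image2 (· + ·) J K) E (fun i => x i + y i) lam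
          ≤ LLD J F x lam + LLD K G y lam) ↔
     (∀ p ∈ J, ∀ u ∈ J, ∀ q ∈ K, ∀ v ∈ K,
        nrm E dE (p + q) (u + v) ≤ nrm F dF p u + nrm G dG q v)) ∧
    ((∀ (n : ℕ) (x y lam : Fin n → ℝ), (∀ i, x i ∈ J) → (∀ i, y i ∈ K) → IsWeight lam →
        LD (Set.image2 (· + ·) J K) E (fun i => x i + y i) lam
          ≤ LD J F x lam + LD K G y lam) ↔
     (∀ p ∈ J, ∀ u ∈ J, ∀ q ∈ K, ∀ v ∈ K,
        nrm E dE (p + q) (u + v) ≤ nrm F dF p u + nrm G dG q v)) ∧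
    ((∀ (n : ℕ) (x y lam : Fin n → ℝ), (∀ i, x i ∈ J) → (∀ i, y i ∈ K) → IsWeight lam →
        UD (Set.image2 (· + ·) J K) E (fun i => x i + y i) lam
          ≤ UD J F x lam + UD K G y lam) ↔
     (∀ p ∈ J, ∀ u ∈ J, ∀ q ∈ K, ∀ v ∈ K,
        nrm E dE (p + q) (u + v) ≤ nrm F dF p u + nrm G dG q v)) ∧
    ((∀ (n : ℕ) (x y lam : Fin n → ℝ), (∀ i, x i ∈ J) → (∀ i, y i ∈ K) → IsWeight lam →
        UUD (Set.image2 (· + ·) J K) E (fun i => x i + y i) lam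
          ≤ UUD J F x lam + UUD K G y lam) ↔
     (∀ p ∈ J, ∀ u ∈ J, ∀ q ∈ K, ∀ v ∈ K,
        nrm E dE (p + q) (u + v) ≤ nrm F dF p u + nrm G dG q v)) ∧
    ((∀ (n : ℕ) (x y lam : Fin n → ℝ), (∀ i, x i ∈ J) → (∀ i, y i ∈ K) → IsWeight lam →
        LLD (Set.image2 (· + ·) J K) E (fun i => x i + y i) lam
          ≤ UUD J F x lam + UUD K G y lam) ↔
     (∀ p ∈ J, ∀ u ∈ J, ∀ q ∈ K, ∀ v ∈ K,
        nrm E dE (p + q) (u + v) ≤ nrm F dF p u + nrm G dG q v)) := by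
  refine ⟨⟨fun H => SDP9.fwd_LLD hJ hJo hK hKo hE hF hG H,
      fun Hvi n x y lam hx hy hlam => SDP5.bwd_LLD hJ hJo hK hKo hE hF hG Hvi hx hy hlam⟩,
    ⟨fun H => SDP9.fwd_LD hJ hJo hK hKo hE hF hG H,
      fun Hvi n x y lam hx hy hlam => SDP5.bwd_LD hJ hJo hK hKo hE hF hG Hvi hx hy hlam⟩,
    ⟨fun H => SDP9.fwd_UD hJ hJo hK hKo hE hF hG H,
      fun Hvi n x y lam hx hy hlam => SDP5.bwd_UD hJ hJo hK hKo hE hF hG Hvi hx hy hlam⟩,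
    ⟨fun H => SDP9.fwd_UUD hJ hJo hK hKo hE hF hG H,
      fun Hvi n x y lam hx hy hlam => SDP5.bwd_UUD hJ hJo hK hKo hE hF hG Hvi hx hy hlam⟩,
    ⟨fun H => SDP9.fwd_v hJ hJo hK hKo hE hF hG H,
      fun Hvi n x y lam hx hy hlam => SDP5.bwd_LLD_UUD hJ hJo hK hKo hE hF hG Hvi hx hy hlam⟩⟩
end

section
/- Consider the quasiarithmetic mean 𝒜_cosh on (0,∞) generated by f = cosh. Then for all n ∈ ℕ, x ∈ (0,∞)ⁿ and weight vectors λ, lim_{t→0⁺} 𝒜_cosh(tx,λ)/t = 𝒫_2(x,λ) = √((λ₁x₁²+⋯+λₙxₙ²)/(λ₁+⋯+λₙ)); that is, the lower and upper homogenizations of 𝒜_cosh both equal the quadratic power mean 𝒫_2. -/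
open Set Filter Topology

/-- Weighted quasiarithmetic mean generated by `f`, with `g` the inverse of `f`. -/
noncomputable def QAM (f g : ℝ → ℝ) {n : ℕ} (x lam : Fin n → ℝ) : ℝ :=
  g ((∑ i, lam i * f (x i)) / ∑ i, lam i)

/-- Weighted power mean of exponent `p ∈ ℝ` (geometric mean for `p = 0`). -/
noncomputable def powerMean (p : ℝ) {n : ℕ} (x lam : Fin n → ℝ) : ℝ :=
  if p = 0 then (∏ i, x i ^ lam i) ^ (∑ i, lam i)⁻¹
  else ((∑ i, lam i * x i ^ p) / ∑ i, lam i) ^ p⁻¹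

/-- The filter `t → 0⁺` restricted to those `t` with `t • x ∈ Iⁿ`. -/
def homFilter (I : Set ℝ) {n : ℕ} (x : Fin n → ℝ) : Filter ℝ :=
  (𝓝[>] (0:ℝ)) ⊓ Filter.principal {t : ℝ | ∀ i, t * x i ∈ I}

/-- The inverse of `cosh` on `[0,∞)`: `arcosh y = log (y + √(y² - 1))`. -/
noncomputable def arcoshFn (y : ℝ) : ℝ := Real.log (y + Real.sqrt (y ^ 2 - 1))

lemma slope_tendsto {f : ℝ → ℝ} {f' : ℝ} (h : HasDerivAt f f' 0) (h0 : f 0 = 0) :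
    Tendsto (fun u => f u / u) (𝓝[≠] 0) (𝓝 f') := by
  have := hasDerivAt_iff_tendsto_slope.mp h
  refine this.congr fun u => ?_
  simp [slope_def_field, h0]

lemma sinh_div_tendsto : Tendsto (fun u : ℝ => Real.sinh u / u) (𝓝[≠] 0) (𝓝 1) := by
  simpa using slope_tendsto (Real.hasDerivAt_sinh 0) Real.sinh_zero

lemma arsinh_div_tendsto : Tendsto (fun u : ℝ => Real.arsinh u / u) (𝓝[≠] 0) (𝓝 1) := by
  simpa using slope_tendsto (Real.hasDerivAt_arsinh 0) Real.arsinh_zero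

lemma cosh_sub_one (u : ℝ) : Real.cosh u - 1 = 2 * Real.sinh (u/2) ^ 2 := by
  have h : Real.cosh u = Real.cosh (2 * (u/2)) := by ring_nf
  rw [h, Real.cosh_two_mul, Real.cosh_sq]
  ring

lemma cosh_div_sq_tendsto :
    Tendsto (fun u : ℝ => (Real.cosh u - 1) / u ^ 2) (𝓝[≠] 0) (𝓝 (1/2)) := by
  have hhalf : Tendsto (fun u : ℝ => u / 2) (𝓝[≠] (0:ℝ)) (𝓝[≠] (0:ℝ)) := by
    apply tendsto_nhdsWithin_of_tendsto_nhds_of_eventually_within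
    · simpa using (((continuous_id.div_const 2).tendsto (0:ℝ)).mono_left nhdsWithin_le_nhds)
    · filter_upwards [self_mem_nhdsWithin] with u hu
      simpa using (div_ne_zero hu two_ne_zero)
  have h1 : Tendsto (fun u : ℝ => (Real.sinh (u/2) / (u/2)) ^ 2 / 2) (𝓝[≠] 0) (𝓝 (1/2)) := by
    have := ((sinh_div_tendsto.comp hhalf).pow 2).div_const 2
    simpa using this
  refine h1.congr' ?_
  filter_upwards [self_mem_nhdsWithin] with u hu
  have hu' : u ≠ 0 := hu
  rw [cosh_sub_one]
  field_simp

lemma arcosh_cosh {a : ℝ} (ha : 0 ≤ a) : arcoshFn (Real.cosh a) = a := by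
  unfold arcoshFn
  have h : Real.cosh a ^ 2 - 1 = Real.sinh a ^ 2 := by
    have := Real.cosh_sq_sub_sinh_sq a; linarith
  rw [h, Real.sqrt_sq (Real.sinh_nonneg_iff.mpr ha), Real.cosh_add_sinh, Real.log_exp]

lemma arcosh_one_add {y : ℝ} (hy : 0 ≤ y) :
    arcoshFn (1 + 2 * y) = 2 * Real.arsinh (Real.sqrt y) := by
  have ha : 0 ≤ 2 * Real.arsinh (Real.sqrt y) := by
    have := Real.arsinh_nonneg_iff.mpr (Real.sqrt_nonneg y)
    linarith
  have hc : Real.cosh (2 * Real.arsinh (Real.sqrt y)) = 1 + 2 * y := by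
    rw [Real.cosh_two_mul, Real.cosh_sq, Real.sinh_arsinh, Real.sq_sqrt hy]
    ring
  rw [← hc, arcosh_cosh ha]

/-- Example: the homogenization of the quasiarithmetic mean generated by `cosh` on
`(0,∞)` is the quadratic power mean `𝒫₂`: `𝒜_cosh(tx,λ)/t → 𝒫₂(x,λ)` as `t → 0⁺`. -/
theorem statement17 (n : ℕ) (x lam : Fin n → ℝ) (hx : ∀ i, 0 < x i)
    (hlam : IsWeight lam) :
    Filter.Tendsto (fun t : ℝ => QAM Real.cosh arcoshFn (fun i => t * x i) lam / t)
      (𝓝[>] (0:ℝ)) (𝓝 (powerMean 2 x lam)) ∧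
    powerMean 2 x lam = Real.sqrt ((∑ i, lam i * (x i) ^ 2) / ∑ i, lam i) := by
  obtain ⟨hnn, hpos⟩ := hlam
  set Λ : ℝ := ∑ i, lam i with hΛ
  set M : ℝ := (∑ i, lam i * x i ^ 2) / Λ with hMdef
  have hex : ∃ i, 0 < lam i := by
    by_contra h
    push_neg at h
    have : Λ ≤ 0 := Finset.sum_nonpos fun i _ => h i
    linarith
  obtain ⟨i0, hi0⟩ := hex
  have hMpos : 0 < M := by
    apply div_pos _ hpos
    apply Finset.sum_pos' (fun i _ => mul_nonneg (hnn i) (sq_nonneg _))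
    exact ⟨i0, Finset.mem_univ _, mul_pos hi0 (pow_pos (hx i0) 2)⟩
  -- Part 2
  have hpart2 : powerMean 2 x lam = Real.sqrt M := by
    rw [powerMean, if_neg (two_ne_zero)]
    have h2 : ∀ i, x i ^ (2:ℝ) = x i ^ (2:ℕ) := fun i => by
      rw [← Real.rpow_natCast]; norm_num
    simp only [h2]
    rw [Real.sqrt_eq_rpow]
    norm_num
    rfl
  refine ⟨?_, by rw [hpart2]⟩
  -- Part 1
  set S : ℝ → ℝ := fun t => (∑ i, lam i * Real.cosh (t * x i)) / Λ with hSdef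
  have hS_gt : ∀ t : ℝ, 0 < t → 1 < S t := by
    intro t ht
    rw [hSdef]
    rw [lt_div_iff₀ hpos, one_mul, hΛ]
    refine Finset.sum_lt_sum (fun i _ => ?_) ⟨i0, Finset.mem_univ _, ?_⟩
    · nth_rewrite 1 [← mul_one (lam i)]
      exact mul_le_mul_of_nonneg_left (Real.one_le_cosh _) (hnn i)
    · nth_rewrite 1 [← mul_one (lam i0)]
      exact mul_lt_mul_of_pos_left
        (Real.one_lt_cosh.mpr (ne_of_gt (mul_pos ht (hx i0)))) hi0
  set w : ℝ → ℝ := fun t => Real.sqrt ((S t - 1) / 2) with hwdef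
  have hQ : ∀ t : ℝ, 0 < t →
      QAM Real.cosh arcoshFn (fun i => t * x i) lam = 2 * Real.arsinh (w t) := by
    intro t ht
    have h1 : (0:ℝ) ≤ (S t - 1) / 2 := by
      have := hS_gt t ht; linarith
    have : QAM Real.cosh arcoshFn (fun i => t * x i) lam = arcoshFn (S t) := rfl
    rw [this]
    have hS1 : S t = 1 + 2 * ((S t - 1) / 2) := by ring
    rw [hS1, arcosh_one_add h1]
  have hΛ0 : Λ ≠ 0 := ne_of_gt hpos
  -- limit of (S t - 1)/t^2
  have hterm : ∀ i : Fin n, Tendsto (fun t : ℝ => (Real.cosh (t * x i) - 1) / t ^ 2)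
      (𝓝[>] 0) (𝓝 (x i ^ 2 / 2)) := by
    intro i
    have hmap : Tendsto (fun t : ℝ => t * x i) (𝓝[>] (0:ℝ)) (𝓝[≠] (0:ℝ)) := by
      apply tendsto_nhdsWithin_of_tendsto_nhds_of_eventually_within
      · have : Tendsto (fun t : ℝ => t * x i) (𝓝 0) (𝓝 (0 * x i)) := tendsto_id.mul_const (x i)
        simpa using this.mono_left nhdsWithin_le_nhds
      · filter_upwards [self_mem_nhdsWithin] with t ht
        exact mul_ne_zero (ne_of_gt ht) (ne_of_gt (hx i))
    have h1 := (cosh_div_sq_tendsto.comp hmap).mul_const (x i ^ 2)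
    have h2 : (1/2 : ℝ) * x i ^ 2 = x i ^ 2 / 2 := by ring
    rw [h2] at h1
    refine h1.congr' ?_
    filter_upwards [self_mem_nhdsWithin] with t ht
    have ht' : t ≠ 0 := ne_of_gt ht
    have hxi : x i ≠ 0 := ne_of_gt (hx i)
    simp only [Function.comp]
    field_simp
  have hSdiv : Tendsto (fun t : ℝ => (S t - 1) / t ^ 2) (𝓝[>] 0) (𝓝 (M / 2)) := by
    have hsum : Tendsto (fun t : ℝ => ∑ i, lam i * ((Real.cosh (t * x i) - 1) / t ^ 2))
        (𝓝[>] 0) (𝓝 (∑ i, lam i * (x i ^ 2 / 2))) :=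
      tendsto_finset_sum _ fun i _ => (hterm i).const_mul (lam i)
    have h1 := hsum.div_const Λ
    have heq : (∑ i, lam i * (x i ^ 2 / 2)) / Λ = M / 2 := by
      have e : ∑ i, lam i * (x i ^ 2 / 2) = (∑ i, lam i * x i ^ 2) / 2 := by
        rw [Finset.sum_div]
        exact Finset.sum_congr rfl fun i _ => by ring
      rw [e, hMdef]
      ring
    rw [heq] at h1
    refine h1.congr' ?_
    filter_upwards [self_mem_nhdsWithin] with t ht
    have ht' : t ≠ 0 := ne_of_gt ht
    have e1 : ∑ i, lam i * ((Real.cosh (t * x i) - 1) / t ^ 2)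
        = ((∑ i, lam i * Real.cosh (t * x i)) - Λ) / t ^ 2 := by
      rw [hΛ, ← Finset.sum_sub_distrib, Finset.sum_div]
      exact Finset.sum_congr rfl fun i _ => by field_simp
    rw [e1]
    simp only [hSdef]
    field_simp
  have hwt : Tendsto (fun t : ℝ => w t / t) (𝓝[>] 0) (𝓝 (Real.sqrt M / 2)) := by
    have h1 : Tendsto (fun t : ℝ => (S t - 1) / t ^ 2 / 2) (𝓝[>] 0) (𝓝 (M / 4)) := by
      have := hSdiv.div_const 2
      rwa [show M / 2 / 2 = M / 4 by ring] at this
    have h2 := (Real.continuous_sqrt.tendsto (M/4)).comp h1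
    have h3 : Real.sqrt (M / 4) = Real.sqrt M / 2 := by
      rw [show (4:ℝ) = 2^2 by norm_num, Real.sqrt_div hMpos.le,
        Real.sqrt_sq (by norm_num : (0:ℝ) ≤ 2)]
    rw [h3] at h2
    refine h2.congr' ?_
    filter_upwards [self_mem_nhdsWithin] with t ht
    have ht' : (0:ℝ) ≤ t := le_of_lt ht
    have hnum : (0:ℝ) ≤ (S t - 1) / 2 := by have := hS_gt t ht; linarith
    simp only [Function.comp]
    rw [show (S t - 1) / t ^ 2 / 2 = (S t - 1) / 2 / t ^ 2 by ring,
      Real.sqrt_div hnum, Real.sqrt_sq ht', hwdef]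
  have hw0 : Tendsto w (𝓝[>] 0) (𝓝[≠] (0:ℝ)) := by
    apply tendsto_nhdsWithin_of_tendsto_nhds_of_eventually_within
    · have ht0 : Tendsto (fun t : ℝ => t) (𝓝[>] (0:ℝ)) (𝓝 0) :=
        tendsto_id'.mpr nhdsWithin_le_nhds
      have := hwt.mul ht0
      rw [mul_zero] at this
      refine this.congr' ?_
      filter_upwards [self_mem_nhdsWithin] with t ht
      have ht' : t ≠ 0 := ne_of_gt ht
      field_simp
    · filter_upwards [self_mem_nhdsWithin] with t ht
      have : 0 < (S t - 1) / 2 := by have := hS_gt t ht; linarith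
      exact ne_of_gt (Real.sqrt_pos.mpr this)
  have harc : Tendsto (fun t : ℝ => Real.arsinh (w t) / w t) (𝓝[>] 0) (𝓝 1) :=
    arsinh_div_tendsto.comp hw0
  have hfinal := harc.mul (hwt.const_mul 2)
  rw [show (1:ℝ) * (2 * (Real.sqrt M / 2)) = Real.sqrt M by ring] at hfinal
  rw [hpart2]
  refine hfinal.congr' ?_
  filter_upwards [self_mem_nhdsWithin] with t ht
  have ht' : t ≠ 0 := ne_of_gt ht
  have hwne : w t ≠ 0 := by
    have : 0 < (S t - 1) / 2 := by have := hS_gt t ht; linarith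
    exact ne_of_gt (Real.sqrt_pos.mpr this)
  rw [hQ t ht]
  field_simp
end
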